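/- arXiv:math/0308211 — 6 statements merged into one kernel-verified Lean document; each statement's English description precedes it below -/
import Mathlib

section
/- Let $I_0 \subset \mathbb{R}$ be a compact interval, $f$ a Lebesgue-integrable function on $I_0$, and $A$ a real number with $\frac{1}{|I_0|}\int_{I_0} f(x)\,dx \le A$. Then there exists a finite or countable collection of pairwise disjoint subintervals $I_j \subset I_0$ such that $\frac{1}{|I_j|}\int_{I_j} f(x)\,dx = A$ for each $j$, and $f(x) \le A$ for almost every $x \in I_0 \setminus \bigcup_j I_j$. -/
open MeasureTheory Set Filter Topology

namespace RisingSunAux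

/-- Right endpoint of the component of `U` containing `x`. -/
noncomputable def rsE (U : Set ℝ) (x : ℝ) : ℝ := sSup {y | Ico x y ⊆ U}

/-- Left endpoint of the component of `U` containing `x`. -/
noncomputable def rsS (U : Set ℝ) (x : ℝ) : ℝ := sInf {y | Ioc y x ⊆ U}

variable {U : Set ℝ} {a b x : ℝ}

lemma rsE_nonempty : ({y | Ico x y ⊆ U} : Set ℝ).Nonempty :=
  ⟨x, by simp⟩

lemma rsS_nonempty : ({y | Ioc y x ⊆ U} : Set ℝ).Nonempty :=
  ⟨x, by simp⟩

lemma rsE_ub (hUss : U ⊆ Ioo a b) (hx : x ∈ U) :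
    ∀ y ∈ {y | Ico x y ⊆ U}, y ≤ b := by
  intro y hy
  by_contra h
  push_neg at h
  exact absurd (hUss (hy ⟨(hUss hx).2.le, h⟩)).2 (lt_irrefl b)

lemma rsE_bddAbove (hUss : U ⊆ Ioo a b) (hx : x ∈ U) :
    BddAbove {y | Ico x y ⊆ U} := ⟨b, rsE_ub hUss hx⟩

lemma rsE_le (hUss : U ⊆ Ioo a b) (hx : x ∈ U) : rsE U x ≤ b :=
  csSup_le rsE_nonempty (rsE_ub hUss hx)

lemma rsS_lb (hUss : U ⊆ Ioo a b) (hx : x ∈ U) :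
    ∀ y ∈ {y | Ioc y x ⊆ U}, a ≤ y := by
  intro y hy
  by_contra h
  push_neg at h
  exact absurd (hUss (hy ⟨h, (hUss hx).1.le⟩)).1 (lt_irrefl a)

lemma rsS_bddBelow (hUss : U ⊆ Ioo a b) (hx : x ∈ U) :
    BddBelow {y | Ioc y x ⊆ U} := ⟨a, rsS_lb hUss hx⟩

lemma le_rsS (hUss : U ⊆ Ioo a b) (hx : x ∈ U) : a ≤ rsS U x :=
  le_csInf rsS_nonempty (rsS_lb hUss hx)

lemma lt_rsE (hU : IsOpen U) (hUss : U ⊆ Ioo a b) (hx : x ∈ U) : x < rsE U x := by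
  obtain ⟨ε, hε, hball⟩ := Metric.isOpen_iff.1 hU x hx
  have : x + ε / 2 ∈ {y | Ico x y ⊆ U} := by
    intro z hz
    apply hball
    rw [Real.ball_eq_Ioo]
    exact ⟨by linarith [hz.1, hε], by linarith [hz.2, hε]⟩
  have := le_csSup (rsE_bddAbove hUss hx) this
  rw [rsE] at *
  linarith

lemma rsS_lt (hU : IsOpen U) (hUss : U ⊆ Ioo a b) (hx : x ∈ U) : rsS U x < x := by
  obtain ⟨ε, hε, hball⟩ := Metric.isOpen_iff.1 hU x hx
  have : x - ε / 2 ∈ {y | Ioc y x ⊆ U} := by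
    intro z hz
    apply hball
    rw [Real.ball_eq_Ioo]
    exact ⟨by linarith [hz.1, hε], by linarith [hz.2, hε]⟩
  have := csInf_le (rsS_bddBelow hUss hx) this
  rw [rsS] at *
  linarith

lemma Ico_rsE_subset (hUss : U ⊆ Ioo a b) (hx : x ∈ U) : Ico x (rsE U x) ⊆ U := by
  intro z hz
  obtain ⟨y, hy, hzy⟩ := exists_lt_of_lt_csSup rsE_nonempty hz.2
  exact hy ⟨hz.1, hzy⟩

lemma Ioc_rsS_subset (hUss : U ⊆ Ioo a b) (hx : x ∈ U) : Ioc (rsS U x) x ⊆ U := by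
  intro z hz
  obtain ⟨y, hy, hzy⟩ := exists_lt_of_csInf_lt rsS_nonempty hz.1
  exact hy ⟨hzy, hz.2⟩

lemma rsE_notMem (hU : IsOpen U) (hUss : U ⊆ Ioo a b) (hx : x ∈ U) : rsE U x ∉ U := by
  intro hmem
  obtain ⟨ε, hε, hball⟩ := Metric.isOpen_iff.1 hU _ hmem
  have hxle : x ≤ rsE U x := (lt_rsE hU hUss hx).le
  have : rsE U x + ε / 2 ∈ {y | Ico x y ⊆ U} := by
    intro z hz
    rcases lt_or_ge z (rsE U x) with h | h
    · exact Ico_rsE_subset hUss hx ⟨hz.1, h⟩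
    · apply hball
      rw [Real.ball_eq_Ioo]
      exact ⟨by linarith [hz.2, hε], by linarith [hz.2, hε]⟩
  have := le_csSup (rsE_bddAbove hUss hx) this
  rw [rsE] at *
  linarith

lemma rsS_notMem (hU : IsOpen U) (hUss : U ⊆ Ioo a b) (hx : x ∈ U) : rsS U x ∉ U := by
  intro hmem
  obtain ⟨ε, hε, hball⟩ := Metric.isOpen_iff.1 hU _ hmem
  have hxle : rsS U x ≤ x := (rsS_lt hU hUss hx).le
  have : rsS U x - ε / 2 ∈ {y | Ioc y x ⊆ U} := by
    intro z hz
    rcases lt_or_ge (rsS U x) z with h | h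
    · exact Ioc_rsS_subset hUss hx ⟨h, hz.2⟩
    · apply hball
      rw [Real.ball_eq_Ioo]
      exact ⟨by linarith [hz.1, hε], by linarith [hz.1, hε]⟩
  have := csInf_le (rsS_bddBelow hUss hx) this
  rw [rsS] at *
  linarith

lemma Ioo_comp_subset (hU : IsOpen U) (hUss : U ⊆ Ioo a b) (hx : x ∈ U) :
    Ioo (rsS U x) (rsE U x) ⊆ U := by
  intro z hz
  rcases le_or_gt z x with h | h
  · exact Ioc_rsS_subset hUss hx ⟨hz.1, h⟩
  · exact Ico_rsE_subset hUss hx ⟨h.le, hz.2⟩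

lemma mem_comp (hU : IsOpen U) (hUss : U ⊆ Ioo a b) (hx : x ∈ U) :
    x ∈ Ioo (rsS U x) (rsE U x) := ⟨rsS_lt hU hUss hx, lt_rsE hU hUss hx⟩

/-- Points of the same component give the same endpoints. -/
lemma rsE_congr (hU : IsOpen U) (hUss : U ⊆ Ioo a b) (hx : x ∈ U) {y : ℝ}
    (hy : y ∈ Ioo (rsS U x) (rsE U x)) : rsE U y = rsE U x := by
  have hyU : y ∈ U := Ioo_comp_subset hU hUss hx hy
  have h1 : rsE U x ≤ rsE U y := by
    apply le_csSup (rsE_bddAbove hUss hyU)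
    intro z hz
    exact Ioo_comp_subset hU hUss hx ⟨lt_of_lt_of_le hy.1 hz.1, hz.2⟩
  rcases h1.lt_or_eq with h | h
  · exact absurd (Ico_rsE_subset hUss hyU ⟨hy.2.le, h⟩) (rsE_notMem hU hUss hx)
  · exact h.symm

lemma rsS_congr (hU : IsOpen U) (hUss : U ⊆ Ioo a b) (hx : x ∈ U) {y : ℝ}
    (hy : y ∈ Ioo (rsS U x) (rsE U x)) : rsS U y = rsS U x := by
  have hyU : y ∈ U := Ioo_comp_subset hU hUss hx hy
  have h1 : rsS U y ≤ rsS U x := by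
    apply csInf_le (rsS_bddBelow hUss hyU)
    intro z hz
    exact Ioo_comp_subset hU hUss hx ⟨hz.1, lt_of_le_of_lt hz.2 hy.2⟩
  rcases h1.lt_or_eq with h | h
  · exact absurd (Ioc_rsS_subset hUss hyU ⟨h, hy.1.le⟩) (rsS_notMem hU hUss hx)
  · exact h

/-- Components with the same left endpoint coincide. -/
lemma rsE_eq_of_rsS_eq (hU : IsOpen U) (hUss : U ⊆ Ioo a b) (hx : x ∈ U) {y : ℝ}
    (hy : y ∈ U) (h : rsS U y = rsS U x) : rsE U y = rsE U x := by
  obtain ⟨z, hz1, hz2⟩ := exists_between (lt_min (h ▸ rsS_lt hU hUss hy) (rsS_lt hU hUss hx)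
    : rsS U x < min y x)
  have hz2y : z < y := lt_of_lt_of_le hz2 (min_le_left _ _)
  have hz2x : z < x := lt_of_lt_of_le hz2 (min_le_right _ _)
  have hzx : z ∈ Ioo (rsS U x) (rsE U x) :=
    ⟨hz1, hz2x.trans (lt_rsE hU hUss hx)⟩
  have hzy : z ∈ Ioo (rsS U y) (rsE U y) :=
    ⟨h ▸ hz1, hz2y.trans (lt_rsE hU hUss hy)⟩
  rw [← rsE_congr hU hUss hy hzy, ← rsE_congr hU hUss hx hzx]

/-- Components with distinct left endpoints are disjoint (as `Ico`s). -/
lemma comp_disjoint (hU : IsOpen U) (hUss : U ⊆ Ioo a b) (hx : x ∈ U) {y : ℝ}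
    (hy : y ∈ U) (h : rsS U x ≠ rsS U y) :
    Disjoint (Ico (rsS U x) (rsE U x)) (Ico (rsS U y) (rsE U y)) := by
  rw [Set.disjoint_left]
  rintro z ⟨hz1, hz2⟩ ⟨hw1, hw2⟩
  rcases hz1.lt_or_eq with h1 | h1
  · have hzU : z ∈ U := Ioo_comp_subset hU hUss hx ⟨h1, hz2⟩
    rcases hw1.lt_or_eq with h2 | h2
    · exact h ((rsS_congr hU hUss hx ⟨h1, hz2⟩).symm.trans (rsS_congr hU hUss hy ⟨h2, hw2⟩))
    · exact rsS_notMem hU hUss hy (by rw [h2]; exact hzU)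
  · rcases hw1.lt_or_eq with h2 | h2
    · exact rsS_notMem hU hUss hx (by rw [h1]; exact Ioo_comp_subset hU hUss hy ⟨h2, hw2⟩)
    · exact h (h1.trans h2.symm)




/-- The "shadow" set for the rising sun lemma (with ground level `0`). -/
def sunU (F : ℝ → ℝ) (a b : ℝ) : Set ℝ :=
  {x | x ∈ Ioo a b ∧ ∃ y, x < y ∧ y ≤ b ∧ min (F x) 0 < F y}

variable {F : ℝ → ℝ} {a b x : ℝ}

lemma sunU_subset : sunU F a b ⊆ Ioo a b := fun _ h => h.1

lemma isOpen_sunU (hF : Continuous F) : IsOpen (sunU F a b) := by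
  rw [isOpen_iff_mem_nhds]
  rintro x ⟨hx1, y, hy1, hy2, hy3⟩
  have hW : IsOpen {z : ℝ | min (F z) 0 < F y} :=
    isOpen_lt ((hF.min continuous_const)) continuous_const
  have : Ioo a b ∩ ({z | min (F z) 0 < F y} ∩ Iio y) ∈ 𝓝 x :=
    ((isOpen_Ioo.inter (hW.inter isOpen_Iio)).mem_nhds ⟨hx1, hy3, hy1⟩)
  filter_upwards [this]
  rintro z ⟨hz1, hz2, hz3⟩
  exact ⟨hz1, y, hz3, hy2, hz2⟩

/-- Off the shadow set, `F` stays below `min (F x) 0` to the right. -/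
lemma sun_prop_of_notMem (hx : x ∈ Ioo a b) (hxU : x ∉ sunU F a b) :
    ∀ y, x < y → y ≤ b → F y ≤ min (F x) 0 := by
  intro y h1 h2
  by_contra h
  exact hxU ⟨hx, y, h1, h2, not_le.1 h⟩

/-- A point below `b` satisfying the sun property has `F x ≤ 0`. -/
lemma sun_nonpos (hF : Continuous F) (hxb : x < b)
    (hP : ∀ y, x < y → y ≤ b → F y ≤ min (F x) 0) : F x ≤ 0 := by
  have h1 : Tendsto F (𝓝[>] x) (𝓝 (F x)) :=
    (hF.tendsto x).mono_left nhdsWithin_le_nhds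
  have h2 : ∀ᶠ y in 𝓝[>] x, F y ≤ min (F x) 0 := by
    filter_upwards [Ioc_mem_nhdsGT_of_mem ⟨le_refl x, hxb⟩] with y hy
    exact hP y hy.1 hy.2
  have := le_of_tendsto h1 h2
  exact this.trans (min_le_right _ _)

/-- The right endpoint of any component satisfies the sun property, and `F` is `≤ 0` there. -/
lemma sun_rsE_prop (hF : Continuous F) (hab : a < b) (hFb : F b ≤ 0) (hx : x ∈ sunU F a b) :
    (∀ y, rsE (sunU F a b) x < y → y ≤ b → F y ≤ min (F (rsE (sunU F a b) x)) 0) ∧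
      F (rsE (sunU F a b) x) ≤ 0 := by
  set d := rsE (sunU F a b) x with hd
  have hdb : d ≤ b := rsE_le sunU_subset hx
  rcases hdb.lt_or_eq with h | h
  · have hdmem : d ∈ Ioo a b :=
      ⟨(sunU_subset hx).1.trans (lt_rsE (isOpen_sunU hF) sunU_subset hx), h⟩
    have hP := sun_prop_of_notMem hdmem (rsE_notMem (isOpen_sunU hF) sunU_subset hx)
    exact ⟨hP, sun_nonpos hF h hP⟩
  · constructor
    · intro y h1 h2
      rw [h] at h1
      exact absurd (h1.trans_le h2) (lt_irrefl b)
    · rw [h]; exact hFb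

/-- Key step: on a component, `F` at the right endpoint dominates `min (F x) 0`. -/
lemma sun_min_le (hF : Continuous F) (hab : a < b) (hFb : F b ≤ 0) (hx : x ∈ sunU F a b) :
    min (F x) 0 ≤ F (rsE (sunU F a b) x) := by
  set d := rsE (sunU F a b) x with hd
  obtain ⟨hPd, hFd⟩ := sun_rsE_prop hF hab hFb hx
  set m := min (F x) 0 with hm
  have hm0 : m ≤ 0 := min_le_right _ _
  set T := Icc x d ∩ F ⁻¹' (Ici m) with hT
  have hTne : T.Nonempty := ⟨x, ⟨le_refl x, (lt_rsE (isOpen_sunU hF) sunU_subset hx).le⟩,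
    mem_preimage.2 (mem_Ici.2 (min_le_left _ _))⟩
  have hTc : IsCompact T :=
    (isCompact_Icc.inter_right (isClosed_Ici.preimage hF))
  have hzmem := hTc.sSup_mem hTne
  set z := sSup T with hz
  obtain ⟨⟨hzx, hzd⟩, hzF⟩ := hzmem
  rcases hzd.lt_or_eq with h | h
  · -- z < d, so z is in the component, hence in sunU
    have hzU : z ∈ sunU F a b := Ico_rsE_subset sunU_subset hx ⟨hzx, h⟩
    obtain ⟨_, y, hy1, hy2, hy3⟩ := hzU
    have hmy : m < F y := lt_of_le_of_lt (le_min hzF hm0) hy3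
    rcases le_or_gt y d with hyd | hyd
    · have : y ∈ T := ⟨⟨hzx.trans hy1.le, hyd⟩, hmy.le⟩
      have := le_csSup hTc.bddAbove this
      rw [← hz] at this
      linarith
    · have := hPd y hyd hy2
      have : F y ≤ F d := this.trans (min_le_left _ _)
      linarith
  · rw [← h]; exact hzF

/-- The rising sun equality: `F` takes equal values at the endpoints of each component. -/
lemma sun_eq (hF : Continuous F) (hab : a < b) (hFa : F a = 0) (hFb : F b ≤ 0)
    (hx : x ∈ sunU F a b) :
    F (rsE (sunU F a b) x) = F (rsS (sunU F a b) x) := by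
  have hU := isOpen_sunU (F := F) (a := a) (b := b) hF
  set c := rsS (sunU F a b) x with hc
  set d := rsE (sunU F a b) x with hd
  have hcx : c < x := rsS_lt hU sunU_subset hx
  have hxd : x < d := lt_rsE hU sunU_subset hx
  have hca : a ≤ c := le_rsS sunU_subset hx
  have hdb : d ≤ b := rsE_le sunU_subset hx
  have hFd : F d ≤ 0 := (sun_rsE_prop hF hab hFb hx).2
  -- Step 1 : min (F c) 0 ≤ F d by taking limits from the right inside the component
  have step1 : min (F c) 0 ≤ F d := by
    have h1 : Tendsto (fun y => min (F y) 0) (𝓝[>] c) (𝓝 (min (F c) 0)) :=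
      (((hF.min continuous_const).tendsto c).mono_left nhdsWithin_le_nhds)
    refine le_of_tendsto h1 ?_
    filter_upwards [Ioc_mem_nhdsGT_of_mem ⟨le_refl c, hcx⟩] with y hy
    have hymem : y ∈ Ioo c d := ⟨hy.1, lt_of_le_of_lt hy.2 hxd⟩
    have hyU : y ∈ sunU F a b := Ioo_comp_subset hU sunU_subset hx hymem
    have := sun_min_le hF hab hFb hyU
    rwa [rsE_congr hU sunU_subset hx hymem] at this
  rcases hca.lt_or_eq with h | h
  · -- c > a : then c is not in sunU and we get the reverse inequality
    have hcmem : c ∈ Ioo a b := ⟨h, hcx.trans (sunU_subset hx).2⟩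
    have hPc := sun_prop_of_notMem hcmem (rsS_notMem hU sunU_subset hx)
    have hFc : F c ≤ 0 := sun_nonpos hF hcmem.2 hPc
    have h2 : F d ≤ F c := (hPc d (hcx.trans hxd) hdb).trans (min_le_left _ _)
    have h3 : F c ≤ F d := by rwa [min_eq_left hFc] at step1
    linarith
  · -- c = a : then F c = 0 and F d = 0
    rw [h] at hFa
    rw [hFa, min_self] at step1
    rw [hFa]
    linarith

end RisingSunAux

set_option maxHeartbeats 1000000 in
open RisingSunAux in
/-- F. Riesz's "rising sun" lemma on a compact interval `[a, b]` with Lebesgue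
measure: if the mean value of `f` over `[a, b]` is at most `A`, then there is a
finite or countable family of pairwise disjoint subintervals on each of which the
mean value of `f` equals `A`, and `f ≤ A` almost everywhere off their union. -/
theorem riesz_rising_sun_lemma (a b : ℝ) (hab : a < b) (f : ℝ → ℝ)
    (hf : IntegrableOn f (Icc a b)) (A : ℝ)
    (hA : ⨍ x in Icc a b, f x ≤ A) :
    ∃ (c d : ℕ → ℝ) (N : Set ℕ),
      (∀ j ∈ N, a ≤ c j ∧ c j < d j ∧ d j ≤ b) ∧
      (N.PairwiseDisjoint fun j => Ico (c j) (d j)) ∧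
      (∀ j ∈ N, ⨍ x in Ico (c j) (d j), f x = A) ∧
      (∀ᵐ x, x ∈ Icc a b \ ⋃ j ∈ N, Ico (c j) (d j) → f x ≤ A) := by
  classical
  set g : ℝ → ℝ := (Icc a b).indicator (fun t => f t - A) with hgdef
  have hg : Integrable g := by
    rw [hgdef, integrable_indicator_iff measurableSet_Icc]
    exact hf.sub (integrableOn_const measure_Icc_lt_top.ne)
  set F : ℝ → ℝ := fun x => ∫ t in a..x, g t with hFdef
  have hFc : Continuous F :=
    intervalIntegral.continuous_primitive (fun _ _ => hg.intervalIntegrable) a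
  have hFa : F a = 0 := intervalIntegral.integral_same
  -- value of integrals of `g` over subintervals
  have hIoc : ∀ c d : ℝ, a ≤ c → c ≤ d → d ≤ b →
      ∫ t in Ioc c d, g t = (∫ t in Ioc c d, f t) - (d - c) * A := by
    intro c d hac hcd hdb
    have hsub : Ioc c d ⊆ Icc a b := fun z hz => ⟨hac.trans hz.1.le, hz.2.trans hdb⟩
    rw [hgdef]
    rw [setIntegral_indicator measurableSet_Icc, inter_eq_left.2 hsub]
    rw [integral_sub (hf.mono_set hsub) (integrableOn_const measure_Ioc_lt_top.ne)]
    rw [setIntegral_const, Real.volume_real_Ioc_of_le hcd, smul_eq_mul]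
  have hFsub : ∀ c d : ℝ, c ≤ d → F d - F c = ∫ t in Ioc c d, g t := by
    intro c d hcd
    rw [hFdef]
    rw [intervalIntegral.integral_interval_sub_left hg.intervalIntegrable hg.intervalIntegrable,
      intervalIntegral.integral_of_le hcd]
  have hFb : F b ≤ 0 := by
    have h1 : F b - F a = ∫ t in Ioc a b, g t := hFsub a b hab.le
    rw [hFa, sub_zero] at h1
    rw [h1, hIoc a b le_rfl hab.le le_rfl, sub_nonpos, ← integral_Icc_eq_integral_Ioc]
    rw [setAverage_eq, Real.volume_real_Icc_of_le hab.le, smul_eq_mul] at hA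
    have hba : (0:ℝ) < b - a := by linarith
    have h2 : (b - a) * ((b - a)⁻¹ * ∫ t in Icc a b, f t) ≤ (b - a) * A :=
      mul_le_mul_of_nonneg_left hA hba.le
    rw [← mul_assoc, mul_inv_cancel₀ hba.ne', one_mul] at h2
    linarith
  set U : Set ℝ := sunU F a b with hUdef
  have hU : IsOpen U := isOpen_sunU hFc
  have hUss : U ⊆ Ioo a b := sunU_subset
  set r : ℕ → ℝ := fun n => (((Denumerable.eqv ℚ).symm n : ℚ) : ℝ) with hrdef
  set cc : ℕ → ℝ := fun n => rsS U (r n) with hccdef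
  set dd : ℕ → ℝ := fun n => rsE U (r n) with hdddef
  set N : Set ℕ :=
    {n | r n ∈ U ∧ ∀ m, m < n → r m ∈ U → rsS U (r m) ≠ rsS U (r n)} with hNdef
  -- covering of U by the chosen components
  have covering : ∀ x ∈ U, ∃ j ∈ N, x ∈ Ico (cc j) (dd j) := by
    intro x hx
    obtain ⟨q, hq1, hq2⟩ :=
      exists_rat_btwn ((rsS_lt hU hUss hx).trans (lt_rsE hU hUss hx))
    have hqmem : (q : ℝ) ∈ Ioo (rsS U x) (rsE U x) := ⟨hq1, hq2⟩
    have hex : ∃ m, r m ∈ U ∧ rsS U (r m) = rsS U x := by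
      refine ⟨Denumerable.eqv ℚ q, ?_⟩
      have : r (Denumerable.eqv ℚ q) = (q : ℝ) := by
        show (((Denumerable.eqv ℚ).symm (Denumerable.eqv ℚ q) : ℚ) : ℝ) = (q : ℝ)
        rw [Equiv.symm_apply_apply]
      rw [this]
      exact ⟨Ioo_comp_subset hU hUss hx hqmem, rsS_congr hU hUss hx hqmem⟩
    set n := Nat.find hex with hndef
    obtain ⟨hn1, hn2⟩ := Nat.find_spec hex
    refine ⟨n, ⟨hn1, fun m hm hmU he => Nat.find_min hex hm ⟨hmU, he.trans hn2⟩⟩, ?_⟩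
    have hE : dd n = rsE U x := rsE_eq_of_rsS_eq hU hUss hx hn1 hn2
    have hS : cc n = rsS U x := hn2
    rw [hE, hS]
    exact ⟨(rsS_lt hU hUss hx).le, lt_rsE hU hUss hx⟩
  refine ⟨cc, dd, N, ?_, ?_, ?_, ?_⟩
  · intro j hj
    exact ⟨le_rsS hUss hj.1, (rsS_lt hU hUss hj.1).trans (lt_rsE hU hUss hj.1),
      rsE_le hUss hj.1⟩
  · intro i hi j hj hij
    simp only [Function.onFun]
    rcases lt_or_gt_of_ne hij with h | h
    · exact comp_disjoint hU hUss hi.1 hj.1 fun he => hj.2 i h hi.1 he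
    · exact (comp_disjoint hU hUss hj.1 hi.1 fun he => hi.2 j h hj.1 he).symm
  · intro j hj
    have hjU : r j ∈ U := hj.1
    have h1 : cc j < dd j := (rsS_lt hU hUss hjU).trans (lt_rsE hU hUss hjU)
    have h2 : a ≤ cc j := le_rsS hUss hjU
    have h3 : dd j ≤ b := rsE_le hUss hjU
    have heq : F (dd j) = F (cc j) := sun_eq hFc hab hFa hFb hjU
    have h4 : ∫ t in Ioc (cc j) (dd j), g t = 0 := by
      rw [← hFsub _ _ h1.le, heq, sub_self]
    rw [hIoc _ _ h2 h1.le h3] at h4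
    have h5 : ∫ t in Ioc (cc j) (dd j), f t = (dd j - cc j) * A := by linarith
    rw [setAverage_eq, integral_Ico_eq_integral_Ioo, ← integral_Ioc_eq_integral_Ioo, h5,
      Real.volume_real_Ico_of_le h1.le, smul_eq_mul,
      ← mul_assoc, inv_mul_cancel₀ (by linarith : dd j - cc j ≠ 0), one_mul]
  · -- almost everywhere statement
    have key := (IsUnifLocDoublingMeasure.vitaliFamily (volume : Measure ℝ) 1).ae_tendsto_average
      hg.locallyIntegrable
    have h1 : ∀ᵐ x : ℝ, x ≠ a := by
      rw [ae_iff]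
      convert Real.volume_singleton (a := a) using 2
      ext x; simp
    have h2 : ∀ᵐ x : ℝ, x ≠ b := by
      rw [ae_iff]
      convert Real.volume_singleton (a := b) using 2
      ext x; simp
    filter_upwards [key, h1, h2] with x hx hxa hxb
    rintro ⟨hxIcc, hxUn⟩
    have hxIoo : x ∈ Ioo a b := ⟨lt_of_le_of_ne hxIcc.1 (Ne.symm hxa), lt_of_le_of_ne hxIcc.2 hxb⟩
    have hxU : x ∉ U := by
      intro h
      obtain ⟨j, hj, hmem⟩ := covering x h
      exact hxUn (mem_biUnion hj hmem)
    have hP := sun_prop_of_notMem hxIoo hxU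
    have ht : Tendsto (fun y => ⨍ t in Icc x y, g t) (𝓝[>] x) (𝓝 (g x)) :=
      hx.comp (Real.tendsto_Icc_vitaliFamily_right x)
    have hev : ∀ᶠ y in 𝓝[>] x, ⨍ t in Icc x y, g t ≤ 0 := by
      filter_upwards [Ioc_mem_nhdsGT hxIoo.2] with y hy
      have hFy : F y - F x ≤ 0 := by
        have h := (hP y hy.1 hy.2).trans (min_le_left _ _)
        linarith
      have hint : ∫ t in Icc x y, g t = F y - F x := by
        rw [integral_Icc_eq_integral_Ioc, ← hFsub _ _ hy.1.le]
      rw [setAverage_eq, smul_eq_mul, hint]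
      exact mul_nonpos_of_nonneg_of_nonpos (inv_nonneg.2 ENNReal.toReal_nonneg) hFy
    have hg0 : g x ≤ 0 := le_of_tendsto ht hev
    have hgx : g x = f x - A := indicator_of_mem hxIcc _
    linarith
end

section
/- Let $I_0$ be a rectangle (a product of intervals) in $\mathbb{R}^n$, let $\mu$ be a finite Borel measure on $I_0$ that is absolutely continuous with respect to Lebesgue measure, let $f \in L^1(\mu)$, and let $A$ satisfy $\frac{1}{\mu(I_0)}\int_{I_0} f\,d\mu \le A$. Then there exists a finite or countable collection of pairwise disjoint rectangles $I_j \subset I_0$ with $\frac{1}{\mu(I_j)}\int_{I_j} f\,d\mu = A$ for each $j$, and $f(x) \le A$ for $\mu$-almost every $x \in I_0 \setminus \bigcup_j I_j$. -/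
open MeasureTheory Set Function Topology
open scoped ENNReal NNReal

set_option linter.unusedSectionVars false
set_option maxHeartbeats 1000000

def rect {n : ℕ} (a b : Fin n → ℝ) : Set (Fin n → ℝ) :=
  Set.pi Set.univ fun i => Set.Ico (a i) (b i)

namespace RSun

variable {n : ℕ}

lemma measurableSet_rect (a b : Fin n → ℝ) : MeasurableSet (rect a b) :=
  MeasurableSet.univ_pi fun _ => measurableSet_Ico

lemma mem_rect {a b x : Fin n → ℝ} : x ∈ rect a b ↔ ∀ i, a i ≤ x i ∧ x i < b i := by
  simp [rect, Set.mem_pi, Set.mem_Ico]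

lemma rect_pos {μ : Measure (Fin n → ℝ)} {a b : Fin n → ℝ} (h : μ (rect a b) ≠ 0) :
    ∀ i, a i < b i := by
  intro i
  by_contra hi
  apply h
  have : rect a b = ∅ := by
    rw [eq_empty_iff_forall_notMem]
    intro x hx
    rcases mem_rect.1 hx i with ⟨h1, h2⟩
    push_neg at hi
    linarith
  rw [this, measure_empty]

lemma rect_left_eq_inter {a b : Fin n → ℝ} {i : Fin n} {p : ℝ} (hp : p ≤ b i) :
    rect a (update b i p) = rect a b ∩ {x | x i < p} := by
  ext x
  simp only [mem_rect, mem_inter_iff, mem_setOf_eq]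
  constructor
  · intro h
    refine ⟨fun j => ?_, ?_⟩
    · rcases h j with ⟨h1, h2⟩
      by_cases hj : j = i
      · subst hj; simp only [update_self] at h2; exact ⟨h1, lt_of_lt_of_le h2 hp⟩
      · rw [update_of_ne hj] at h2; exact ⟨h1, h2⟩
    · have := (h i).2; rwa [update_self] at this
  · rintro ⟨h, hlt⟩
    intro j
    by_cases hj : j = i
    · subst hj; exact ⟨(h j).1, by rwa [update_self]⟩
    · rw [update_of_ne hj]; exact h j

lemma rect_right_eq_inter {a b : Fin n → ℝ} {i : Fin n} {p : ℝ} (hp : a i ≤ p) :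
    rect (update a i p) b = rect a b ∩ {x | p ≤ x i} := by
  ext x
  simp only [mem_rect, mem_inter_iff, mem_setOf_eq]
  constructor
  · intro h
    refine ⟨fun j => ?_, ?_⟩
    · rcases h j with ⟨h1, h2⟩
      by_cases hj : j = i
      · subst hj; rw [update_self] at h1; exact ⟨le_trans hp h1, h2⟩
      · rw [update_of_ne hj] at h1; exact ⟨h1, h2⟩
    · have := (h i).1; rwa [update_self] at this
  · rintro ⟨h, hle⟩
    intro j
    by_cases hj : j = i
    · subst hj; rw [update_self]; exact ⟨hle, (h j).2⟩
    · rw [update_of_ne hj]; exact h j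

lemma rect_partition {a b : Fin n → ℝ} {i : Fin n} {p : ℝ} :
    rect a b ∩ {x | x i < p} ∪ rect a b ∩ {x | p ≤ x i} = rect a b := by
  rw [← inter_union_distrib_left]
  have : {x : Fin n → ℝ | x i < p} ∪ {x | p ≤ x i} = univ := by
    ext x; simp [lt_or_ge (x i) p]
  rw [this, inter_univ]

lemma rect_pieces_disjoint {a b : Fin n → ℝ} {i : Fin n} {p : ℝ} :
    Disjoint (rect a b ∩ {x | x i < p}) (rect a b ∩ {x | p ≤ x i}) := by
  refine Set.disjoint_left.2 ?_
  rintro x ⟨-, h1⟩ ⟨-, h2⟩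
  simp only [mem_setOf_eq] at h1 h2
  exact absurd h1 (not_lt.2 h2)

/-- hyperplanes are `μ`-null for `μ ≪ volume`. -/
lemma hyperplane_null {μ : Measure (Fin n → ℝ)} (hμ : μ ≪ volume) (i : Fin n) (c : ℝ) :
    μ {x : Fin n → ℝ | x i = c} = 0 := by
  apply hμ
  have : {x : Fin n → ℝ | x i = c} = Set.pi Set.univ (fun j => if j = i then {c} else univ) := by
    ext x
    simp only [mem_setOf_eq, Set.mem_pi, Set.mem_univ, forall_true_left]
    constructor
    · intro h j
      by_cases hj : j = i
      · subst hj; simp [h]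
      · simp [hj]
    · intro h
      have := h i
      simp only [if_pos rfl, Set.mem_singleton_iff] at this
      exact this
  rw [this, volume_pi_pi]
  apply Finset.prod_eq_zero (Finset.mem_univ i)
  simp

variable {μ : Measure (Fin n → ℝ)} [IsFiniteMeasure μ] {g : (Fin n → ℝ) → ℝ}

/-- Continuity of the integral over the left piece, in the cut position. -/
lemma continuous_leftIntegral (hμ : μ ≪ volume) (hg : Integrable g μ)
    (a b : Fin n → ℝ) (i : Fin n) :
    Continuous fun p => ∫ x in rect a b ∩ {x | x i < p}, g x ∂μ := by
  have hmeas : ∀ p : ℝ, MeasurableSet (rect a b ∩ {x : Fin n → ℝ | x i < p}) := fun p =>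
    (measurableSet_rect a b).inter (measurableSet_lt (measurable_pi_apply i) measurable_const)
  rw [continuous_iff_continuousAt]
  intro p₀
  have : (fun p => ∫ x in rect a b ∩ {x | x i < p}, g x ∂μ)
      = fun p => ∫ x, (rect a b ∩ {x | x i < p}).indicator g x ∂μ := by
    funext p; rw [integral_indicator (hmeas p)]
  rw [this]
  apply continuousAt_of_dominated (bound := fun x => ‖g x‖)
  · exact Filter.Eventually.of_forall fun p =>
      (hg.1.indicator (hmeas p))
  · exact Filter.Eventually.of_forall fun p =>
      Filter.Eventually.of_forall fun x => norm_indicator_le_norm_self g x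
  · exact hg.norm
  · have hnull : μ {x : Fin n → ℝ | x i = p₀} = 0 := hyperplane_null hμ i p₀
    filter_upwards [(measure_eq_zero_iff_ae_notMem.1 hnull)] with x hx0
    have hx : x i ≠ p₀ := hx0
    have : (fun p => (rect a b ∩ {x | x i < p}).indicator g x)
        =ᶠ[nhds p₀] (fun _ => (rect a b ∩ {x | x i < p₀}).indicator g x) := by
      rcases lt_or_gt_of_ne hx with hlt | hgt
      · filter_upwards [IsOpen.mem_nhds isOpen_Ioi hlt] with p hp
        have hiff : x ∈ rect a b ∩ {y : Fin n → ℝ | y i < p}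
            ↔ x ∈ rect a b ∩ {y : Fin n → ℝ | y i < p₀} := by
          simp only [mem_inter_iff, mem_setOf_eq]
          exact ⟨fun h => ⟨h.1, hlt⟩, fun h => ⟨h.1, hp⟩⟩
        by_cases hmem : x ∈ rect a b ∩ {y : Fin n → ℝ | y i < p₀}
        · rw [Set.indicator_of_mem (hiff.2 hmem) g, Set.indicator_of_mem hmem g]
        · rw [Set.indicator_of_notMem (fun h => hmem (hiff.1 h)) g,
            Set.indicator_of_notMem hmem g]
      · filter_upwards [IsOpen.mem_nhds isOpen_Iio hgt] with p hp
        have hiff : x ∈ rect a b ∩ {y : Fin n → ℝ | y i < p}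
            ↔ x ∈ rect a b ∩ {y : Fin n → ℝ | y i < p₀} := by
          simp only [mem_inter_iff, mem_setOf_eq]
          exact ⟨fun h => absurd hp (not_lt.2 h.2.le), fun h => absurd hgt (not_lt.2 h.2.le)⟩
        by_cases hmem : x ∈ rect a b ∩ {y : Fin n → ℝ | y i < p₀}
        · rw [Set.indicator_of_mem (hiff.2 hmem) g, Set.indicator_of_mem hmem g]
        · rw [Set.indicator_of_notMem (fun h => hmem (hiff.1 h)) g,
            Set.indicator_of_notMem hmem g]
    exact this.continuousAt


/-- The key splitting lemma: any rectangle with nonpositive integral can be cut into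
two pieces with nonpositive integral such that either both pieces are "balanced"
(cut in the middle third), or one piece has integral exactly zero and the other piece
is small (at most a third). -/
lemma split_exists (hμ : μ ≪ volume) (hg : Integrable g μ)
    (a b : Fin n → ℝ) (i : Fin n) (hab : ∀ j, a j < b j)
    (hT : ∫ x in rect a b, g x ∂μ ≤ 0) :
    ∃ p, (a i ≤ p ∧ p ≤ b i) ∧
      (∫ x in rect a (update b i p), g x ∂μ ≤ 0) ∧
      (∫ x in rect (update a i p) b, g x ∂μ ≤ 0) ∧
      ((a i + (b i - a i)/3 ≤ p ∧ p ≤ b i - (b i - a i)/3) ∨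
       ((∫ x in rect a (update b i p), g x ∂μ) = 0 ∧ b i - (b i - a i)/3 ≤ p) ∨
       ((∫ x in rect (update a i p) b, g x ∂μ) = 0 ∧ p ≤ a i + (b i - a i)/3)) := by
  classical
  set L : ℝ := b i - a i with hL
  have hL0 : 0 < L := sub_pos.2 (hab i)
  set p₁ : ℝ := a i + L/3 with hp₁
  set p₂ : ℝ := b i - L/3 with hp₂
  have hap₁ : a i ≤ p₁ := by rw [hp₁]; linarith
  have hp₁p₂ : p₁ ≤ p₂ := by rw [hp₁, hp₂]; linarith
  have hp₂b : p₂ ≤ b i := by rw [hp₂]; linarith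
  set c : ℝ → ℝ := fun p => ∫ x in rect a b ∩ {x | x i < p}, g x ∂μ with hc
  have hcont : Continuous c := continuous_leftIntegral hμ hg a b i
  set T : ℝ := ∫ x in rect a b, g x ∂μ with hTdef
  -- boundary values
  have hca : c (a i) = 0 := by
    have : rect a b ∩ {x : Fin n → ℝ | x i < a i} = ∅ := by
      rw [eq_empty_iff_forall_notMem]
      rintro x ⟨hx, hx2⟩
      simp only [mem_setOf_eq] at hx2
      exact absurd hx2 (not_lt.2 (mem_rect.1 hx i).1)
    rw [hc]; simp only [this, Measure.restrict_empty, integral_zero_measure]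
  have hcb : c (b i) = T := by
    have : rect a b ∩ {x : Fin n → ℝ | x i < b i} = rect a b := by
      apply inter_eq_self_of_subset_left
      intro x hx
      exact (mem_rect.1 hx i).2
    rw [hc]; simp only [this, hTdef]
  -- integrals over the two pieces
  have hmeasr : ∀ p : ℝ, MeasurableSet (rect a b ∩ {x : Fin n → ℝ | p ≤ x i}) := fun p =>
    (measurableSet_rect a b).inter (measurableSet_le measurable_const (measurable_pi_apply i))
  have hsum : ∀ p : ℝ, c p + ∫ x in rect a b ∩ {x | p ≤ x i}, g x ∂μ = T := by
    intro p
    rw [hc, hTdef]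
    rw [← setIntegral_union rect_pieces_disjoint (hmeasr p)
      (hg.integrableOn.mono_set inter_subset_left)
      (hg.integrableOn.mono_set inter_subset_left), rect_partition]
  have hleft : ∀ p, a i ≤ p → p ≤ b i → (∫ x in rect a (update b i p), g x ∂μ) = c p := by
    intro p _ hpb
    rw [rect_left_eq_inter hpb]
  have hright : ∀ p, a i ≤ p → p ≤ b i →
      (∫ x in rect (update a i p) b, g x ∂μ) = T - c p := by
    intro p hpa _
    rw [rect_right_eq_inter hpa, eq_sub_iff_add_eq, add_comm]
    exact hsum p
  -- case analysis
  by_cases hbal : ∃ p, p ∈ Icc p₁ p₂ ∧ T ≤ c p ∧ c p ≤ 0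
  · rcases hbal with ⟨p, ⟨hp1, hp2⟩, hTc, hc0⟩
    have hpa : a i ≤ p := le_trans hap₁ hp1
    have hpb : p ≤ b i := le_trans hp2 hp₂b
    refine ⟨p, ⟨hpa, hpb⟩, ?_, ?_, Or.inl ⟨hp1, hp2⟩⟩
    · rw [hleft p hpa hpb]; exact hc0
    · rw [hright p hpa hpb]; linarith
  · push_neg at hbal
    -- for every p in the middle third, c p > 0 or c p < T
    have hdico : ∀ p, p ∈ Icc p₁ p₂ → 0 < c p ∨ c p < T := by
      intro p hp
      by_cases h1 : 0 < c p
      · exact Or.inl h1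
      · push_neg at h1
        by_cases h2 : c p < T
        · exact Or.inr h2
        · push_neg at h2
          exact absurd h1 (not_le.2 (hbal p hp h2))
    rcases hdico p₂ ⟨hp₁p₂, le_refl _⟩ with hpos | hneg
    · -- c p₂ > 0 : IVT on [p₂, b i] produces a zero of c
      have : (0:ℝ) ∈ Icc (c (b i)) (c p₂) := ⟨by rw [hcb]; exact hT, le_of_lt hpos⟩
      rcases intermediate_value_Icc' hp₂b hcont.continuousOn this with ⟨p, hpmem, hcp⟩
      have hpa : a i ≤ p := le_trans (le_trans hap₁ hp₁p₂) hpmem.1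
      have hpb : p ≤ b i := hpmem.2
      refine ⟨p, ⟨hpa, hpb⟩, ?_, ?_, Or.inr (Or.inl ⟨?_, hpmem.1⟩)⟩
      · rw [hleft p hpa hpb, hcp]
      · rw [hright p hpa hpb, hcp]; linarith
      · rw [hleft p hpa hpb, hcp]
    · -- c p₂ < T; look at p₁
      rcases hdico p₁ ⟨le_refl _, hp₁p₂⟩ with hpos | hneg'
      · -- c p₁ > 0 and c p₂ < T ≤ 0 : IVT gives a middle-third point with c = 0, contradiction
        have : (0:ℝ) ∈ Icc (c p₂) (c p₁) := ⟨le_of_lt (lt_of_lt_of_le hneg hT), le_of_lt hpos⟩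
        rcases intermediate_value_Icc' hp₁p₂ hcont.continuousOn this with ⟨p, hpmem, hcp⟩
        rcases hdico p hpmem with h | h
        · rw [hcp] at h; exact absurd h (lt_irrefl 0)
        · rw [hcp] at h; exact absurd (lt_of_lt_of_le h hT) (lt_irrefl 0)
      · -- c p₁ < T : IVT on [a i, p₁] gives c p = T
        have : T ∈ Icc (c p₁) (c (a i)) := ⟨le_of_lt hneg', by rw [hca]; exact hT⟩
        rcases intermediate_value_Icc' hap₁ hcont.continuousOn this with ⟨p, hpmem, hcp⟩
        have hpa : a i ≤ p := hpmem.1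
        have hpb : p ≤ b i := le_trans (le_trans hpmem.2 hp₁p₂) hp₂b
        refine ⟨p, ⟨hpa, hpb⟩, ?_, ?_, Or.inr (Or.inr ⟨?_, hpmem.2⟩)⟩
        · rw [hleft p hpa hpb, hcp]; exact hT
        · rw [hright p hpa hpb, hcp]; simp
        · rw [hright p hpa hpb, hcp]; simp


/-! ### The context bundling all data of the construction -/

structure Ctx (n : ℕ) where
  μ : Measure (Fin n → ℝ)
  fin : IsFiniteMeasure μ
  g : (Fin n → ℝ) → ℝ
  hμ : μ ≪ volume
  hg : Integrable g μ
  hn : 0 < n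
  a₀ : Fin n → ℝ
  b₀ : Fin n → ℝ
  hab₀ : ∀ i, a₀ i ≤ b₀ i
  hroot : (∫ x in rect a₀ b₀, g x ∂μ) ≤ 0

namespace Ctx

variable {n : ℕ} (C : Ctx n)

/-- The integral of `g` over a rectangle. -/
noncomputable def I (R : (Fin n → ℝ) × (Fin n → ℝ)) : ℝ :=
  ∫ x in rect R.1 R.2, C.g x ∂C.μ

def Stopped (R : (Fin n → ℝ) × (Fin n → ℝ)) : Prop :=
  C.μ (rect R.1 R.2) = 0 ∨ C.I R = 0

def Act (R : (Fin n → ℝ) × (Fin n → ℝ)) : Prop :=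
  C.I R ≤ 0 ∧ ¬ C.Stopped R

lemma Act.hab {C : Ctx n} {R} (h : C.Act R) : ∀ j, R.1 j < R.2 j :=
  rect_pos (fun e => h.2 (Or.inl e))

noncomputable def splitPt (R : (Fin n → ℝ) × (Fin n → ℝ)) (i : Fin n) (h : C.Act R) : ℝ :=
  letI := C.fin
  (split_exists C.hμ C.hg R.1 R.2 i h.hab h.1).choose

lemma splitPt_spec (R : (Fin n → ℝ) × (Fin n → ℝ)) (i : Fin n) (h : C.Act R) :
    (R.1 i ≤ C.splitPt R i h ∧ C.splitPt R i h ≤ R.2 i) ∧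
      (∫ x in rect R.1 (update R.2 i (C.splitPt R i h)), C.g x ∂C.μ) ≤ 0 ∧
      (∫ x in rect (update R.1 i (C.splitPt R i h)) R.2, C.g x ∂C.μ) ≤ 0 ∧
      ((R.1 i + (R.2 i - R.1 i)/3 ≤ C.splitPt R i h ∧
          C.splitPt R i h ≤ R.2 i - (R.2 i - R.1 i)/3) ∨
       ((∫ x in rect R.1 (update R.2 i (C.splitPt R i h)), C.g x ∂C.μ) = 0 ∧
          R.2 i - (R.2 i - R.1 i)/3 ≤ C.splitPt R i h) ∨
       ((∫ x in rect (update R.1 i (C.splitPt R i h)) R.2, C.g x ∂C.μ) = 0 ∧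
          C.splitPt R i h ≤ R.1 i + (R.2 i - R.1 i)/3)) := by
  letI := C.fin
  exact (split_exists C.hμ C.hg R.1 R.2 i h.hab h.1).choose_spec

open Classical in
noncomputable def childOf (R : (Fin n → ℝ) × (Fin n → ℝ)) (i : Fin n) (t : Bool) :
    (Fin n → ℝ) × (Fin n → ℝ) :=
  if h : C.Act R then
    if t then (update R.1 i (C.splitPt R i h), R.2) else (R.1, update R.2 i (C.splitPt R i h))
  else if t then (R.2, R.2) else R

noncomputable def nodeRect : List Bool → (Fin n → ℝ) × (Fin n → ℝ)
  | [] => (C.a₀, C.b₀)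
  | t :: bs => C.childOf (nodeRect bs) ⟨bs.length % n, Nat.mod_lt _ C.hn⟩ t

lemma rect_self_empty (hn : 0 < n) (b : Fin n → ℝ) : rect b b = ∅ := by
  rw [eq_empty_iff_forall_notMem]
  intro x hx
  rcases mem_rect.1 hx ⟨0, hn⟩ with ⟨h1, h2⟩
  exact absurd (lt_of_le_of_lt h1 h2) (lt_irrefl _)

lemma childOf_cases (R : (Fin n → ℝ) × (Fin n → ℝ)) (i : Fin n) :
    (∃ h : C.Act R, ∃ p, (R.1 i ≤ p ∧ p ≤ R.2 i) ∧
      C.childOf R i false = (R.1, update R.2 i p) ∧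
      C.childOf R i true = (update R.1 i p, R.2) ∧
      C.I (R.1, update R.2 i p) ≤ 0 ∧ C.I (update R.1 i p, R.2) ≤ 0 ∧
      ((R.1 i + (R.2 i - R.1 i)/3 ≤ p ∧ p ≤ R.2 i - (R.2 i - R.1 i)/3) ∨
       (C.I (R.1, update R.2 i p) = 0 ∧ R.2 i - (R.2 i - R.1 i)/3 ≤ p) ∨
       (C.I (update R.1 i p, R.2) = 0 ∧ p ≤ R.1 i + (R.2 i - R.1 i)/3))) ∨
    (¬ C.Act R ∧ C.childOf R i false = R ∧ C.childOf R i true = (R.2, R.2)) := by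
  by_cases h : C.Act R
  · left
    refine ⟨h, C.splitPt R i h, (C.splitPt_spec R i h).1, ?_, ?_, (C.splitPt_spec R i h).2.1,
      (C.splitPt_spec R i h).2.2.1, (C.splitPt_spec R i h).2.2.2⟩
    · simp [childOf, dif_pos h]
    · simp [childOf, dif_pos h]
  · right
    exact ⟨h, by simp [childOf, dif_neg h], by simp [childOf, dif_neg h]⟩

/-- children are contained in the parent -/
lemma childOf_subset (R : (Fin n → ℝ) × (Fin n → ℝ)) (i : Fin n) (t : Bool) :
    rect (C.childOf R i t).1 (C.childOf R i t).2 ⊆ rect R.1 R.2 := by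
  rcases C.childOf_cases R i with ⟨h, p, ⟨hpa, hpb⟩, hfalse, htrue, _⟩ | ⟨h, hfalse, htrue⟩
  · cases t
    · rw [hfalse]; rw [rect_left_eq_inter hpb]; exact inter_subset_left
    · rw [htrue]; rw [rect_right_eq_inter hpa]; exact inter_subset_left
  · cases t
    · rw [hfalse]
    · rw [htrue, rect_self_empty C.hn]; exact empty_subset _

/-- the two children partition the parent -/
lemma childOf_union (R : (Fin n → ℝ) × (Fin n → ℝ)) (i : Fin n) :
    rect (C.childOf R i false).1 (C.childOf R i false).2 ∪
      rect (C.childOf R i true).1 (C.childOf R i true).2 = rect R.1 R.2 := by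
  rcases C.childOf_cases R i with ⟨h, p, ⟨hpa, hpb⟩, hfalse, htrue, _⟩ | ⟨h, hfalse, htrue⟩
  · rw [hfalse, htrue, rect_left_eq_inter hpb, rect_right_eq_inter hpa, rect_partition]
  · rw [hfalse, htrue, rect_self_empty C.hn, union_empty]

lemma childOf_disjoint (R : (Fin n → ℝ) × (Fin n → ℝ)) (i : Fin n) :
    Disjoint (rect (C.childOf R i false).1 (C.childOf R i false).2)
      (rect (C.childOf R i true).1 (C.childOf R i true).2) := by
  rcases C.childOf_cases R i with ⟨h, p, ⟨hpa, hpb⟩, hfalse, htrue, _⟩ | ⟨h, hfalse, htrue⟩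
  · rw [hfalse, htrue, rect_left_eq_inter hpb, rect_right_eq_inter hpa]
    exact rect_pieces_disjoint
  · rw [htrue, rect_self_empty C.hn]
    exact disjoint_empty _

/-- the integral stays nonpositive on children -/
lemma childOf_int (R : (Fin n → ℝ) × (Fin n → ℝ)) (i : Fin n) (t : Bool)
    (hR : C.I R ≤ 0) : C.I (C.childOf R i t) ≤ 0 := by
  rcases C.childOf_cases R i with ⟨h, p, ⟨hpa, hpb⟩, hfalse, htrue, hil, hir, _⟩ |
    ⟨h, hfalse, htrue⟩
  · cases t
    · rw [hfalse]; exact hil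
    · rw [htrue]; exact hir
  · cases t
    · rw [hfalse]; exact hR
    · rw [htrue]
      show (∫ x in rect R.2 R.2, C.g x ∂C.μ) ≤ 0
      rw [rect_self_empty C.hn]
      simp

lemma childOf_le (R : (Fin n → ℝ) × (Fin n → ℝ)) (i : Fin n) (t : Bool)
    (hR : ∀ j, R.1 j ≤ R.2 j) : ∀ j, (C.childOf R i t).1 j ≤ (C.childOf R i t).2 j := by
  rcases C.childOf_cases R i with ⟨h, p, ⟨hpa, hpb⟩, hfalse, htrue, _⟩ | ⟨h, hfalse, htrue⟩
  · intro j
    cases t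
    · rw [hfalse]
      by_cases hj : j = i
      · subst hj; simp only [update_self]; exact hpa
      · simp only [update_of_ne hj]; exact hR j
    · rw [htrue]
      by_cases hj : j = i
      · subst hj; simp only [update_self]; exact hpb
      · simp only [update_of_ne hj]; exact hR j
  · intro j
    cases t
    · rw [hfalse]; exact hR j
    · rw [htrue]

/-- sides of children are not longer than those of the parent -/
lemma childOf_sides (R : (Fin n → ℝ) × (Fin n → ℝ)) (i : Fin n) (t : Bool)
    (hR : ∀ j, R.1 j ≤ R.2 j) :
    ∀ j, (C.childOf R i t).2 j - (C.childOf R i t).1 j ≤ R.2 j - R.1 j := by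
  rcases C.childOf_cases R i with ⟨h, p, ⟨hpa, hpb⟩, hfalse, htrue, _⟩ | ⟨h, hfalse, htrue⟩
  · intro j
    cases t
    · rw [hfalse]
      by_cases hj : j = i
      · subst hj; simp only [update_self]; linarith
      · simp only [update_of_ne hj]; linarith [hR j]
    · rw [htrue]
      by_cases hj : j = i
      · subst hj; simp only [update_self]; linarith
      · simp only [update_of_ne hj]; linarith [hR j]
  · intro j
    cases t
    · rw [hfalse]
    · rw [htrue]; simp; linarith [hR j]

/-- if the parent is active and the child is not stopped, the cut side shrank by 1/3 -/
lemma childOf_cut (R : (Fin n → ℝ) × (Fin n → ℝ)) (i : Fin n) (t : Bool)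
    (hAct : C.Act R) (hns : ¬ C.Stopped (C.childOf R i t)) :
    (C.childOf R i t).2 i - (C.childOf R i t).1 i ≤ 2/3 * (R.2 i - R.1 i) := by
  rcases C.childOf_cases R i with ⟨h, p, ⟨hpa, hpb⟩, hfalse, htrue, hil, hir, htag⟩ |
    ⟨h, hfalse, htrue⟩
  · have hL : 0 ≤ R.2 i - R.1 i := by linarith
    cases t
    · rw [hfalse] at hns ⊢
      simp only [update_self]
      rcases htag with ⟨ht1, ht2⟩ | ⟨hz, _⟩ | ⟨_, hp3⟩
      · linarith
      · exact absurd (Or.inr hz) hns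
      · linarith
    · rw [htrue] at hns ⊢
      simp only [update_self]
      rcases htag with ⟨ht1, ht2⟩ | ⟨_, hp3⟩ | ⟨hz, _⟩
      · linarith
      · linarith
      · exact absurd (Or.inr hz) hns
  · exact absurd hAct h

def cutIdx (hn : 0 < n) (bs : List Bool) : Fin n := ⟨bs.length % n, Nat.mod_lt _ hn⟩

lemma nodeRect_cons (t : Bool) (bs : List Bool) :
    C.nodeRect (t :: bs) = C.childOf (C.nodeRect bs) (cutIdx C.hn bs) t := rfl

/-- basic invariants of all nodes -/
lemma node_inv : ∀ bs : List Bool,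
    C.I (C.nodeRect bs) ≤ 0 ∧ (∀ j, (C.nodeRect bs).1 j ≤ (C.nodeRect bs).2 j) ∧
      rect (C.nodeRect bs).1 (C.nodeRect bs).2 ⊆ rect C.a₀ C.b₀ := by
  intro bs
  induction bs with
  | nil => exact ⟨C.hroot, C.hab₀, subset_rfl⟩
  | cons t bs ih =>
    rw [nodeRect_cons]
    exact ⟨C.childOf_int _ _ _ ih.1, C.childOf_le _ _ _ ih.2.1,
      subset_trans (C.childOf_subset _ _ _) ih.2.2⟩

lemma node_subset_parent (t : Bool) (bs : List Bool) :
    rect (C.nodeRect (t :: bs)).1 (C.nodeRect (t :: bs)).2 ⊆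
      rect (C.nodeRect bs).1 (C.nodeRect bs).2 := by
  rw [nodeRect_cons]; exact C.childOf_subset _ _ _

lemma node_subset_drop (bs : List Bool) (m : ℕ) :
    rect (C.nodeRect bs).1 (C.nodeRect bs).2 ⊆
      rect (C.nodeRect (bs.drop m)).1 (C.nodeRect (bs.drop m)).2 := by
  induction bs generalizing m with
  | nil => simp
  | cons t bs ih =>
    cases m with
    | zero => simp
    | succ m =>
      rw [List.drop_succ_cons]
      exact subset_trans (C.node_subset_parent t bs) (ih m)

/-- nodes at the same depth are pairwise disjoint -/
lemma node_disjoint_same_depth : ∀ bs₁ bs₂ : List Bool, bs₁.length = bs₂.length →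
    bs₁ ≠ bs₂ →
    Disjoint (rect (C.nodeRect bs₁).1 (C.nodeRect bs₁).2)
      (rect (C.nodeRect bs₂).1 (C.nodeRect bs₂).2) := by
  intro bs₁
  induction bs₁ with
  | nil =>
    intro bs₂ hlen hne
    cases bs₂ with
    | nil => exact absurd rfl hne
    | cons t l => simp at hlen
  | cons t₁ l₁ ih =>
    intro bs₂ hlen hne
    cases bs₂ with
    | nil => simp at hlen
    | cons t₂ l₂ =>
      simp only [List.length_cons, Nat.succ_inj] at hlen
      by_cases hl : l₁ = l₂
      · subst hl
        have ht : t₁ ≠ t₂ := by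
          intro he; exact hne (by rw [he])
        rw [nodeRect_cons, nodeRect_cons]
        cases t₁
        · cases t₂
          · exact absurd rfl ht
          · exact C.childOf_disjoint _ _
        · cases t₂
          · exact (C.childOf_disjoint _ _).symm
          · exact absurd rfl ht
      · exact Disjoint.mono (C.node_subset_parent t₁ l₁) (C.node_subset_parent t₂ l₂)
          (ih l₂ hlen hl)

/-- nodes which are not related in the tree order have disjoint rectangles -/
lemma node_disjoint (bs₁ bs₂ : List Bool) (h₁ : ¬ bs₁ <:+ bs₂) (h₂ : ¬ bs₂ <:+ bs₁) :
    Disjoint (rect (C.nodeRect bs₁).1 (C.nodeRect bs₁).2)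
      (rect (C.nodeRect bs₂).1 (C.nodeRect bs₂).2) := by
  rcases le_total bs₁.length bs₂.length with hle | hle
  · have hlen : (bs₂.drop (bs₂.length - bs₁.length)).length = bs₁.length := by
      rw [List.length_drop]; omega
    have hne : bs₂.drop (bs₂.length - bs₁.length) ≠ bs₁ := by
      intro he
      exact h₁ (he ▸ List.drop_suffix _ _)
    exact Disjoint.mono_right (C.node_subset_drop bs₂ _)
      (C.node_disjoint_same_depth _ _ hlen.symm (fun e => hne e.symm))
  · have hlen : (bs₁.drop (bs₁.length - bs₂.length)).length = bs₂.length := by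
      rw [List.length_drop]; omega
    have hne : bs₁.drop (bs₁.length - bs₂.length) ≠ bs₂ := by
      intro he
      exact h₂ (he ▸ List.drop_suffix _ _)
    exact Disjoint.mono_left (C.node_subset_drop bs₁ _)
      (C.node_disjoint_same_depth _ _ hlen hne)

/-- stopped nodes have stopped children -/
lemma stopped_child (bs : List Bool) (t : Bool) (hs : C.Stopped (C.nodeRect bs)) :
    C.Stopped (C.nodeRect (t :: bs)) := by
  have hact : ¬ C.Act (C.nodeRect bs) := fun h => h.2 hs
  rw [nodeRect_cons]
  rcases C.childOf_cases (C.nodeRect bs) (cutIdx C.hn bs) with ⟨h, _⟩ | ⟨_, hfalse, htrue⟩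
  · exact absurd h hact
  · cases t
    · rw [hfalse]; exact hs
    · rw [htrue]
      left
      show C.μ (rect (C.nodeRect bs).2 (C.nodeRect bs).2) = 0
      rw [rect_self_empty C.hn, measure_empty]

lemma stopped_descend (l bs : List Bool) (hs : C.Stopped (C.nodeRect bs)) :
    C.Stopped (C.nodeRect (l ++ bs)) := by
  induction l with
  | nil => exact hs
  | cons t l ih => exact C.stopped_child (l ++ bs) t ih

/-! ### the chain of nodes through a point -/

open Classical in
noncomputable def chain (x : Fin n → ℝ) : ℕ → List Bool
  | 0 => []
  | k + 1 =>
    (if x ∈ rect (C.nodeRect (false :: chain x k)).1 (C.nodeRect (false :: chain x k)).2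
      then false else true) :: chain x k

lemma chain_length (x : Fin n → ℝ) (k : ℕ) : (C.chain x k).length = k := by
  induction k with
  | zero => rfl
  | succ k ih => rw [chain]; simp [ih]

lemma chain_mem (x : Fin n → ℝ) (hx : x ∈ rect C.a₀ C.b₀) (k : ℕ) :
    x ∈ rect (C.nodeRect (C.chain x k)).1 (C.nodeRect (C.chain x k)).2 := by
  induction k with
  | zero => exact hx
  | succ k ih =>
    rw [chain]
    split_ifs with hmem
    · exact hmem
    · have := C.childOf_union (C.nodeRect (C.chain x k)) (cutIdx C.hn (C.chain x k))
      rw [← nodeRect_cons, ← nodeRect_cons] at this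
      rw [← this] at ih
      rcases ih with h | h
      · exact absurd h hmem
      · exact h

/-! ### selected and null nodes -/

def SelP (bs : List Bool) : Prop :=
  C.μ (rect (C.nodeRect bs).1 (C.nodeRect bs).2) ≠ 0 ∧ C.I (C.nodeRect bs) = 0 ∧
    (bs = [] ∨ ∃ t l, bs = t :: l ∧ ¬ C.Stopped (C.nodeRect l))

def NullP (bs : List Bool) : Prop := C.μ (rect (C.nodeRect bs).1 (C.nodeRect bs).2) = 0

lemma selP_stopped {bs : List Bool} (h : C.SelP bs) : C.Stopped (C.nodeRect bs) :=
  Or.inr h.2.1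

/-- two distinct selected nodes have disjoint rectangles -/
lemma sel_disjoint (bs₁ bs₂ : List Bool) (h₁ : C.SelP bs₁) (h₂ : C.SelP bs₂)
    (hne : bs₁ ≠ bs₂) :
    Disjoint (rect (C.nodeRect bs₁).1 (C.nodeRect bs₁).2)
      (rect (C.nodeRect bs₂).1 (C.nodeRect bs₂).2) := by
  have key : ∀ b₁ b₂ : List Bool, C.SelP b₁ → C.SelP b₂ → b₁ ≠ b₂ → ¬ b₁ <:+ b₂ := by
    intro b₁ b₂ hs₁ hs₂ hne hsuf
    rcases hsuf with ⟨l, rfl⟩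
    have hl : l ≠ [] := by
      intro he; rw [he] at hne; exact hne (by simp)
    rcases hs₂.2.2 with he | ⟨t, l', hcons, hns⟩
    · exact hl (by rcases List.append_eq_nil_iff.1 he with ⟨e1, _⟩; exact e1)
    · -- parent of l ++ b₁ is a descendant of b₁, hence stopped
      cases l with
      | nil => exact hl rfl
      | cons t₀ l₀ =>
        have : l' = l₀ ++ b₁ := by
          have : t₀ :: (l₀ ++ b₁) = t :: l' := hcons
          exact (List.cons_eq_cons.1 this).2.symm
        rw [this] at hns
        exact hns (C.stopped_descend l₀ b₁ (C.selP_stopped hs₁))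
  exact C.node_disjoint bs₁ bs₂ (key bs₁ bs₂ h₁ h₂ hne) (key bs₂ bs₁ h₂ h₁ (Ne.symm hne))

/-! ### sizes -/

noncomputable def side (bs : List Bool) (j : Fin n) : ℝ :=
  (C.nodeRect bs).2 j - (C.nodeRect bs).1 j

lemma side_nonneg (bs : List Bool) (j : Fin n) : 0 ≤ C.side bs j :=
  sub_nonneg.2 ((C.node_inv bs).2.1 j)

noncomputable def esize (bs : List Bool) : ℝ := ∑ j, C.side bs j

lemma esize_nonneg (bs : List Bool) : 0 ≤ C.esize bs :=
  Finset.sum_nonneg fun j _ => C.side_nonneg bs j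

lemma side_le_esize (bs : List Bool) (j : Fin n) : C.side bs j ≤ C.esize bs :=
  Finset.single_le_sum (fun i _ => C.side_nonneg bs i) (Finset.mem_univ j)

lemma dist_le_esize {bs : List Bool} {x y : Fin n → ℝ}
    (hx : x ∈ rect (C.nodeRect bs).1 (C.nodeRect bs).2)
    (hy : y ∈ rect (C.nodeRect bs).1 (C.nodeRect bs).2) :
    dist x y ≤ C.esize bs := by
  rw [dist_pi_le_iff (C.esize_nonneg bs)]
  intro j
  rcases mem_rect.1 hx j with ⟨hx1, hx2⟩
  rcases mem_rect.1 hy j with ⟨hy1, hy2⟩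
  rw [Real.dist_eq]
  refine le_trans ?_ (C.side_le_esize bs j)
  rw [abs_sub_le_iff]
  constructor <;> (show _ ≤ C.side bs j; unfold side; linarith)

/-- the residual predicate : `x` lies in `I₀` and its chain never stops -/
def Res (x : Fin n → ℝ) : Prop :=
  x ∈ rect C.a₀ C.b₀ ∧ ∀ k, ¬ C.Stopped (C.nodeRect (C.chain x k))

lemma res_act {x : Fin n → ℝ} (hx : C.Res x) (k : ℕ) : C.Act (C.nodeRect (C.chain x k)) :=
  ⟨(C.node_inv _).1, hx.2 k⟩

lemma chain_succ_eq (x : Fin n → ℝ) (k : ℕ) :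
    ∃ t, C.chain x (k + 1) = t :: C.chain x k := ⟨_, rfl⟩

lemma side_succ_le {x : Fin n → ℝ} (k : ℕ) (j : Fin n) :
    C.side (C.chain x (k + 1)) j ≤ C.side (C.chain x k) j := by
  rcases C.chain_succ_eq x k with ⟨t, ht⟩
  unfold side
  rw [ht, nodeRect_cons]
  exact C.childOf_sides _ _ _ (C.node_inv _).2.1 j

lemma side_anti {x : Fin n → ℝ} {k k' : ℕ} (h : k ≤ k') (j : Fin n) :
    C.side (C.chain x k') j ≤ C.side (C.chain x k) j := by
  induction k' with
  | zero => simp_all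
  | succ m ih =>
    rcases Nat.lt_or_ge k (m + 1) with hlt | hge
    · exact le_trans (C.side_succ_le m j) (ih (Nat.lt_succ_iff.1 hlt))
    · have : k = m + 1 := le_antisymm h hge
      subst this; rfl

lemma side_cut {x : Fin n → ℝ} (hx : C.Res x) (k : ℕ) :
    C.side (C.chain x (k + 1)) (cutIdx C.hn (C.chain x k)) ≤
      2/3 * C.side (C.chain x k) (cutIdx C.hn (C.chain x k)) := by
  unfold side
  rw [show C.chain x (k+1) = _ :: C.chain x k from rfl, nodeRect_cons]
  apply C.childOf_cut _ _ _ (C.res_act hx k)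
  rw [← nodeRect_cons, ← show C.chain x (k+1) = _ :: C.chain x k from rfl]
  exact hx.2 (k + 1)

lemma cutIdx_chain (x : Fin n → ℝ) (k : ℕ) :
    cutIdx C.hn (C.chain x k) = ⟨k % n, Nat.mod_lt _ C.hn⟩ := by
  unfold cutIdx
  congr 1
  rw [chain_length]

/-- after `n` more steps, every side has shrunk by a factor `2/3` -/
lemma side_shrink {x : Fin n → ℝ} (hx : C.Res x) (k : ℕ) (j : Fin n) :
    C.side (C.chain x (k + n)) j ≤ 2/3 * C.side (C.chain x k) j := by
  -- find the step in [k, k+n) that cuts coordinate j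
  set r := k % n with hr
  have hrn : r < n := Nat.mod_lt _ C.hn
  set m := if r ≤ j.val then j.val - r else j.val + n - r with hm
  have hmn : m + 1 ≤ n := by
    rw [hm]
    split_ifs with hc
    · omega
    · omega
  have hmod : (k + m) % n = j.val := by
    have hq : n * (k / n) + r = k := Nat.div_add_mod k n
    have : k + m = n * (k / n) + (r + m) := by omega
    rw [this]
    rw [hm]
    split_ifs with hc
    · have : n * (k / n) + (r + (j.val - r)) = n * (k / n) + j.val := by omega
      rw [this, Nat.mul_add_mod]
      exact Nat.mod_eq_of_lt j.isLt
    · have : n * (k / n) + (r + (j.val + n - r)) = n * (k / n + 1) + j.val := by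
        push_neg at hc; ring_nf; omega
      rw [this, Nat.mul_add_mod]
      exact Nat.mod_eq_of_lt j.isLt
  have hcut : cutIdx C.hn (C.chain x (k + m)) = j := by
    rw [cutIdx_chain]
    exact Fin.ext hmod
  have h1 : C.side (C.chain x (k + m + 1)) j ≤ 2/3 * C.side (C.chain x (k + m)) j := by
    have := C.side_cut hx (k + m)
    rwa [hcut] at this
  have h2 : C.side (C.chain x (k + n)) j ≤ C.side (C.chain x (k + m + 1)) j :=
    C.side_anti (by omega) j
  have h3 : C.side (C.chain x (k + m)) j ≤ C.side (C.chain x k) j :=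
    C.side_anti (by omega) j
  calc C.side (C.chain x (k + n)) j ≤ C.side (C.chain x (k + m + 1)) j := h2
    _ ≤ 2/3 * C.side (C.chain x (k + m)) j := h1
    _ ≤ 2/3 * C.side (C.chain x k) j := by linarith

lemma esize_shrink {x : Fin n → ℝ} (hx : C.Res x) (k : ℕ) :
    C.esize (C.chain x (k + n)) ≤ 2/3 * C.esize (C.chain x k) := by
  unfold esize
  rw [Finset.mul_sum]
  exact Finset.sum_le_sum fun j _ => C.side_shrink hx k j

lemma esize_anti {x : Fin n → ℝ} {k k' : ℕ} (h : k ≤ k') :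
    C.esize (C.chain x k') ≤ C.esize (C.chain x k) :=
  Finset.sum_le_sum fun j _ => C.side_anti h j

lemma esize_pow {x : Fin n → ℝ} (hx : C.Res x) (m : ℕ) :
    C.esize (C.chain x (m * n)) ≤ (2/3)^m * C.esize (C.chain x 0) := by
  induction m with
  | zero => simp
  | succ m ih =>
    have h1 : C.esize (C.chain x (m * n + n)) ≤ 2/3 * C.esize (C.chain x (m * n)) :=
      C.esize_shrink hx (m * n)
    have h2 : (2/3 : ℝ) ^ (m + 1) = 2/3 * (2/3)^m := by ring
    calc C.esize (C.chain x ((m+1) * n)) = C.esize (C.chain x (m * n + n)) := by ring_nf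
      _ ≤ 2/3 * C.esize (C.chain x (m * n)) := h1
      _ ≤ 2/3 * ((2/3)^m * C.esize (C.chain x 0)) := by nlinarith [C.esize_nonneg (C.chain x (m*n))]
      _ = (2/3)^(m+1) * C.esize (C.chain x 0) := by ring

lemma esize_tendsto {x : Fin n → ℝ} (hx : C.Res x) {ε : ℝ} (hε : 0 < ε) :
    ∃ K, ∀ k ≥ K, C.esize (C.chain x k) < ε := by
  set E := C.esize (C.chain x 0) + 1 with hE
  have hE0 : 0 < E := by have := C.esize_nonneg (C.chain x 0); rw [hE]; linarith
  obtain ⟨m, hmlt⟩ := exists_pow_lt_of_lt_one (div_pos hε hE0) (by norm_num : (2:ℝ)/3 < 1)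
  refine ⟨m * n, fun k hk => ?_⟩
  have h1 : C.esize (C.chain x k) ≤ C.esize (C.chain x (m * n)) := C.esize_anti hk
  have h2 := C.esize_pow hx m
  have h3 : (2/3 : ℝ)^m * C.esize (C.chain x 0) ≤ (2/3)^m * E := by
    have : (0:ℝ) ≤ (2/3)^m := by positivity
    nlinarith [C.esize_nonneg (C.chain x 0)]
  have h4 : (2/3 : ℝ)^m * E < ε := by
    rw [lt_div_iff₀ hE0] at hmlt
    linarith
  linarith

/-! ### the maximal inequality over the tree -/

lemma tree_maximal (h : (Fin n → ℝ) → ℝ) (t : ℝ≥0∞) (ht : t ≠ 0) (ht' : t ≠ ⊤) :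
    C.μ {x | C.Res x ∧ ∃ k, t * C.μ (rect (C.nodeRect (C.chain x k)).1
        (C.nodeRect (C.chain x k)).2) <
      ∫⁻ y in rect (C.nodeRect (C.chain x k)).1 (C.nodeRect (C.chain x k)).2, ‖h y‖₊ ∂C.μ} ≤
    (∫⁻ y, ‖h y‖₊ ∂C.μ) / t := by
  classical
  set P : List Bool → Prop := fun bs =>
    t * C.μ (rect (C.nodeRect bs).1 (C.nodeRect bs).2) <
      ∫⁻ y in rect (C.nodeRect bs).1 (C.nodeRect bs).2, ‖h y‖₊ ∂C.μ with hP
  set Max : Set (List Bool) := {bs | P bs ∧ ∀ m, 0 < m → m ≤ bs.length → ¬ P (bs.drop m)}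
    with hMax
  set U : Set (Fin n → ℝ) := ⋃ bs ∈ Max, rect (C.nodeRect bs).1 (C.nodeRect bs).2 with hU
  -- the bad set is covered by U
  have hcover : {x | C.Res x ∧ ∃ k, t * C.μ (rect (C.nodeRect (C.chain x k)).1
        (C.nodeRect (C.chain x k)).2) <
      ∫⁻ y in rect (C.nodeRect (C.chain x k)).1 (C.nodeRect (C.chain x k)).2, ‖h y‖₊ ∂C.μ}
      ⊆ U := by
    rintro x ⟨hres, k, hk⟩
    have hPk : P (C.chain x k) := hk
    set m₀ := Nat.findGreatest (fun m => P ((C.chain x k).drop m)) k with hm₀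
    have hm₀le : m₀ ≤ k := Nat.findGreatest_le k
    have h0 : (fun m => P ((C.chain x k).drop m)) 0 := by
      simpa using hPk
    have hPm₀ : P ((C.chain x k).drop m₀) := by
      rw [hm₀]
      exact Nat.findGreatest_spec (P := fun m => P ((C.chain x k).drop m)) (Nat.zero_le k) h0
    have hmem : (C.chain x k).drop m₀ ∈ Max := by
      refine ⟨hPm₀, fun m hm hmle => ?_⟩
      rw [List.drop_drop]
      have hlen : ((C.chain x k).drop m₀).length = k - m₀ := by
        rw [List.length_drop, chain_length]
      have h1 : Nat.findGreatest (fun m => P ((C.chain x k).drop m)) k < m + m₀ := by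
        rw [← hm₀]; omega
      have h2 : m + m₀ ≤ k := by omega
      rw [Nat.add_comm m₀ m]
      exact Nat.findGreatest_is_greatest h1 h2
    exact mem_biUnion hmem (C.node_subset_drop (C.chain x k) m₀ (C.chain_mem x hres.1 k))
  -- members of Max have disjoint rectangles
  have hdisj : Max.PairwiseDisjoint
      (fun bs => rect (C.nodeRect bs).1 (C.nodeRect bs).2) := by
    intro bs₁ h₁ bs₂ h₂ hne
    have key : ∀ b₁ b₂ : List Bool, b₁ ∈ Max → b₂ ∈ Max → b₁ ≠ b₂ → ¬ b₁ <:+ b₂ := by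
      intro b₁ b₂ hb₁ hb₂ hne hsuf
      have hlen : b₁.length ≤ b₂.length := hsuf.length_le
      have heq : b₂.drop (b₂.length - b₁.length) = b₁ := by
        rcases hsuf with ⟨l, rfl⟩
        simp [List.drop_append]
      have hmpos : 0 < b₂.length - b₁.length := by
        rcases Nat.eq_zero_or_pos (b₂.length - b₁.length) with h0 | hpos
        · exfalso
          apply hne
          rw [← heq, h0, List.drop_zero]
        · exact hpos
      exact hb₂.2 (b₂.length - b₁.length) hmpos (by omega) (by rw [heq]; exact hb₁.1)
    exact C.node_disjoint bs₁ bs₂ (key bs₁ bs₂ h₁ h₂ hne) (key bs₂ bs₁ h₂ h₁ (Ne.symm hne))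
  have hcount : Max.Countable := Max.to_countable
  have hmeas : ∀ bs ∈ Max, MeasurableSet (rect (C.nodeRect bs).1 (C.nodeRect bs).2) :=
    fun bs _ => measurableSet_rect _ _
  -- measure computation
  have hμU : C.μ U = ∑' bs : Max, C.μ (rect (C.nodeRect bs).1 (C.nodeRect bs).2) :=
    measure_biUnion hcount hdisj hmeas
  haveI : Countable ↥Max := hcount.to_subtype
  have hlint : ∑' bs : Max, (∫⁻ y in rect (C.nodeRect (bs : List Bool)).1
        (C.nodeRect (bs : List Bool)).2, ‖h y‖₊ ∂C.μ)
      = ∫⁻ y in ⋃ bs : Max, rect (C.nodeRect (bs : List Bool)).1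
          (C.nodeRect (bs : List Bool)).2, ‖h y‖₊ ∂C.μ := by
    rw [lintegral_iUnion (fun bs => measurableSet_rect _ _)]
    intro b₁ b₂ hne
    exact hdisj b₁.2 b₂.2 (fun e => hne (Subtype.ext e))
  have hUeq : (⋃ bs : Max, rect (C.nodeRect (bs : List Bool)).1
      (C.nodeRect (bs : List Bool)).2) = U := by
    rw [hU, iUnion_coe_set]
  have hmain : t * C.μ U ≤ ∫⁻ y, ‖h y‖₊ ∂C.μ := by
    rw [hμU, ← ENNReal.tsum_mul_left]
    calc ∑' bs : Max, t * C.μ (rect (C.nodeRect (bs : List Bool)).1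
          (C.nodeRect (bs : List Bool)).2)
        ≤ ∑' bs : Max, ∫⁻ y in rect (C.nodeRect (bs : List Bool)).1
            (C.nodeRect (bs : List Bool)).2, ‖h y‖₊ ∂C.μ :=
          ENNReal.tsum_le_tsum fun bs => le_of_lt bs.2.1
      _ = ∫⁻ y in ⋃ bs : Max, rect (C.nodeRect (bs : List Bool)).1
            (C.nodeRect (bs : List Bool)).2, ‖h y‖₊ ∂C.μ := hlint
      _ ≤ ∫⁻ y, ‖h y‖₊ ∂C.μ := by
          rw [hUeq]
          exact setLIntegral_le_lintegral _ _
  calc C.μ _ ≤ C.μ U := measure_mono hcover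
    _ ≤ (∫⁻ y, ‖h y‖₊ ∂C.μ) / t := by
        rw [ENNReal.le_div_iff_mul_le (Or.inl ht) (Or.inl ht'), mul_comm]
        exact hmain

/-! ### convergence of averages -/

open Filter in
/-- averages of a continuous function over the chain rectangles converge -/
lemma avg_tendsto_of_continuous {x : Fin n → ℝ} (hx : C.Res x)
    {φ : (Fin n → ℝ) → ℝ} (hφc : Continuous φ) (hφi : Integrable φ C.μ) :
    Tendsto (fun k => ⨍ y in rect (C.nodeRect (C.chain x k)).1
      (C.nodeRect (C.chain x k)).2, φ y ∂C.μ) atTop (𝓝 (φ x)) := by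
  haveI := C.fin
  rw [Metric.tendsto_atTop]
  intro ε hε
  obtain ⟨δ, hδ, hcont⟩ := Metric.continuousAt_iff.1 hφc.continuousAt (ε := ε/2) (by linarith)
  obtain ⟨K, hK⟩ := C.esize_tendsto hx hδ
  refine ⟨K, fun k hk => ?_⟩
  set s := rect (C.nodeRect (C.chain x k)).1 (C.nodeRect (C.chain x k)).2 with hs
  have hμ0 : C.μ s ≠ 0 := fun e => hx.2 k (Or.inl e)
  have hμt : C.μ s ≠ ⊤ := measure_ne_top _ _
  have hxs : x ∈ s := C.chain_mem x hx.1 k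
  have htR : (0:ℝ) < (C.μ s).toReal := ENNReal.toReal_pos hμ0 hμt
  have hbound : ∀ y ∈ s, ‖φ y - φ x‖ ≤ ε/2 := by
    intro y hy
    have hdist : dist y x ≤ C.esize (C.chain x k) := C.dist_le_esize hy hxs
    have : dist y x < δ := lt_of_le_of_lt hdist (hK k hk)
    exact le_of_lt (hcont this)
  have havg : ⨍ y in s, φ y ∂C.μ - φ x
      = (C.μ s).toReal⁻¹ • (∫ y in s, (φ y - φ x) ∂C.μ) := by
    rw [integral_sub hφi.integrableOn (integrableOn_const hμt),
      setAverage_eq, setIntegral_const, measureReal_def, smul_sub, smul_smul,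
      inv_mul_cancel₀ (ne_of_gt htR), one_smul]
  have hnorm : ‖∫ y in s, (φ y - φ x) ∂C.μ‖ ≤ ε/2 * (C.μ s).toReal :=
    norm_setIntegral_le_of_norm_le_const hμt.lt_top hbound
  have : dist (⨍ y in s, φ y ∂C.μ) (φ x) ≤ ε/2 := by
    rw [Real.dist_eq, ← Real.norm_eq_abs, havg, norm_smul, norm_inv,
      Real.norm_eq_abs, abs_of_pos htR]
    calc (C.μ s).toReal⁻¹ * ‖∫ y in s, (φ y - φ x) ∂C.μ‖
        ≤ (C.μ s).toReal⁻¹ * (ε/2 * (C.μ s).toReal) :=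
          mul_le_mul_of_nonneg_left hnorm (by positivity)
      _ = ε/2 := by field_simp
  linarith [this]

/-- if the set-lintegral of `‖h‖` is small relative to the measure, the average of `|h|` is
small -/
lemma avg_abs_le {s : Set (Fin n → ℝ)} {h : (Fin n → ℝ) → ℝ} (hμ0 : C.μ s ≠ 0)
    (hsm : MeasurableSet s) (hmeas : AEStronglyMeasurable h C.μ) {t : ℝ} (ht : 0 ≤ t)
    (hlin : (∫⁻ y in s, ‖h y‖₊ ∂C.μ) ≤ ENNReal.ofReal t * C.μ s) :
    ⨍ y in s, |h y| ∂C.μ ≤ t := by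
  haveI := C.fin
  have hμt : C.μ s ≠ ⊤ := measure_ne_top _ _
  have htR : (0:ℝ) < (C.μ s).toReal := ENNReal.toReal_pos hμ0 hμt
  have hint : ∫ y in s, |h y| ∂C.μ = (∫⁻ y in s, ‖h y‖₊ ∂C.μ).toReal := by
    change ∫ y in s, |h y| ∂C.μ = (∫⁻ y in s, ‖h y‖ₑ ∂C.μ).toReal
    rw [← integral_norm_eq_lintegral_enorm hmeas.restrict]
    simp only [Real.norm_eq_abs]
  have hle : ∫ y in s, |h y| ∂C.μ ≤ t * (C.μ s).toReal := by
    rw [hint]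
    have h1 : (∫⁻ y in s, ‖h y‖₊ ∂C.μ).toReal ≤ (ENNReal.ofReal t * C.μ s).toReal := by
      apply ENNReal.toReal_mono
      · exact ENNReal.mul_ne_top ENNReal.ofReal_ne_top hμt
      · exact hlin
    rw [ENNReal.toReal_mul, ENNReal.toReal_ofReal ht] at h1
    exact h1
  rw [setAverage_eq, smul_eq_mul]
  calc (C.μ s).toReal⁻¹ * ∫ y in s, |h y| ∂C.μ
      ≤ (C.μ s).toReal⁻¹ * (t * (C.μ s).toReal) :=
        mul_le_mul_of_nonneg_left hle (by positivity)
    _ = t := by field_simp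

/-- decomposition bound for averages -/
lemma abs_avg_sub_le {s : Set (Fin n → ℝ)} (hμ0 : C.μ s ≠ 0) {φ : (Fin n → ℝ) → ℝ}
    (hφi : IntegrableOn φ s C.μ) (hgi : IntegrableOn C.g s C.μ) (x : Fin n → ℝ) :
    |(⨍ y in s, C.g y ∂C.μ) - C.g x| ≤ (⨍ y in s, |C.g y - φ y| ∂C.μ) +
      |(⨍ y in s, φ y ∂C.μ) - φ x| + |C.g x - φ x| := by
  haveI := C.fin
  have hhi : IntegrableOn (fun y => C.g y - φ y) s C.μ := hgi.sub hφi
  have h1 : ⨍ y in s, C.g y ∂C.μ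
      = (⨍ y in s, (C.g y - φ y) ∂C.μ) + ⨍ y in s, φ y ∂C.μ := by
    rw [setAverage_eq, setAverage_eq, setAverage_eq, ← smul_add, ← integral_add hhi hφi]
    congr 1
    apply integral_congr_ae
    filter_upwards with y
    ring
  have h2 : |⨍ y in s, (C.g y - φ y) ∂C.μ| ≤ ⨍ y in s, |C.g y - φ y| ∂C.μ := by
    rw [setAverage_eq, setAverage_eq, measureReal_def, smul_eq_mul, smul_eq_mul, abs_mul,
      abs_of_nonneg (by positivity : (0:ℝ) ≤ (C.μ s).toReal⁻¹)]
    apply mul_le_mul_of_nonneg_left _ (by positivity)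
    rw [← Real.norm_eq_abs]
    refine le_trans (norm_integral_le_integral_norm _) ?_
    simp only [Real.norm_eq_abs]
    exact le_refl _
  have habs : |(⨍ y in s, C.g y ∂C.μ) - C.g x|
      = |(⨍ y in s, (C.g y - φ y) ∂C.μ) + (((⨍ y in s, φ y ∂C.μ) - φ x)
          - (C.g x - φ x))| := by
    rw [h1]; congr 1; ring
  rw [habs]
  have t1 := abs_add_le (⨍ y in s, (C.g y - φ y) ∂C.μ)
    (((⨍ y in s, φ y ∂C.μ) - φ x) - (C.g x - φ x))
  have t2 := abs_sub ((⨍ y in s, φ y ∂C.μ) - φ x) (C.g x - φ x)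
  linarith

open Filter BoundedContinuousFunction in
/-- the almost-everywhere convergence of chain averages to the function -/
lemma ae_tendsto_avg :
    ∀ᵐ x ∂C.μ, C.Res x → Tendsto (fun k => ⨍ y in rect (C.nodeRect (C.chain x k)).1
      (C.nodeRect (C.chain x k)).2, C.g y ∂C.μ) atTop (𝓝 (C.g x)) := by
  haveI := C.fin
  set Bad : ℕ → Set (Fin n → ℝ) := fun m =>
    {x | C.Res x ∧ ¬ ∃ K, ∀ k ≥ K, |(⨍ y in rect (C.nodeRect (C.chain x k)).1
      (C.nodeRect (C.chain x k)).2, C.g y ∂C.μ) - C.g x| ≤ 1/((m:ℝ)+1)} with hBad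
  have hBadNull : ∀ m, C.μ (Bad m) = 0 := by
    intro m
    set t : ℝ := 1/(3*((m:ℝ)+1)) with htdef
    have ht0 : 0 < t := by positivity
    set tE : ℝ≥0∞ := ENNReal.ofReal t with htE
    have htE0 : tE ≠ 0 := by
      simp only [htE, ne_eq, ENNReal.ofReal_eq_zero, not_le]
      exact ht0
    have htEt : tE ≠ ⊤ := ENNReal.ofReal_ne_top
    have key : ∀ δ : ℝ, 0 < δ → C.μ (Bad m) ≤ 2/tE * ENNReal.ofReal δ := by
      intro δ hδ
      obtain ⟨φ, hφle, hφint⟩ := C.hg.exists_boundedContinuous_lintegral_sub_le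
        (ε := ENNReal.ofReal δ) (by simp only [ne_eq, ENNReal.ofReal_eq_zero, not_le]; exact hδ)
      set h : (Fin n → ℝ) → ℝ := fun y => C.g y - φ y with hh
      have hhmeas : AEStronglyMeasurable h C.μ :=
        C.hg.1.sub φ.continuous.aestronglyMeasurable
      set E₁ : Set (Fin n → ℝ) := {x | C.Res x ∧ ∃ k, tE * C.μ (rect
          (C.nodeRect (C.chain x k)).1 (C.nodeRect (C.chain x k)).2) <
        ∫⁻ y in rect (C.nodeRect (C.chain x k)).1 (C.nodeRect (C.chain x k)).2,
          ‖h y‖₊ ∂C.μ} with hE₁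
      set E₂ : Set (Fin n → ℝ) := {x | tE ≤ (‖h x‖₊ : ℝ≥0∞)} with hE₂
      -- inclusion
      have hsub : Bad m ⊆ E₁ ∪ E₂ := by
        rintro x ⟨hres, hnc⟩
        by_contra hxn
        rw [mem_union] at hxn
        push_neg at hxn
        obtain ⟨hx1, hx2⟩ := hxn
        have h1 : ∀ k, (∫⁻ y in rect (C.nodeRect (C.chain x k)).1
            (C.nodeRect (C.chain x k)).2, ‖h y‖₊ ∂C.μ) ≤ tE * C.μ (rect
            (C.nodeRect (C.chain x k)).1 (C.nodeRect (C.chain x k)).2) := by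
          intro k
          by_contra hlt
          push_neg at hlt
          exact hx1 ⟨hres, k, hlt⟩
        have h2 : |h x| < t := by
          have : (‖h x‖₊ : ℝ≥0∞) < tE := lt_of_not_ge hx2
          change ‖h x‖ₑ < ENNReal.ofReal t at this
          rw [← ofReal_norm] at this
          have := (ENNReal.ofReal_lt_ofReal_iff ht0).1 this
          rwa [Real.norm_eq_abs] at this
        have h3 := C.avg_tendsto_of_continuous hres φ.continuous hφint
        rw [Metric.tendsto_atTop] at h3
        obtain ⟨K, hK⟩ := h3 t ht0
        apply hnc
        refine ⟨K, fun k hk => ?_⟩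
        set s := rect (C.nodeRect (C.chain x k)).1 (C.nodeRect (C.chain x k)).2 with hs
        have hμ0 : C.μ s ≠ 0 := fun e => hres.2 k (Or.inl e)
        have havg1 : ⨍ y in s, |C.g y - φ y| ∂C.μ ≤ t :=
          C.avg_abs_le hμ0 (measurableSet_rect _ _) hhmeas ht0.le
            (le_trans (h1 k) (le_of_eq (by rw [mul_comm])))
        have havg2 : |(⨍ y in s, φ y ∂C.μ) - φ x| ≤ t := by
          have := hK k hk
          rw [Real.dist_eq] at this
          exact le_of_lt this
        have hdec := C.abs_avg_sub_le hμ0 (φ := φ) hφint.integrableOn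
          C.hg.integrableOn x
        have : |(⨍ y in s, C.g y ∂C.μ) - C.g x| ≤ t + t + t := by
          have hx3 : |C.g x - φ x| < t := h2
          linarith
        have h3t : t + t + t = 1/((m:ℝ)+1) := by
          have hm1 : ((m:ℝ)+1) ≠ 0 := by positivity
          rw [htdef]
          rw [← add_div, ← add_div, show (1:ℝ)+1+1 = 3 by norm_num]
          rw [div_eq_div_iff (by positivity) (by positivity)]
          ring
        rw [h3t] at this
        exact this
      -- measure bounds
      have hb1 : C.μ E₁ ≤ ENNReal.ofReal δ / tE := by
        refine le_trans (C.tree_maximal h tE htE0 htEt) ?_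
        exact ENNReal.div_le_div_right hφle tE
      have hb2 : C.μ E₂ ≤ ENNReal.ofReal δ / tE := by
        have hmono := mul_meas_ge_le_lintegral₀ (μ := C.μ)
          (f := fun y => (‖h y‖₊ : ℝ≥0∞)) (by exact hhmeas.enorm) tE
        rw [ENNReal.le_div_iff_mul_le (Or.inl htE0) (Or.inl htEt), mul_comm]
        exact le_trans hmono hφle
      calc C.μ (Bad m) ≤ C.μ (E₁ ∪ E₂) := measure_mono hsub
        _ ≤ C.μ E₁ + C.μ E₂ := measure_union_le _ _
        _ ≤ ENNReal.ofReal δ / tE + ENNReal.ofReal δ / tE := add_le_add hb1 hb2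
        _ = 2/tE * ENNReal.ofReal δ := by
            rw [ENNReal.div_add_div_same, ← two_mul, div_eq_mul_inv, div_eq_mul_inv,
              mul_right_comm]
    -- let δ → 0
    have htend : Tendsto (fun j : ℕ => 2/tE * ENNReal.ofReal (1/((j:ℝ)+1))) atTop (𝓝 0) := by
      have h1 : Tendsto (fun j : ℕ => ENNReal.ofReal (1/((j:ℝ)+1))) atTop (𝓝 0) := by
        have := ENNReal.tendsto_ofReal (tendsto_one_div_add_atTop_nhds_zero_nat)
        simpa using this
      have h2 : (2 : ℝ≥0∞)/tE ≠ ⊤ := by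
        exact (ENNReal.div_lt_top (by norm_num) htE0).ne
      have := ENNReal.Tendsto.const_mul h1 (Or.inr h2)
      simpa using this
    have hle : C.μ (Bad m) ≤ 0 :=
      ge_of_tendsto' htend (fun j => key (1/((j:ℝ)+1)) (by positivity))
    exact le_antisymm hle zero_le
  have hae : ∀ᵐ x ∂C.μ, ∀ m : ℕ, x ∉ Bad m := by
    rw [ae_all_iff]
    intro m
    exact (measure_eq_zero_iff_ae_notMem).1 (hBadNull m)
  filter_upwards [hae] with x hx hres
  rw [Metric.tendsto_atTop]
  intro ε hε
  obtain ⟨m, hm⟩ := exists_nat_one_div_lt hε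
  have hxm := hx m
  have hex : ∃ K, ∀ k ≥ K, |(⨍ y in rect (C.nodeRect (C.chain x k)).1
      (C.nodeRect (C.chain x k)).2, C.g y ∂C.μ) - C.g x| ≤ 1/((m:ℝ)+1) := by
    by_contra h'
    exact hxm ⟨hres, h'⟩
  obtain ⟨K, hK⟩ := hex
  refine ⟨K, fun k hk => ?_⟩
  rw [Real.dist_eq]
  exact lt_of_le_of_lt (hK k hk) hm

end Ctx

/-- from zero integral of `f - A` to average `= A` -/
lemma avg_eq_A {μ : Measure (Fin n → ℝ)} [IsFiniteMeasure μ] {f : (Fin n → ℝ) → ℝ} {A : ℝ}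
    {s : Set (Fin n → ℝ)} (hf : IntegrableOn f s μ) (hμ0 : μ s ≠ 0)
    (h : (∫ y in s, (f y - A) ∂μ) = 0) : ⨍ y in s, f y ∂μ = A := by
  have hμt : μ s ≠ ⊤ := measure_ne_top _ _
  have htR : (0:ℝ) < (μ s).toReal := ENNReal.toReal_pos hμ0 hμt
  have hint : (∫ y in s, (f y - A) ∂μ) = (∫ y in s, f y ∂μ) - (μ s).toReal * A := by
    rw [integral_sub hf (integrableOn_const hμt), setIntegral_const,
      measureReal_def, smul_eq_mul]
  rw [hint, sub_eq_zero] at h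
  rw [setAverage_eq, measureReal_def, smul_eq_mul, h]
  field_simp

lemma int_sub_nonpos {μ : Measure (Fin n → ℝ)} [IsFiniteMeasure μ] {f : (Fin n → ℝ) → ℝ}
    {A : ℝ} {s : Set (Fin n → ℝ)} (hf : IntegrableOn f s μ) (hμ0 : μ s ≠ 0)
    (h : ⨍ y in s, f y ∂μ ≤ A) : (∫ y in s, (f y - A) ∂μ) ≤ 0 := by
  have hμt : μ s ≠ ⊤ := measure_ne_top _ _
  have htR : (0:ℝ) < (μ s).toReal := ENNReal.toReal_pos hμ0 hμt
  have hint : (∫ y in s, (f y - A) ∂μ) = (∫ y in s, f y ∂μ) - (μ s).toReal * A := by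
    rw [integral_sub hf (integrableOn_const hμt), setIntegral_const,
      measureReal_def, smul_eq_mul]
  rw [setAverage_eq, measureReal_def, smul_eq_mul] at h
  rw [hint, sub_nonpos]
  calc ∫ y in s, f y ∂μ = (μ s).toReal * ((μ s).toReal⁻¹ * ∫ y in s, f y ∂μ) := by
        field_simp
    _ ≤ (μ s).toReal * A := mul_le_mul_of_nonneg_left h htR.le
    _ = (μ s).toReal * A := rfl

end RSun

open RSun Filter in
/-- The multidimensional Riesz "rising sun" lemma (Korenovskyy–Lerner–Stokolos):
for a finite Borel measure `μ ≪ volume` on a rectangle `I₀` and `f ∈ L¹(μ)` with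
`μ`-mean value over `I₀` at most `A`, there exist pairwise disjoint subrectangles
`I_j ⊆ I₀` with `μ`-mean value of `f` over each `I_j` equal to `A`, and
`f ≤ A` at `μ`-almost every point of `I₀` off their union. -/
theorem multidim_rising_sun_lemma {n : ℕ}
    (μ : Measure (Fin n → ℝ)) [IsFiniteMeasure μ] (hμ : μ ≪ volume)
    (a₀ b₀ : Fin n → ℝ) (hI₀ : ∀ i, a₀ i < b₀ i) (hμI₀ : μ (rect a₀ b₀) ≠ 0)
    (f : (Fin n → ℝ) → ℝ) (hf : Integrable f μ) (A : ℝ)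
    (hA : ⨍ x in rect a₀ b₀, f x ∂μ ≤ A) :
    ∃ (c d : ℕ → Fin n → ℝ) (N : Set ℕ),
      (∀ j ∈ N, rect (c j) (d j) ⊆ rect a₀ b₀) ∧
      (N.PairwiseDisjoint fun j => rect (c j) (d j)) ∧
      (∀ j ∈ N, ⨍ x in rect (c j) (d j), f x ∂μ = A) ∧
      (∀ᵐ x ∂μ, x ∈ rect a₀ b₀ \ ⋃ j ∈ N, rect (c j) (d j) → f x ≤ A) := by
  classical
  rcases Nat.eq_zero_or_pos n with hn0 | hn
  · -- dimension 0 : the space is a single point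
    subst hn0
    refine ⟨fun _ => a₀, fun _ => b₀, ∅, by simp, by simp, by simp, ?_⟩
    have huniv : rect a₀ b₀ = univ := by
      rw [eq_univ_iff_forall]
      intro x
      rw [mem_rect]
      exact fun i => absurd i.2 (Nat.not_lt_zero _)
    have hconst : f = fun _ => f a₀ := funext fun x => by rw [Subsingleton.elim x a₀]
    have hfa : f a₀ ≤ A := by
      have : ⨍ x in rect a₀ b₀, f x ∂μ = f a₀ := by
        rw [hconst]
        exact setAverage_const hμI₀ (measure_ne_top _ _) _
      linarith [hA, this.symm.le, this.le]
    filter_upwards with x _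
    rw [hconst]
    exact hfa
  · -- main case
    set g : (Fin n → ℝ) → ℝ := fun x => f x - A with hg
    have hgi : Integrable g μ := hf.sub (integrable_const A)
    have hroot : (∫ x in rect a₀ b₀, g x ∂μ) ≤ 0 :=
      int_sub_nonpos hf.integrableOn hμI₀ hA
    set C : Ctx n := ⟨μ, inferInstance, g, hμ, hgi, hn, a₀, b₀, fun i => (hI₀ i).le, hroot⟩
      with hC
    set Sel : Set (List Bool) := {bs | C.SelP bs} with hSel
    set c : ℕ → Fin n → ℝ :=
      fun k => (C.nodeRect ((Encodable.decode (α := List Bool) k).getD [])).1 with hc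
    set d : ℕ → Fin n → ℝ :=
      fun k => (C.nodeRect ((Encodable.decode (α := List Bool) k).getD [])).2 with hd
    set N : Set ℕ := Encodable.encode '' Sel with hN
    have hcd : ∀ bs ∈ Sel, c (Encodable.encode bs) = (C.nodeRect bs).1 ∧
        d (Encodable.encode bs) = (C.nodeRect bs).2 := by
      intro bs _
      rw [hc, hd]
      simp [Encodable.encodek]
    refine ⟨c, d, N, ?_, ?_, ?_, ?_⟩
    · rintro j ⟨bs, hbs, rfl⟩
      rw [(hcd bs hbs).1, (hcd bs hbs).2]
      exact (C.node_inv bs).2.2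
    · rintro j₁ ⟨bs₁, hbs₁, rfl⟩ j₂ ⟨bs₂, hbs₂, rfl⟩ hne
      have hbne : bs₁ ≠ bs₂ := fun e => hne (by rw [e])
      have := C.sel_disjoint bs₁ bs₂ hbs₁ hbs₂ hbne
      show Disjoint (rect (c _) (d _)) (rect (c _) (d _))
      rw [(hcd bs₁ hbs₁).1, (hcd bs₁ hbs₁).2, (hcd bs₂ hbs₂).1, (hcd bs₂ hbs₂).2]
      exact this
    · rintro j ⟨bs, hbs, rfl⟩
      rw [(hcd bs hbs).1, (hcd bs hbs).2]
      exact avg_eq_A hf.integrableOn hbs.1 hbs.2.1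
    · -- the a.e. statement
      have hnull : μ (⋃ bs ∈ {bs : List Bool | C.NullP bs},
          rect (C.nodeRect bs).1 (C.nodeRect bs).2) = 0 := by
        rw [measure_biUnion_null_iff (Set.to_countable _)]
        exact fun bs hbs => hbs
      filter_upwards [measure_eq_zero_iff_ae_notMem.1 hnull, C.ae_tendsto_avg] with x hxnull hxconv
      rintro ⟨hxI, hxU⟩
      -- x is residual
      have hres : C.Res x := by
        refine ⟨hxI, fun k => ?_⟩
        by_contra hstop
        have hex : ∃ k, C.Stopped (C.nodeRect (C.chain x k)) := ⟨k, hstop⟩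
        obtain ⟨k₀, hstop₀, hmin⟩ : ∃ k₀, C.Stopped (C.nodeRect (C.chain x k₀)) ∧
            ∀ k' < k₀, ¬ C.Stopped (C.nodeRect (C.chain x k')) :=
          ⟨Nat.find hex, Nat.find_spec hex, fun k' hk' => Nat.find_min hex hk'⟩
        have hxmem : x ∈ rect (C.nodeRect (C.chain x k₀)).1 (C.nodeRect (C.chain x k₀)).2 :=
          C.chain_mem x hxI k₀
        rcases hstop₀ with hμ0 | hI0
        · exact hxnull (mem_biUnion (show C.NullP (C.chain x k₀) from hμ0) hxmem)
        · -- the node is selected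
          by_cases hμz : μ (rect (C.nodeRect (C.chain x k₀)).1 (C.nodeRect (C.chain x k₀)).2) = 0
          · exact hxnull (mem_biUnion (show C.NullP (C.chain x k₀) from hμz) hxmem)
          · have hselp : C.SelP (C.chain x k₀) := by
              refine ⟨hμz, hI0, ?_⟩
              cases k₀ with
              | zero => exact Or.inl rfl
              | succ k' =>
                right
                exact ⟨_, C.chain x k', rfl, hmin k' (Nat.lt_succ_self k')⟩
            apply hxU
            rw [mem_iUnion]
            refine ⟨Encodable.encode (C.chain x k₀), ?_⟩
            rw [mem_iUnion]
            refine ⟨⟨C.chain x k₀, hselp, rfl⟩, ?_⟩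
            rw [(hcd _ hselp).1, (hcd _ hselp).2]
            exact hxmem
      -- use convergence of averages
      have hconv := hxconv hres
      have havg_le : ∀ k, (⨍ y in rect (C.nodeRect (C.chain x k)).1
          (C.nodeRect (C.chain x k)).2, C.g y ∂C.μ) ≤ 0 := by
        intro k
        rw [setAverage_eq, smul_eq_mul]
        have h1 := (C.node_inv (C.chain x k)).1
        have h2 : (0:ℝ) ≤ (C.μ (rect (C.nodeRect (C.chain x k)).1
            (C.nodeRect (C.chain x k)).2)).toReal⁻¹ := by positivity
        exact mul_nonpos_of_nonneg_of_nonpos h2 h1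
      have hlim : C.g x ≤ 0 :=
        le_of_tendsto hconv (Filter.Eventually.of_forall havg_le)
      have : f x - A ≤ 0 := hlim
      linarith
end

section
/- There exists a function $f$ on the unit square $Q_0 = [0,1]^2$ and a constant $A$ with $\frac{1}{|Q_0|}\int_{Q_0} f \le A$ such that no finite or countable collection of pairwise disjoint subcubes (squares) $Q_j \subset Q_0$ satisfies both: $\frac{1}{|Q_j|}\int_{Q_j} f = A$ for all $j$, and $f(x) \le A$ for almost every $x \in Q_0 \setminus \bigcup_j Q_j$. Concretely, $f = 1 - \chi_{[1/2,1]^2}$ and $A = 7/8$ provide such an example. -/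
open MeasureTheory Set

/-- An axis-parallel square in `ℝ²` with lower-left corner `p` and side `h`. -/
def square (p : ℝ × ℝ) (h : ℝ) : Set (ℝ × ℝ) :=
  Set.Ico p.1 (p.1 + h) ×ˢ Set.Ico p.2 (p.2 + h)

private lemma ico_inter_icc {a h : ℝ} (ha1 : a + h ≤ 1) :
    Ico a (a+h) ∩ Icc (1/2 : ℝ) 1 = Ico (max a (1/2)) (a+h) := by
  ext x
  simp only [mem_inter_iff, mem_Ico, mem_Icc, max_le_iff]
  constructor
  · rintro ⟨⟨h1,h2⟩,h3,_⟩; exact ⟨⟨h1,h3⟩,h2⟩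
  · rintro ⟨⟨h1,h3⟩,h2⟩; exact ⟨⟨h1,h2⟩,h3, le_trans h2.le ha1⟩

private lemma vol_prod (s t : Set ℝ) : volume (s ×ˢ t) = volume s * volume t := by
  rw [Measure.volume_eq_prod, Measure.prod_prod]

private lemma integral_f {R : Set (ℝ×ℝ)} (hfin : volume R ≠ ⊤) :
    ∫ x in R, (1 - (Icc ((1:ℝ)/2) 1 ×ˢ Icc ((1:ℝ)/2) 1).indicator 1 x) =
      (volume R).toReal - (volume ((Icc ((1:ℝ)/2) 1 ×ˢ Icc ((1:ℝ)/2) 1) ∩ R)).toReal := by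
  have hS : MeasurableSet (Icc ((1:ℝ)/2) 1 ×ˢ Icc ((1:ℝ)/2) 1) :=
    measurableSet_Icc.prod measurableSet_Icc
  have h1 : IntegrableOn (fun _ : ℝ×ℝ => (1:ℝ)) R := integrableOn_const hfin
  have h2 : IntegrableOn ((Icc ((1:ℝ)/2) 1 ×ˢ Icc ((1:ℝ)/2) 1).indicator (1 : ℝ×ℝ → ℝ)) R := by
    rw [IntegrableOn, integrable_indicator_iff hS]
    refine integrableOn_const (lt_of_le_of_lt ?_ hfin.lt_top).ne
    exact le_trans (measure_mono (subset_univ _)) (Measure.restrict_apply_univ _).le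
  rw [integral_sub h1 h2, setIntegral_indicator hS]
  simp only [setIntegral_const, Pi.one_apply, smul_eq_mul, mul_one]
  rw [inter_comm]
  rfl

private lemma square_mean {P : ℝ × ℝ} {h : ℝ} (h0 : 0 < h) (ha1 : P.1 + h ≤ 1)
    (hb1 : P.2 + h ≤ 1)
    (hmean : ⨍ x in square P h,
        ((1:ℝ) - (Icc ((1:ℝ)/2) 1 ×ˢ Icc ((1:ℝ)/2) 1).indicator (1 : ℝ×ℝ→ℝ) x) = 7/8) :
    (P.1 + h - max P.1 (1/2)) * (P.2 + h - max P.2 (1/2)) = h*h/8 ∧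
      1/2 < P.1 + h ∧ 1/2 < P.2 + h := by
  set a := P.1
  set b := P.2
  have hh : (0:ℝ) < h*h := by positivity
  have hvol : volume (square P h) = ENNReal.ofReal (h*h) := by
    rw [square, vol_prod, Real.volume_Ico, Real.volume_Ico]
    simp only [add_sub_cancel_left]
    rw [← ENNReal.ofReal_mul h0.le]
  have hinter : (Icc ((1:ℝ)/2) 1 ×ˢ Icc ((1:ℝ)/2) 1) ∩ square P h
      = Ico (max a (1/2)) (a+h) ×ˢ Ico (max b (1/2)) (b+h) := by
    rw [square, inter_comm, Set.prod_inter_prod, ico_inter_icc ha1, ico_inter_icc hb1]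
  have hfin : volume (square P h) ≠ ⊤ := by rw [hvol]; exact ENNReal.ofReal_ne_top
  rw [setAverage_eq, measureReal_def, integral_f hfin, hvol, hinter, vol_prod, Real.volume_Ico, Real.volume_Ico,
    ENNReal.toReal_ofReal hh.le, ENNReal.toReal_mul, ENNReal.toReal_ofReal',
    ENNReal.toReal_ofReal', smul_eq_mul] at hmean
  have hne : (h*h) ≠ 0 := hh.ne'
  field_simp at hmean
  have hm0 : max (a + h - max a (1/2)) 0 * max (b + h - max b (1/2)) 0 = h*h/8 := by
    linarith
  have hup : 0 < a + h - max a (1/2) := by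
    by_contra h'
    push_neg at h'
    rw [max_eq_right h', zero_mul] at hm0
    nlinarith
  have hvp : 0 < b + h - max b (1/2) := by
    by_contra h'
    push_neg at h'
    rw [max_eq_right h', mul_zero] at hm0
    nlinarith
  rw [max_eq_left hup.le, max_eq_left hvp.le] at hm0
  refine ⟨hm0, ?_, ?_⟩
  · have := le_max_right a (1/2:ℝ); linarith
  · have := le_max_right b (1/2:ℝ); linarith

private lemma corner_aux {a b h : ℝ} (h0 : 0 < h) (hb1 : b + h ≤ 1)
    (hm : (a + h - max a (1/2)) * (b + h - max b (1/2)) = h*h/8)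
    (hnc : ¬(a ≤ 1/2 ∧ b ≤ 1/2)) (hx : a < 1/16) : False := by
  have hb : 1/2 < b := by
    by_contra h'
    push_neg at h'
    exact hnc ⟨by linarith, h'⟩
  rw [max_eq_right (by linarith : a ≤ (1/2:ℝ)), max_eq_left (by linarith : (1/2:ℝ) ≤ b)] at hm
  have hm' : (a + h - 1/2) * h = h*h/8 := by linear_combination hm
  nlinarith [hm', mul_pos (show (0:ℝ) < 1/16 - a by linarith) h0,
    mul_pos (show (0:ℝ) < 1/2 - h by linarith) h0]

private lemma ico_bounds {a h : ℝ} (h0 : 0 < h) (hs : Ico a (a+h) ⊆ Icc (0:ℝ) 1) :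
    0 ≤ a ∧ a + h ≤ 1 := by
  have ha := hs (left_mem_Ico.2 (by linarith))
  rw [mem_Icc] at ha
  refine ⟨ha.1, ?_⟩
  by_contra h1
  push_neg at h1
  have ht := hs (show (1 + a + h)/2 ∈ Ico a (a+h) by
    rw [mem_Ico]; constructor <;> [linarith [ha.2]; linarith])
  rw [mem_Icc] at ht
  linarith [ht.2]

/-- The rising sun lemma with squares in place of intervals fails in dimension 2:
for `f = 1 - χ_{[1/2,1]²}` on `Q₀ = [0,1]²` and `A = 7/8` one has
`⨍_{Q₀} f ≤ A`, yet no finite or countable family of pairwise disjoint subsquares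
of `Q₀` has mean value of `f` exactly `A` on each square and `f ≤ A` almost
everywhere off the union. -/
theorem rising_sun_fails_for_squares :
    ∃ (f : ℝ × ℝ → ℝ) (A : ℝ),
      f = (fun x => 1 - (Icc ((1:ℝ)/2) 1 ×ˢ Icc ((1:ℝ)/2) 1).indicator 1 x) ∧
      A = 7 / 8 ∧
      (⨍ x in Icc (0:ℝ) 1 ×ˢ Icc (0:ℝ) 1, f x) ≤ A ∧
      ¬ ∃ (p : ℕ → ℝ × ℝ) (h : ℕ → ℝ) (N : Set ℕ),
          (∀ j ∈ N, 0 < h j ∧ square (p j) (h j) ⊆ Icc (0:ℝ) 1 ×ˢ Icc (0:ℝ) 1) ∧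
          (N.PairwiseDisjoint fun j => square (p j) (h j)) ∧
          (∀ j ∈ N, ⨍ x in square (p j) (h j), f x = A) ∧
          (∀ᵐ x, x ∈ (Icc (0:ℝ) 1 ×ˢ Icc (0:ℝ) 1) \ ⋃ j ∈ N, square (p j) (h j) →
            f x ≤ A) := by
  refine ⟨_, 7/8, rfl, rfl, ?_, ?_⟩
  · -- the average over Q₀ is 3/4 ≤ 7/8
    have hfin : volume (Icc (0:ℝ) 1 ×ˢ Icc (0:ℝ) 1) ≠ ⊤ := by
      rw [vol_prod]
      exact ENNReal.mul_ne_top (by simp [Real.volume_Icc]) (by simp [Real.volume_Icc])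
    rw [setAverage_eq, measureReal_def, integral_f hfin]
    have h2 : (Icc ((1:ℝ)/2) 1 ×ˢ Icc ((1:ℝ)/2) 1) ∩ (Icc (0:ℝ) 1 ×ˢ Icc (0:ℝ) 1)
        = Icc ((1:ℝ)/2) 1 ×ˢ Icc ((1:ℝ)/2) 1 := by
      refine inter_eq_left.2 (Set.prod_mono ?_ ?_) <;>
        exact Icc_subset_Icc (by norm_num) le_rfl
    rw [h2, vol_prod, vol_prod, Real.volume_Icc, Real.volume_Icc]
    rw [← ENNReal.ofReal_mul (by norm_num), ← ENNReal.ofReal_mul (by norm_num)]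
    rw [ENNReal.toReal_ofReal (by norm_num), ENNReal.toReal_ofReal (by norm_num)]
    norm_num
  · rintro ⟨p, hs, N, hsub, hdisj, hmean, hae⟩
    -- basic bounds for each square
    have hfacts : ∀ j ∈ N, 0 ≤ (p j).1 ∧ (p j).1 + hs j ≤ 1 ∧ 0 ≤ (p j).2 ∧
        (p j).2 + hs j ≤ 1 := by
      intro j hj
      obtain ⟨h0, hsb⟩ := hsub j hj
      rw [square] at hsb
      have h1 : Ico (p j).1 ((p j).1 + hs j) ⊆ Icc (0:ℝ) 1 ∧
          Ico (p j).2 ((p j).2 + hs j) ⊆ Icc (0:ℝ) 1 := by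
        rcases Set.prod_subset_prod_iff.1 hsb with h' | h' | h'
        · exact h'
        · exact absurd h' (Set.nonempty_Ico.2 (by linarith)).ne_empty
        · exact absurd h' (Set.nonempty_Ico.2 (by linarith)).ne_empty
      obtain ⟨hA, hB⟩ := h1
      obtain ⟨hA1, hA2⟩ := ico_bounds h0 hA
      obtain ⟨hB1, hB2⟩ := ico_bounds h0 hB
      exact ⟨hA1, hA2, hB1, hB2⟩
    have hkey : ∀ j ∈ N,
        ((p j).1 + hs j - max (p j).1 (1/2)) * ((p j).2 + hs j - max (p j).2 (1/2))
          = hs j * hs j / 8 ∧ 1/2 < (p j).1 + hs j ∧ 1/2 < (p j).2 + hs j := by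
      intro j hj
      obtain ⟨_, hA2, _, hB2⟩ := hfacts j hj
      exact square_mean (hsub j hj).1 hA2 hB2 (hmean j hj)
    -- a.e. off the union, points lie in S
    have hnull : volume (((Icc (0:ℝ) 1 ×ˢ Icc (0:ℝ) 1) \ ⋃ j ∈ N, square (p j) (hs j))
        \ (Icc ((1:ℝ)/2) 1 ×ˢ Icc ((1:ℝ)/2) 1)) = 0 := by
      rw [ae_iff] at hae
      refine measure_mono_null ?_ hae
      rintro x ⟨hx1, hx2⟩
      simp only [mem_setOf_eq, Classical.not_imp]
      refine ⟨hx1, ?_⟩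
      rw [indicator_of_notMem hx2]
      norm_num
    -- any square not containing the center corner avoids the two corner boxes
    have havoid : ∀ j ∈ N, ((1/2 : ℝ), (1/2 : ℝ)) ∉ square (p j) (hs j) →
        ∀ x : ℝ × ℝ, x ∈ square (p j) (hs j) → x.1 < 1/16 ∨ x.2 < 1/16 → False := by
      intro j hj hc x hx hlt
      obtain ⟨hm, hah, hbh⟩ := hkey j hj
      obtain ⟨_, hA2, _, hB2⟩ := hfacts j hj
      have h0 := (hsub j hj).1
      simp only [square, Set.mem_prod, mem_Ico] at hc hx
      push_neg at hc
      rcases hlt with hlt | hlt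
      · refine corner_aux h0 hB2 hm ?_ (lt_of_le_of_lt hx.1.1 hlt)
        rintro ⟨hc1, hc2⟩
        linarith [hc ⟨hc1, hah⟩ hc2]
      · refine corner_aux h0 hA2 (by linarith [hm] : ((p j).2 + hs j - max (p j).2 (1/2)) *
          ((p j).1 + hs j - max (p j).1 (1/2)) = hs j * hs j / 8) ?_
          (lt_of_le_of_lt hx.2.1 hlt)
        rintro ⟨hc2, hc1⟩
        linarith [hc ⟨hc1, hah⟩ hc2]
    -- shorthand notation
    set NS := ((Icc (0:ℝ) 1 ×ˢ Icc (0:ℝ) 1) \ ⋃ j ∈ N, square (p j) (hs j))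
        \ (Icc ((1:ℝ)/2) 1 ×ˢ Icc ((1:ℝ)/2) 1) with hNS
    by_cases hex : ∃ j ∈ N, ((1/2:ℝ), (1/2:ℝ)) ∈ square (p j) (hs j)
    · -- there is a (unique) square containing the center corner
      obtain ⟨j₀, hj₀, hc₀⟩ := hex
      have hnotc : ∀ j ∈ N, j ≠ j₀ → ((1/2:ℝ), (1/2:ℝ)) ∉ square (p j) (hs j) := by
        intro j hj hne hc
        exact Set.disjoint_left.1 (hdisj hj hj₀ hne) hc hc₀
      have hsub1 : (Ioo (0:ℝ) (1/16) ×ˢ Ioo (15/16:ℝ) 1) \ square (p j₀) (hs j₀) ⊆ NS := by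
        rintro x ⟨hxV, hxn⟩
        rw [Set.mem_prod, mem_Ioo, mem_Ioo] at hxV
        refine ⟨⟨⟨mem_Icc.2 ⟨by linarith [hxV.1.1], by linarith [hxV.1.2]⟩,
          mem_Icc.2 ⟨by linarith [hxV.2.1], by linarith [hxV.2.2]⟩⟩, ?_⟩, ?_⟩
        · intro hU
          rw [mem_iUnion₂] at hU
          obtain ⟨j, hj, hxj⟩ := hU
          by_cases hje : j = j₀
          · exact hxn (hje ▸ hxj)
          · exact havoid j hj (hnotc j hj hje) x hxj (Or.inl (by linarith [hxV.1.2]))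
        · intro hS
          rw [Set.mem_prod, mem_Icc] at hS
          linarith [hS.1.1, hxV.1.2]
      have hsub2 : (Ioo (15/16:ℝ) 1 ×ˢ Ioo (0:ℝ) (1/16)) \ square (p j₀) (hs j₀) ⊆ NS := by
        rintro x ⟨hxV, hxn⟩
        rw [Set.mem_prod, mem_Ioo, mem_Ioo] at hxV
        refine ⟨⟨⟨mem_Icc.2 ⟨by linarith [hxV.1.1], by linarith [hxV.1.2]⟩,
          mem_Icc.2 ⟨by linarith [hxV.2.1], by linarith [hxV.2.2]⟩⟩, ?_⟩, ?_⟩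
        · intro hU
          rw [mem_iUnion₂] at hU
          obtain ⟨j, hj, hxj⟩ := hU
          by_cases hje : j = j₀
          · exact hxn (hje ▸ hxj)
          · exact havoid j hj (hnotc j hj hje) x hxj (Or.inr (by linarith [hxV.2.2]))
        · intro hS
          rw [Set.mem_prod, mem_Icc] at hS
          linarith [hS.2.1, hxV.2.2]
      have h1 := measure_mono_null hsub1 hnull
      have h2 := measure_mono_null hsub2 hnull
      obtain ⟨ha0, hA2, hb0, hB2⟩ := hfacts j₀ hj₀
      have h0 := (hsub j₀ hj₀).1
      -- left edge of the corner square is 0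
      have haz : (p j₀).1 ≤ 0 := by
        by_contra hgt
        push_neg at hgt
        have hss : Ioo (0:ℝ) (min ((p j₀).1) (1/16)) ×ˢ Ioo (15/16:ℝ) 1 ⊆
            (Ioo (0:ℝ) (1/16) ×ˢ Ioo (15/16:ℝ) 1) \ square (p j₀) (hs j₀) := by
          rintro x ⟨hx1, hx2⟩
          rw [mem_Ioo] at hx1
          refine ⟨⟨mem_Ioo.2 ⟨hx1.1, lt_of_lt_of_le hx1.2 (min_le_right _ _)⟩, hx2⟩, ?_⟩
          intro hxs
          rw [square, Set.mem_prod, mem_Ico] at hxs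
          exact absurd hxs.1.1 (not_le.2 (lt_of_lt_of_le hx1.2 (min_le_left _ _)))
        have hz := measure_mono_null hss h1
        rw [vol_prod, Real.volume_Ioo, Real.volume_Ioo, mul_eq_zero,
          ENNReal.ofReal_eq_zero, ENNReal.ofReal_eq_zero] at hz
        rcases hz with hz | hz
        · have := lt_min hgt (by norm_num : (0:ℝ) < 1/16)
          linarith
        · linarith
      -- right edge of the corner square is 1
      have hge : 1 ≤ (p j₀).1 + hs j₀ := by
        by_contra hlt
        push_neg at hlt
        have hss : Ioo (max (15/16:ℝ) ((p j₀).1 + hs j₀)) 1 ×ˢ Ioo (0:ℝ) (1/16) ⊆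
            (Ioo (15/16:ℝ) 1 ×ˢ Ioo (0:ℝ) (1/16)) \ square (p j₀) (hs j₀) := by
          rintro x ⟨hx1, hx2⟩
          rw [mem_Ioo] at hx1
          refine ⟨⟨mem_Ioo.2 ⟨lt_of_le_of_lt (le_max_left _ _) hx1.1, hx1.2⟩, hx2⟩, ?_⟩
          intro hxs
          rw [square, Set.mem_prod, mem_Ico] at hxs
          exact absurd hxs.1.2 (not_lt.2 (le_of_lt (lt_of_le_of_lt (le_max_right _ _) hx1.1)))
        have hz := measure_mono_null hss h2
        rw [vol_prod, Real.volume_Ioo, Real.volume_Ioo, mul_eq_zero,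
          ENNReal.ofReal_eq_zero, ENNReal.ofReal_eq_zero] at hz
        rcases hz with hz | hz
        · have := max_lt (by norm_num : (15/16:ℝ) < 1) hlt
          linarith
        · linarith
      have haeq : (p j₀).1 = 0 := le_antisymm haz ha0
      have hheq : hs j₀ = 1 := by linarith
      have hbeq : (p j₀).2 = 0 := by linarith
      have hm := (hkey j₀ hj₀).1
      rw [haeq, hbeq, hheq] at hm
      norm_num at hm
    · -- no square contains the center corner : the corner box near (0,1) is uncovered
      push_neg at hex
      have hsub1 : (Ioo (0:ℝ) (1/16) ×ˢ Ioo (15/16:ℝ) 1) ⊆ NS := by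
        intro x hxV
        rw [Set.mem_prod, mem_Ioo, mem_Ioo] at hxV
        refine ⟨⟨⟨mem_Icc.2 ⟨by linarith [hxV.1.1], by linarith [hxV.1.2]⟩,
          mem_Icc.2 ⟨by linarith [hxV.2.1], by linarith [hxV.2.2]⟩⟩, ?_⟩, ?_⟩
        · intro hU
          rw [mem_iUnion₂] at hU
          obtain ⟨j, hj, hxj⟩ := hU
          exact havoid j hj (hex j hj) x hxj (Or.inl (by linarith [hxV.1.2]))
        · intro hS
          rw [Set.mem_prod, mem_Icc] at hS
          linarith [hS.1.1, hxV.1.2]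
      have h1 := measure_mono_null hsub1 hnull
      rw [vol_prod, Real.volume_Ioo, Real.volume_Ioo, mul_eq_zero,
        ENNReal.ofReal_eq_zero, ENNReal.ofReal_eq_zero] at h1
      rcases h1 with h1 | h1 <;> linarith
end

section
/- In the rising sun lemma decomposition, the total measure of the selected rectangles satisfies $\sum_j \mu(I_j) \le \frac{1}{A}\int_{I_0} \max(f, 0)\,d\mu$ whenever $A > 0$. -/
open MeasureTheory Set

/-- The total measure bound in the rising sun lemma decomposition: if the
selected pairwise disjoint subrectangles `I_j ⊆ I₀` all have `μ`-mean value of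
`f` exactly `A > 0`, then `∑ⱼ μ(I_j) ≤ (1/A) ∫_{I₀} max(f, 0) dμ`. -/
theorem rising_sun_total_measure_bound {n : ℕ}
    (μ : Measure (Fin n → ℝ)) [IsFiniteMeasure μ] (hμ : μ ≪ volume)
    (a₀ b₀ : Fin n → ℝ) (f : (Fin n → ℝ) → ℝ) (hf : Integrable f μ)
    (A : ℝ) (hApos : 0 < A) (hA : ⨍ x in rect a₀ b₀, f x ∂μ ≤ A)
    (c d : ℕ → Fin n → ℝ) (N : Set ℕ)
    (hsub : ∀ j ∈ N, rect (c j) (d j) ⊆ rect a₀ b₀)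
    (hdisj : N.PairwiseDisjoint fun j => rect (c j) (d j))
    (havg : ∀ j ∈ N, ⨍ x in rect (c j) (d j), f x ∂μ = A) :
    ∑' j : N, (μ (rect (c j) (d j))).toReal ≤
      (1 / A) * ∫ x in rect a₀ b₀, max (f x) 0 ∂μ := by
  set g : (Fin n → ℝ) → ℝ := fun x => max (f x) 0 with hg
  have hgint : Integrable g μ := hf.pos_part
  have hmeas : ∀ j : ℕ, MeasurableSet (rect (c j) (d j)) := fun j =>
    MeasurableSet.univ_pi fun i => measurableSet_Ico
  have hgnn : ∀ x, 0 ≤ g x := fun x => le_max_right _ _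
  -- key per-index bound
  have key : ∀ j : N, (μ (rect (c (j : ℕ)) (d (j : ℕ)))).toReal ≤
      (1 / A) * ∫ x in rect (c (j : ℕ)) (d (j : ℕ)), g x ∂μ := by
    rintro ⟨j, hj⟩
    have h1 := havg j hj
    rw [setAverage_eq] at h1
    set s := rect (c j) (d j)
    have hs0 : (μ s).toReal ≠ 0 := by
      intro h0
      rw [show μ.real s = 0 from h0] at h1
      simp at h1
      exact hApos.ne h1
    have hfI : ∫ x in s, f x ∂μ = A * (μ s).toReal := by
      change ((μ s).toReal)⁻¹ * ∫ x in s, f x ∂μ = A at h1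
      field_simp at h1
      linarith [h1]
    have hfg : ∫ x in s, f x ∂μ ≤ ∫ x in s, g x ∂μ :=
      setIntegral_mono hf.integrableOn hgint.integrableOn fun x => le_max_left _ _
    have : (μ s).toReal = (1 / A) * ∫ x in s, f x ∂μ := by
      rw [hfI]; field_simp
    rw [this]
    exact mul_le_mul_of_nonneg_left hfg (by positivity)
  -- the union
  have hUsub : (⋃ j : N, rect (c (j : ℕ)) (d (j : ℕ))) ⊆ rect a₀ b₀ := by
    rintro x hx
    rcases mem_iUnion.1 hx with ⟨⟨j, hj⟩, hxj⟩
    exact hsub j hj hxj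
  have hdisj' : Pairwise (Function.onFun Disjoint fun j : N => rect (c (j : ℕ)) (d (j : ℕ))) :=
    hdisj.subtype _ _
  have hsum : HasSum (fun j : N => ∫ x in rect (c (j : ℕ)) (d (j : ℕ)), g x ∂μ)
      (∫ x in ⋃ j : N, rect (c (j : ℕ)) (d (j : ℕ)), g x ∂μ) :=
    hasSum_integral_iUnion (fun j => hmeas _) hdisj' hgint.integrableOn
  have hRHSsummable : Summable fun j : N =>
      (1 / A) * ∫ x in rect (c (j : ℕ)) (d (j : ℕ)), g x ∂μ :=
    hsum.summable.mul_left _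
  have hLHSsummable : Summable fun j : N => (μ (rect (c (j : ℕ)) (d (j : ℕ)))).toReal :=
    Summable.of_nonneg_of_le (fun j => ENNReal.toReal_nonneg) key hRHSsummable
  calc ∑' j : N, (μ (rect (c (j : ℕ)) (d (j : ℕ)))).toReal
      ≤ ∑' j : N, (1 / A) * ∫ x in rect (c (j : ℕ)) (d (j : ℕ)), g x ∂μ :=
        Summable.tsum_le_tsum key hLHSsummable hRHSsummable
    _ = (1 / A) * ∑' j : N, ∫ x in rect (c (j : ℕ)) (d (j : ℕ)), g x ∂μ := tsum_mul_left
    _ = (1 / A) * ∫ x in ⋃ j : N, rect (c (j : ℕ)) (d (j : ℕ)), g x ∂μ := by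
        rw [hsum.tsum_eq]
    _ ≤ (1 / A) * ∫ x in rect a₀ b₀, g x ∂μ := by
        apply mul_le_mul_of_nonneg_left _ (by positivity)
        apply setIntegral_mono_set hgint.integrableOn
          (Filter.Eventually.of_forall fun x => hgnn x)
          (HasSubset.Subset.eventuallyLE hUsub)
end

section
/- Let $I_0$ be a rectangle in $\mathbb{R}^n$, $\mu$ an absolutely continuous finite Borel measure on $I_0$, $f \in L^1(\mu)$ nonnegative, and $A$ a constant with $\frac{1}{\mu(I_0)}\int_{I_0} f\,d\mu \le A$. Then the set $\{x \in I_0 : f(x) > A\}$ is, up to a $\mu$-null set, contained in a countable union of pairwise disjoint rectangles $I_j$ over each of which the $\mu$-average of $f$ equals exactly $A$, so that $\mu(\{x : f(x) > A\}) \le \sum_j \mu(I_j) = \frac{1}{A}\sum_j \int_{I_j} f\,d\mu \le \frac{1}{A}\int_{I_0} f\,d\mu$ when $A > 0$. -/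
open MeasureTheory Set
open scoped ENNReal

namespace RSaux


variable {n : ℕ}

lemma mem_rect {a b y : Fin n → ℝ} : y ∈ rect a b ↔ ∀ i, a i ≤ y i ∧ y i < b i := by
  simp [rect, Set.mem_pi, Set.mem_Ico]

lemma measurableSet_rect (a b : Fin n → ℝ) : MeasurableSet (rect a b) :=
  MeasurableSet.univ_pi fun i => measurableSet_Ico

lemma rect_mono {a b a' b' : Fin n → ℝ} (h1 : ∀ i, a i ≤ a' i) (h2 : ∀ i, b' i ≤ b i) :
    rect a' b' ⊆ rect a b := by
  intro y hy
  rw [mem_rect] at hy ⊢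
  exact fun i => ⟨(h1 i).trans (hy i).1, (hy i).2.trans_le (h2 i)⟩

lemma rect_eq_empty {a b : Fin n → ℝ} (k : Fin n) (h : b k ≤ a k) : rect a b = ∅ := by
  ext y
  simp only [mem_rect, Set.mem_empty_iff_false, iff_false]
  intro hy
  exact absurd ((hy k).1.trans_lt (hy k).2) (not_lt.2 h)

lemma rect_disj {a b a' b' : Fin n → ℝ} (k : Fin n) (h : b k ≤ a' k) :
    Disjoint (rect a b) (rect a' b') := by
  rw [Set.disjoint_left]
  intro y hy hy'
  rw [mem_rect] at hy hy'
  exact absurd ((hy k).2.trans_le (h.trans (hy' k).1)) (lt_irrefl _)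

lemma rect_union_split (c d : Fin n → ℝ) (k : Fin n) {t : ℝ} (h1 : c k ≤ t) (h2 : t ≤ d k) :
    rect c d = rect c (Function.update d k t) ∪ rect (Function.update c k t) d := by
  ext y
  simp only [Set.mem_union, mem_rect]
  constructor
  · intro hy
    rcases lt_or_ge (y k) t with h | h
    · left
      intro i
      rcases eq_or_ne i k with rfl | hik
      · simpa using ⟨(hy i).1, h⟩
      · simpa [Function.update_of_ne hik] using hy i
    · right
      intro i
      rcases eq_or_ne i k with rfl | hik
      · simpa using ⟨h, (hy i).2⟩
      · simpa [Function.update_of_ne hik] using hy i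
  · rintro (hy | hy) <;> intro i <;> rcases eq_or_ne i k with rfl | hik
    · have := hy i; simp at this
      exact ⟨this.1, this.2.trans_le h2⟩
    · have := hy i; simpa [Function.update_of_ne hik] using this
    · have := hy i; simp at this
      exact ⟨h1.trans this.1, this.2⟩
    · have := hy i; simpa [Function.update_of_ne hik] using this

variable (μ : Measure (Fin n → ℝ))

lemma hyperplane_null (hμ : μ ≪ volume) (k : Fin n) (t : ℝ) : μ {y : Fin n → ℝ | y k = t} = 0 := by
  apply hμ
  have : {y : Fin n → ℝ | y k = t} = Set.pi Set.univ (fun i => if i = k then ({t} : Set ℝ) else univ) := by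
    ext y
    simp only [Set.mem_setOf_eq, Set.mem_pi, Set.mem_univ, forall_true_left]
    constructor
    · intro h i
      rcases eq_or_ne i k with rfl | hik
      · simp [h]
      · simp [hik]
    · intro h
      have := h k
      simpa using this
  rw [this, volume_pi_pi]
  refine Finset.prod_eq_zero (Finset.mem_univ k) ?_
  simp

lemma integral_rect_split [IsFiniteMeasure μ] {g : (Fin n → ℝ) → ℝ} (hg : Integrable g μ)
    (c d : Fin n → ℝ) (k : Fin n) {t : ℝ} (h1 : c k ≤ t) (h2 : t ≤ d k) :
    ∫ y in rect c d, g y ∂μ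
      = (∫ y in rect c (Function.update d k t), g y ∂μ)
        + ∫ y in rect (Function.update c k t) d, g y ∂μ := by
  rw [rect_union_split c d k h1 h2]
  exact setIntegral_union (rect_disj k (by simp)) (measurableSet_rect _ _)
    hg.integrableOn hg.integrableOn

/-- continuity of the slab integral in the moving face. -/
lemma cont_slab [IsFiniteMeasure μ] (hμ : μ ≪ volume) {g : (Fin n → ℝ) → ℝ}
    (hg : Integrable g μ) (c d : Fin n → ℝ) (k : Fin n) :
    Continuous (fun t => ∫ y in rect c (Function.update d k t), g y ∂μ) := by
  rw [continuous_iff_continuousAt]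
  intro t₀
  have hmeas : ∀ t : ℝ, MeasurableSet (rect c (Function.update d k t)) :=
    fun t => measurableSet_rect _ _
  have : ∀ t : ℝ, ∫ y in rect c (Function.update d k t), g y ∂μ
      = ∫ y, (rect c (Function.update d k t)).indicator g y ∂μ := by
    intro t; rw [integral_indicator (hmeas t)]
  simp only [ContinuousAt, this]
  apply tendsto_integral_filter_of_dominated_convergence (fun y => ‖g y‖)
  · exact Filter.Eventually.of_forall fun t => hg.aestronglyMeasurable.indicator (hmeas t)
  · exact Filter.Eventually.of_forall fun t =>
      Filter.Eventually.of_forall fun y => norm_indicator_le_norm_self _ _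
  · exact hg.norm
  · have hnull : μ {y : Fin n → ℝ | y k = t₀} = 0 := hyperplane_null μ hμ k t₀
    filter_upwards [measure_eq_zero_iff_ae_notMem.1 hnull] with y hy
    have : ∀ᶠ t in nhds t₀, (y ∈ rect c (Function.update d k t) ↔ y ∈ rect c (Function.update d k t₀)) := by
      have hy' : y k ≠ t₀ := by simpa using hy
      rcases lt_or_gt_of_ne hy' with h | h
      · filter_upwards [Ioi_mem_nhds h] with t ht
        simp only [mem_rect, Function.update_apply]
        constructor <;> intro hmem i <;> rcases eq_or_ne i k with rfl | hik
        · simpa [if_pos rfl] using ⟨((hmem i).1 : _), h⟩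
        · simpa [hik] using hmem i
        · simpa [if_pos rfl] using ⟨((hmem i).1 : _), ht⟩
        · simpa [hik] using hmem i
      · filter_upwards [Iio_mem_nhds h] with t ht
        simp only [mem_rect, Function.update_apply]
        constructor <;> intro hmem i
        · exfalso
          have := hmem k
          simp only [if_pos rfl] at this
          exact absurd this.2 (not_lt.2 ht.le)
        · exfalso
          have := hmem k
          simp only [if_pos rfl] at this
          exact absurd this.2 (not_lt.2 h.le)
    apply Filter.Tendsto.congr' _ tendsto_const_nhds
    filter_upwards [this] with t ht
    by_cases hmem : y ∈ rect c (Function.update d k t₀)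
    · rw [Set.indicator_of_mem hmem, Set.indicator_of_mem (ht.2 hmem)]
    · rw [Set.indicator_of_notMem hmem, Set.indicator_of_notMem (fun h => hmem (ht.1 h))]


variable (f : (Fin n → ℝ) → ℝ) (A : ℝ)

noncomputable def GG (P : (Fin n → ℝ) × (Fin n → ℝ)) (k : Fin n) (t : ℝ) : ℝ :=
  ∫ y in rect P.1 (Function.update P.2 k t), (f y - A) ∂μ

noncomputable def eS (P : (Fin n → ℝ) × (Fin n → ℝ)) (k : Fin n) : ℝ :=
  sSup {t | t ∈ Set.Icc (P.1 k) (P.2 k) ∧ 0 ≤ GG μ f A P k t}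

noncomputable def mS (P : (Fin n → ℝ) × (Fin n → ℝ)) (k : Fin n) : ℝ :=
  (eS μ f A P k + P.2 k) / 2

noncomputable def HH (P : (Fin n → ℝ) × (Fin n → ℝ)) (k : Fin n) (t : ℝ) : ℝ :=
  GG μ f A P k (P.2 k) - GG μ f A P k t

noncomputable def qS (P : (Fin n → ℝ) × (Fin n → ℝ)) (k : Fin n) : ℝ :=
  sSup {t | t ∈ Set.Icc (eS μ f A P k) (mS μ f A P k) ∧ HH μ f A P k t ≤ 0}

noncomputable def actC (P : (Fin n → ℝ) × (Fin n → ℝ)) (k : Fin n) :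
    Fin 2 → (Fin n → ℝ) × (Fin n → ℝ) := fun i =>
  if i = 0 then (Function.update P.1 k (eS μ f A P k), Function.update P.2 k (qS μ f A P k))
  else if HH μ f A P k (mS μ f A P k) ≤ 0
    then (Function.update P.1 k (qS μ f A P k), P.2)
    else (Function.update P.1 k (P.2 k), P.2)

noncomputable def choC (P : (Fin n → ℝ) × (Fin n → ℝ)) (k : Fin n) :
    Fin 2 → (Fin n → ℝ) × (Fin n → ℝ) := fun j =>
  if j = 0 then (P.1, Function.update P.2 k (eS μ f A P k))
  else if HH μ f A P k (mS μ f A P k) ≤ 0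
    then (Function.update P.1 k (P.2 k), P.2)
    else (Function.update P.1 k (qS μ f A P k), P.2)

theorem split_main [IsFiniteMeasure μ] (hμ : μ ≪ volume) (hfi : Integrable f μ)
    (P : (Fin n → ℝ) × (Fin n → ℝ)) (k : Fin n)
    (hcd : ∀ i, P.1 i ≤ P.2 i) (hint : ∫ y in rect P.1 P.2, (f y - A) ∂μ ≤ 0) :
    (∀ j i, P.1 i ≤ (choC μ f A P k j).1 i ∧ (choC μ f A P k j).1 i ≤ (choC μ f A P k j).2 i
        ∧ (choC μ f A P k j).2 i ≤ P.2 i) ∧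
    (∀ j i, P.1 i ≤ (actC μ f A P k j).1 i ∧ (actC μ f A P k j).1 i ≤ (actC μ f A P k j).2 i
        ∧ (actC μ f A P k j).2 i ≤ P.2 i) ∧
    (∀ j, ∫ y in rect (choC μ f A P k j).1 (choC μ f A P k j).2, (f y - A) ∂μ = 0) ∧
    (∀ j, ∫ y in rect (actC μ f A P k j).1 (actC μ f A P k j).2, (f y - A) ∂μ ≤ 0) ∧
    (∀ j, (actC μ f A P k j).2 k - (actC μ f A P k j).1 k ≤ (P.2 k - P.1 k) / 2) ∧
    (∀ j i, i ≠ k → (actC μ f A P k j).2 i - (actC μ f A P k j).1 i = P.2 i - P.1 i) ∧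
    (rect P.1 P.2 ⊆
      rect (choC μ f A P k 0).1 (choC μ f A P k 0).2 ∪
      rect (choC μ f A P k 1).1 (choC μ f A P k 1).2 ∪
      rect (actC μ f A P k 0).1 (actC μ f A P k 0).2 ∪
      rect (actC μ f A P k 1).1 (actC μ f A P k 1).2) ∧
    (∀ j j', j ≠ j' → Disjoint (rect (choC μ f A P k j).1 (choC μ f A P k j).2)
        (rect (choC μ f A P k j').1 (choC μ f A P k j').2)) ∧
    (∀ j j', j ≠ j' → Disjoint (rect (actC μ f A P k j).1 (actC μ f A P k j).2)
        (rect (actC μ f A P k j').1 (actC μ f A P k j').2)) ∧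
    (∀ j j', Disjoint (rect (choC μ f A P k j).1 (choC μ f A P k j).2)
        (rect (actC μ f A P k j').1 (actC μ f A P k j').2)) := by
  have gint : Integrable (fun y => f y - A) μ := hfi.sub (integrable_const A)
  set c := P.1 with hc
  set d := P.2 with hd
  have contG : Continuous (GG μ f A P k) := cont_slab μ hμ gint c d k
  -- basic facts about GG
  have hG_left : GG μ f A P k (c k) = 0 := by
    have : rect c (Function.update d k (c k)) = ∅ := rect_eq_empty k (by simp)
    simp only [GG, ← hc, ← hd, this, Measure.restrict_empty, integral_zero_measure]
  have hG_right : GG μ f A P k (d k) = ∫ y in rect c d, (f y - A) ∂μ := by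
    simp only [GG, ← hc, ← hd, Function.update_eq_self]
  -- the set for eS
  set S1 := {t | t ∈ Set.Icc (c k) (d k) ∧ 0 ≤ GG μ f A P k t} with hS1
  have hS1ne : S1.Nonempty := ⟨c k, ⟨le_refl _, hcd k⟩, hG_left.ge⟩
  have hS1bdd : BddAbove S1 := (bddAbove_Icc (a := c k) (b := d k)).mono fun t ht => ht.1
  have hS1closed : IsClosed S1 := by
    have : S1 = Set.Icc (c k) (d k) ∩ GG μ f A P k ⁻¹' Set.Ici 0 := rfl
    rw [this]
    exact isClosed_Icc.inter (isClosed_Ici.preimage contG)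
  have heS_mem : eS μ f A P k ∈ S1 := hS1closed.csSup_mem hS1ne hS1bdd
  set e := eS μ f A P k with he
  have he_Icc : e ∈ Set.Icc (c k) (d k) := heS_mem.1
  have hGlt : ∀ t, e < t → t ≤ d k → GG μ f A P k t < 0 := by
    intro t het htd
    by_contra hcon
    push_neg at hcon
    have : t ∈ S1 := ⟨⟨he_Icc.1.trans het.le, htd⟩, hcon⟩
    exact absurd (le_csSup hS1bdd this) (not_le.2 het)
  have hGe : GG μ f A P k e = 0 := by
    rcases le_or_gt (GG μ f A P k e) 0 with hle | hpos
    · rcases lt_or_eq_of_le hle with hlt | heq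
      · exact absurd heS_mem.2 (not_le.2 hlt)
      · exact heq.symm ▸ rfl
    · exfalso
      have hed : e < d k := by
        rcases lt_or_eq_of_le he_Icc.2 with h | h
        · exact h
        · rw [h] at hpos
          rw [hG_right] at hpos
          exact absurd hint (not_le.2 hpos)
      have hopen : IsOpen {t | 0 < GG μ f A P k t} := isOpen_lt continuous_const contG
      obtain ⟨ε, hε, hball⟩ := Metric.mem_nhds_iff.1 (hopen.mem_nhds hpos)
      set t := min (d k) (e + ε / 2) with ht
      have hte : e < t := lt_min hed (by linarith)
      have htd : t ≤ d k := min_le_left _ _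
      have htball : t ∈ Metric.ball e ε := by
        rw [Metric.mem_ball, Real.dist_eq, abs_lt]
        constructor
        · linarith [hte]
        · have : t ≤ e + ε / 2 := min_le_right _ _
          linarith
      have : t ∈ S1 := ⟨⟨he_Icc.1.trans hte.le, htd⟩, (hball htball).le⟩
      exact absurd (le_csSup hS1bdd this) (not_le.2 hte)
  -- mS facts
  set m := mS μ f A P k with hm
  have hem : e ≤ m := by
    rw [hm, mS, ← he]
    have := he_Icc.2
    simp only [← hc, ← hd]
    linarith
  have hmd : m ≤ d k := by
    rw [hm, mS, ← he]
    have := he_Icc.2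
    simp only [← hc, ← hd]
    linarith
  -- the set for qS
  have hH_e : HH μ f A P k e ≤ 0 := by
    simp only [HH, hGe, sub_zero, ← hd]
    rw [hG_right]; exact hint
  set S2 := {t | t ∈ Set.Icc e m ∧ HH μ f A P k t ≤ 0} with hS2
  have hS2ne : S2.Nonempty := ⟨e, ⟨le_refl _, hem⟩, hH_e⟩
  have hS2bdd : BddAbove S2 := (bddAbove_Icc (a := e) (b := m)).mono fun t ht => ht.1
  have hS2closed : IsClosed S2 := by
    have : S2 = Set.Icc e m ∩ HH μ f A P k ⁻¹' Set.Iic 0 := rfl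
    rw [this]
    refine isClosed_Icc.inter (isClosed_Iic.preimage ?_)
    exact (continuous_const.sub contG)
  have hqS_mem : qS μ f A P k ∈ S2 := by
    have : qS μ f A P k = sSup S2 := by rw [qS, ← he, ← hm]
    rw [this]; exact hS2closed.csSup_mem hS2ne hS2bdd
  set q := qS μ f A P k with hq
  have hq_Icc : q ∈ Set.Icc e m := hqS_mem.1
  have hHq : HH μ f A P k q ≤ 0 := hqS_mem.2
  have hq_ub : ∀ t ∈ S2, t ≤ q := fun t ht => by
    rw [hq, qS, ← he, ← hm]; exact le_csSup hS2bdd ht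
  have hq_mid : HH μ f A P k m ≤ 0 → q = m := by
    intro hHm
    refine le_antisymm hq_Icc.2 (hq_ub m ⟨⟨hem, le_refl _⟩, hHm⟩)
  have hq_zero : ¬ HH μ f A P k m ≤ 0 → HH μ f A P k q = 0 := by
    intro hHm
    push_neg at hHm
    rcases lt_or_eq_of_le hHq with hlt | heq
    · exfalso
      have hqm : q < m := by
        rcases lt_or_eq_of_le hq_Icc.2 with h | h
        · exact h
        · rw [h] at hlt; exact absurd hHm (not_lt.2 hlt.le)
      have hopen : IsOpen {t | HH μ f A P k t < 0} :=
        isOpen_lt (continuous_const.sub contG) continuous_const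
      obtain ⟨ε, hε, hball⟩ := Metric.mem_nhds_iff.1 (hopen.mem_nhds hlt)
      set t := min m (q + ε / 2) with ht
      have hqt : q < t := lt_min hqm (by linarith)
      have htm : t ≤ m := min_le_left _ _
      have htball : t ∈ Metric.ball q ε := by
        rw [Metric.mem_ball, Real.dist_eq, abs_lt]
        refine ⟨by linarith [hqt], ?_⟩
        have : t ≤ q + ε / 2 := min_le_right _ _
        linarith
      have : t ∈ S2 := ⟨⟨hq_Icc.1.trans hqt.le, htm⟩, (hball htball).le⟩
      exact absurd (hq_ub t this) (not_le.2 hqt)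
    · exact heq
  have hce : c k ≤ e := he_Icc.1
  have heq' : e ≤ q := hq_Icc.1
  have hqm' : q ≤ m := hq_Icc.2
  have hqd : q ≤ d k := hqm'.trans hmd
  have hed : e ≤ d k := he_Icc.2
  -- integrals over pieces
  have int_p1 : ∫ y in rect c (Function.update d k e), (f y - A) ∂μ = 0 := by
    have : GG μ f A P k e = ∫ y in rect c (Function.update d k e), (f y - A) ∂μ := by
      simp only [GG, ← hc, ← hd]
    rw [← this, hGe]
  have hGq_eq : GG μ f A P k q
      = ∫ y in rect (Function.update c k e) (Function.update d k q), (f y - A) ∂μ := by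
    have hsplit := integral_rect_split μ gint c (Function.update d k q) k
      (t := e) hce (by simp [heq'])
    have hupd : Function.update (Function.update d k q) k e = Function.update d k e := by
      rw [Function.update_idem]
    rw [hupd] at hsplit
    have hGGq : GG μ f A P k q = ∫ y in rect c (Function.update d k q), (f y - A) ∂μ := by
      simp only [GG, ← hc, ← hd]
    rw [hGGq, hsplit, int_p1, zero_add]
  have int_p2 : ∫ y in rect (Function.update c k e) (Function.update d k q), (f y - A) ∂μ ≤ 0 := by
    rw [← hGq_eq]
    rcases lt_or_eq_of_le heq' with h | h
    · exact (hGlt q h hqd).le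
    · rw [← h, hGe]
  have int_p3 : ∫ y in rect (Function.update c k q) d, (f y - A) ∂μ = HH μ f A P k q := by
    have hsplit := integral_rect_split μ gint c d k (t := q) (hce.trans heq') hqd
    have : GG μ f A P k q = ∫ y in rect c (Function.update d k q), (f y - A) ∂μ := by
      simp only [GG, ← hc, ← hd]
    rw [← this] at hsplit
    simp only [HH]
    rw [hG_right]
    linarith
  have p4_empty : rect (Function.update c k (d k)) d = ∅ := rect_eq_empty k (by simp)
  have int_p4 : ∫ y in rect (Function.update c k (d k)) d, (f y - A) ∂μ = 0 := by
    rw [p4_empty]; simp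
  -- piece abbreviations and facts
  have hcc : Function.update c k (c k) = c := Function.update_eq_self k c
  have hdd : Function.update d k (d k) = d := Function.update_eq_self k d
  have hm2 : m = (e + d k) / 2 := by rw [hm, mS, ← he, ← hd]
  -- bounds helper
  have upd_bnd : ∀ x y : ℝ, c k ≤ x → x ≤ y → y ≤ d k → ∀ i,
      c i ≤ Function.update c k x i ∧ Function.update c k x i ≤ Function.update d k y i
        ∧ Function.update d k y i ≤ d i := by
    intro x y h1 h2 h3 i
    rcases eq_or_ne i k with rfl | hik
    · simp only [Function.update_self]
      exact ⟨h1, h2, h3⟩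
    · simp only [Function.update_of_ne hik]
      exact ⟨le_refl _, hcd i, le_refl _⟩
  have bnd_p1 := upd_bnd (c k) e (le_refl _) hce hed
  have bnd_p2 := upd_bnd e q hce heq' hqd
  have bnd_p3 := upd_bnd q (d k) (hce.trans heq') hqd (le_refl _)
  have bnd_p4 := upd_bnd (d k) (d k) (hcd k) (le_refl _) (le_refl _)
  rw [hcc] at bnd_p1
  rw [hdd] at bnd_p3 bnd_p4
  -- covering
  have cover3 : rect c d ⊆ rect c (Function.update d k e)
      ∪ rect (Function.update c k e) (Function.update d k q)
      ∪ rect (Function.update c k q) d := by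
    have h1 : rect c d = rect c (Function.update d k e) ∪ rect (Function.update c k e) d :=
      rect_union_split c d k hce hed
    have h2 : rect (Function.update c k e) d
        = rect (Function.update c k e) (Function.update d k q)
          ∪ rect (Function.update (Function.update c k e) k q) d := by
      refine rect_union_split _ d k ?_ hqd
      simp only [Function.update_self]
      exact heq'
    rw [Function.update_idem] at h2
    rw [h1, h2]
    exact (Set.union_assoc _ _ _).superset
  -- disjointness base facts
  have d_p1p2 : Disjoint (rect c (Function.update d k e))
      (rect (Function.update c k e) (Function.update d k q)) :=
    rect_disj k (by simp)
  have d_p1p3 : Disjoint (rect c (Function.update d k e)) (rect (Function.update c k q) d) :=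
    rect_disj k (by simp only [Function.update_self]; exact heq')
  have d_p2p3 : Disjoint (rect (Function.update c k e) (Function.update d k q))
      (rect (Function.update c k q) d) :=
    rect_disj k (by simp)
  have d_p4_left : ∀ s : Set (Fin n → ℝ), Disjoint (rect (Function.update c k (d k)) d) s := by
    intro s; rw [p4_empty]; exact Set.empty_disjoint s
  have d_p4_right : ∀ s : Set (Fin n → ℝ), Disjoint s (rect (Function.update c k (d k)) d) := by
    intro s; rw [p4_empty]; exact Set.disjoint_empty s
  by_cases hHm : HH μ f A P k m ≤ 0
  · -- q = m ; act1 = p3, cho1 = p4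
    have hHm' : HH μ f A P k (mS μ f A P k) ≤ 0 := hHm
    have hA0 : actC μ f A P k 0
        = (Function.update P.1 k (eS μ f A P k), Function.update P.2 k (qS μ f A P k)) := by
      simp [actC]
    have hA1 : actC μ f A P k 1 = (Function.update P.1 k (qS μ f A P k), P.2) := by
      simp [actC, hHm']
    have hC0 : choC μ f A P k 0 = (P.1, Function.update P.2 k (eS μ f A P k)) := by
      simp [choC]
    have hC1 : choC μ f A P k 1 = (Function.update P.1 k (P.2 k), P.2) := by
      simp [choC, hHm']
    have hqm : q = m := hq_mid hHm
    have int_act1 : ∫ y in rect (Function.update c k q) d, (f y - A) ∂μ ≤ 0 := by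
      rw [int_p3, hqm]; exact hHm
    refine ⟨?_, ?_, ?_, ?_, ?_, ?_, ?_, ?_, ?_, ?_⟩
    · intro j i; rcases (by omega : j = 0 ∨ j = 1) with rfl | rfl
      · rw [hC0]; exact ⟨le_refl _, (bnd_p1 i).2.1, (bnd_p1 i).2.2⟩
      · rw [hC1]; exact ⟨(bnd_p4 i).1, (bnd_p4 i).2.1, le_refl _⟩
    · intro j i; rcases (by omega : j = 0 ∨ j = 1) with rfl | rfl
      · rw [hA0]; exact bnd_p2 i
      · rw [hA1]; exact ⟨(bnd_p3 i).1, (bnd_p3 i).2.1, le_refl _⟩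
    · intro j; rcases (by omega : j = 0 ∨ j = 1) with rfl | rfl
      · rw [hC0]; exact int_p1
      · rw [hC1]; exact int_p4
    · intro j; rcases (by omega : j = 0 ∨ j = 1) with rfl | rfl
      · rw [hA0]; exact int_p2
      · rw [hA1]; exact int_act1
    · intro j; rcases (by omega : j = 0 ∨ j = 1) with rfl | rfl
      · rw [hA0]
        show Function.update d k q k - Function.update c k e k ≤ (d k - c k) / 2
        simp only [Function.update_self]
        linarith [hqm', hm2, hce]
      · rw [hA1]
        show d k - Function.update c k q k ≤ (d k - c k) / 2
        simp only [Function.update_self]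
        rw [hqm]
        linarith [hm2, hce]
    · intro j i hik; rcases (by omega : j = 0 ∨ j = 1) with rfl | rfl
      · rw [hA0]; simp only [Function.update_of_ne hik]; rfl
      · rw [hA1]; simp only [Function.update_of_ne hik]; rfl
    · intro y hy
      rcases cover3 hy with (h | h) | h
      · exact Or.inl (Or.inl (Or.inl (by rw [hC0]; exact h)))
      · exact Or.inl (Or.inr (by rw [hA0]; exact h))
      · exact Or.inr (by rw [hA1]; exact h)
    · intro j j' hjj'; rcases (by omega : j = 0 ∨ j = 1) with rfl | rfl <;> rcases (by omega : j' = 0 ∨ j' = 1) with rfl | rfl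
      · exact absurd rfl hjj'
      · rw [hC0, hC1]; exact d_p4_right _
      · rw [hC0, hC1]; exact d_p4_left _
      · exact absurd rfl hjj'
    · intro j j' hjj'; rcases (by omega : j = 0 ∨ j = 1) with rfl | rfl <;> rcases (by omega : j' = 0 ∨ j' = 1) with rfl | rfl
      · exact absurd rfl hjj'
      · rw [hA0, hA1]; exact d_p2p3
      · rw [hA0, hA1]; exact d_p2p3.symm
      · exact absurd rfl hjj'
    · intro j j'; rcases (by omega : j = 0 ∨ j = 1) with rfl | rfl <;> rcases (by omega : j' = 0 ∨ j' = 1) with rfl | rfl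
      · rw [hC0, hA0]; exact d_p1p2
      · rw [hC0, hA1]; exact d_p1p3
      · rw [hC1, hA0]; exact d_p4_left _
      · rw [hC1, hA1]; exact d_p4_left _
  · -- HH m > 0 ; act1 = p4, cho1 = p3
    have hHm' : ¬ HH μ f A P k (mS μ f A P k) ≤ 0 := hHm
    have hA0 : actC μ f A P k 0
        = (Function.update P.1 k (eS μ f A P k), Function.update P.2 k (qS μ f A P k)) := by
      simp [actC]
    have hA1 : actC μ f A P k 1 = (Function.update P.1 k (P.2 k), P.2) := by
      simp [actC, hHm']
    have hC0 : choC μ f A P k 0 = (P.1, Function.update P.2 k (eS μ f A P k)) := by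
      simp [choC]
    have hC1 : choC μ f A P k 1 = (Function.update P.1 k (qS μ f A P k), P.2) := by
      simp [choC, hHm']
    have int_cho1 : ∫ y in rect (Function.update c k q) d, (f y - A) ∂μ = 0 := by
      rw [int_p3]; exact hq_zero hHm
    refine ⟨?_, ?_, ?_, ?_, ?_, ?_, ?_, ?_, ?_, ?_⟩
    · intro j i; rcases (by omega : j = 0 ∨ j = 1) with rfl | rfl
      · rw [hC0]; exact ⟨le_refl _, (bnd_p1 i).2.1, (bnd_p1 i).2.2⟩
      · rw [hC1]; exact ⟨(bnd_p3 i).1, (bnd_p3 i).2.1, le_refl _⟩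
    · intro j i; rcases (by omega : j = 0 ∨ j = 1) with rfl | rfl
      · rw [hA0]; exact bnd_p2 i
      · rw [hA1]; exact ⟨(bnd_p4 i).1, (bnd_p4 i).2.1, le_refl _⟩
    · intro j; rcases (by omega : j = 0 ∨ j = 1) with rfl | rfl
      · rw [hC0]; exact int_p1
      · rw [hC1]; exact int_cho1
    · intro j; rcases (by omega : j = 0 ∨ j = 1) with rfl | rfl
      · rw [hA0]; exact int_p2
      · rw [hA1]; exact int_p4.le
    · intro j; rcases (by omega : j = 0 ∨ j = 1) with rfl | rfl
      · rw [hA0]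
        show Function.update d k q k - Function.update c k e k ≤ (d k - c k) / 2
        simp only [Function.update_self]
        linarith [hqm', hm2, hce]
      · rw [hA1]
        show d k - Function.update c k (d k) k ≤ (d k - c k) / 2
        simp only [Function.update_self]
        linarith [hcd k]
    · intro j i hik; rcases (by omega : j = 0 ∨ j = 1) with rfl | rfl
      · rw [hA0]; simp only [Function.update_of_ne hik]; rfl
      · rw [hA1]; simp only [Function.update_of_ne hik]; rfl
    · intro y hy
      rcases cover3 hy with (h | h) | h
      · exact Or.inl (Or.inl (Or.inl (by rw [hC0]; exact h)))
      · exact Or.inl (Or.inr (by rw [hA0]; exact h))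
      · exact Or.inl (Or.inl (Or.inr (by rw [hC1]; exact h)))
    · intro j j' hjj'; rcases (by omega : j = 0 ∨ j = 1) with rfl | rfl <;> rcases (by omega : j' = 0 ∨ j' = 1) with rfl | rfl
      · exact absurd rfl hjj'
      · rw [hC0, hC1]; exact d_p1p3
      · rw [hC0, hC1]; exact d_p1p3.symm
      · exact absurd rfl hjj'
    · intro j j' hjj'; rcases (by omega : j = 0 ∨ j = 1) with rfl | rfl <;> rcases (by omega : j' = 0 ∨ j' = 1) with rfl | rfl
      · exact absurd rfl hjj'
      · rw [hA0, hA1]; exact d_p4_right _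
      · rw [hA0, hA1]; exact d_p4_left _
      · exact absurd rfl hjj'
    · intro j j'; rcases (by omega : j = 0 ∨ j = 1) with rfl | rfl <;> rcases (by omega : j' = 0 ∨ j' = 1) with rfl | rfl
      · rw [hC0, hA0]; exact d_p1p2
      · rw [hC0, hA1]; exact d_p4_right _
      · rw [hC1, hA0]; exact d_p2p3.symm
      · rw [hC1, hA1]; exact d_p4_right _


def kOf (n : ℕ) [NeZero n] (g : ℕ) : Fin n :=
  ⟨g % n, Nat.mod_lt _ (Nat.pos_of_ne_zero (NeZero.ne n))⟩

variable (a₀ b₀ : Fin n → ℝ) [NeZero n]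

noncomputable def act : List (Fin 2) → (Fin n → ℝ) × (Fin n → ℝ)
  | [] => (a₀, b₀)
  | (i :: l) => actC μ f A (act l) (kOf n l.length) i

noncomputable def cho (j : Fin 2) (l : List (Fin 2)) : (Fin n → ℝ) × (Fin n → ℝ) :=
  choC μ f A (act μ f A a₀ b₀ l) (kOf n l.length) j

noncomputable def W : ℕ → Fin n → ℝ
  | 0 => fun i => b₀ i - a₀ i
  | (g + 1) => fun i => if kOf n g = i then W g i / 2 else W g i

section invariants

variable [IsFiniteMeasure μ] (hμ : μ ≪ volume) (hfi : Integrable f μ)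
  (hab : ∀ i, a₀ i ≤ b₀ i) (hroot : ∫ y in rect a₀ b₀, (f y - A) ∂μ ≤ 0)

include hμ hfi hab hroot

lemma act_inv : ∀ l : List (Fin 2),
    (∀ i, a₀ i ≤ (act μ f A a₀ b₀ l).1 i) ∧
    (∀ i, (act μ f A a₀ b₀ l).1 i ≤ (act μ f A a₀ b₀ l).2 i) ∧
    (∀ i, (act μ f A a₀ b₀ l).2 i ≤ b₀ i) ∧
    (∫ y in rect (act μ f A a₀ b₀ l).1 (act μ f A a₀ b₀ l).2, (f y - A) ∂μ ≤ 0) := by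
  intro l
  induction l with
  | nil => exact ⟨fun i => le_refl _, hab, fun i => le_refl _, hroot⟩
  | cons i l ih =>
    obtain ⟨h0, h1, h2, h3⟩ := ih
    have hs := split_main μ f A hμ hfi (act μ f A a₀ b₀ l) (kOf n l.length) h1 h3
    have hact : act μ f A a₀ b₀ (i :: l)
        = actC μ f A (act μ f A a₀ b₀ l) (kOf n l.length) i := rfl
    rw [hact]
    exact ⟨fun i' => (h0 i').trans ((hs.2.1 i i').1),
      fun i' => (hs.2.1 i i').2.1,
      fun i' => ((hs.2.1 i i').2.2).trans (h2 i'),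
      hs.2.2.2.1 i⟩

lemma cho_inv (j : Fin 2) (l : List (Fin 2)) :
    (∀ i, (act μ f A a₀ b₀ l).1 i ≤ (cho μ f A a₀ b₀ j l).1 i) ∧
    (∀ i, (cho μ f A a₀ b₀ j l).1 i ≤ (cho μ f A a₀ b₀ j l).2 i) ∧
    (∀ i, (cho μ f A a₀ b₀ j l).2 i ≤ (act μ f A a₀ b₀ l).2 i) ∧
    (∫ y in rect (cho μ f A a₀ b₀ j l).1 (cho μ f A a₀ b₀ j l).2, (f y - A) ∂μ = 0) := by
  obtain ⟨h0, h1, h2, h3⟩ := act_inv μ f A a₀ b₀ hμ hfi hab hroot l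
  have hs := split_main μ f A hμ hfi (act μ f A a₀ b₀ l) (kOf n l.length) h1 h3
  exact ⟨fun i => (hs.1 j i).1, fun i => (hs.1 j i).2.1, fun i => (hs.1 j i).2.2,
    hs.2.2.1 j⟩

lemma cho_subset_act (j : Fin 2) (l : List (Fin 2)) :
    rect (cho μ f A a₀ b₀ j l).1 (cho μ f A a₀ b₀ j l).2
      ⊆ rect (act μ f A a₀ b₀ l).1 (act μ f A a₀ b₀ l).2 := by
  obtain ⟨h0, _, h2, _⟩ := cho_inv μ f A a₀ b₀ hμ hfi hab hroot j l
  exact rect_mono h0 h2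

lemma act_cons_subset (i : Fin 2) (l : List (Fin 2)) :
    rect (act μ f A a₀ b₀ (i :: l)).1 (act μ f A a₀ b₀ (i :: l)).2
      ⊆ rect (act μ f A a₀ b₀ l).1 (act μ f A a₀ b₀ l).2 := by
  obtain ⟨h0, h1, h2, h3⟩ := act_inv μ f A a₀ b₀ hμ hfi hab hroot l
  have hs := split_main μ f A hμ hfi (act μ f A a₀ b₀ l) (kOf n l.length) h1 h3
  exact rect_mono (fun i' => (hs.2.1 i i').1) (fun i' => (hs.2.1 i i').2.2)

lemma act_suffix_subset : ∀ l' l : List (Fin 2), l <:+ l' →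
    rect (act μ f A a₀ b₀ l').1 (act μ f A a₀ b₀ l').2
      ⊆ rect (act μ f A a₀ b₀ l).1 (act μ f A a₀ b₀ l).2 := by
  intro l'
  induction l' with
  | nil => intro l hl; rw [List.suffix_nil.1 hl]
  | cons i t ih =>
    intro l hl
    rcases List.suffix_cons_iff.1 hl with rfl | hl'
    · exact fun y hy => hy
    · exact (act_cons_subset μ f A a₀ b₀ hμ hfi hab hroot i t).trans (ih l hl')

lemma act_disj_or_suffix : ∀ l' l : List (Fin 2), l <:+ l' ∨ l' <:+ l ∨
    Disjoint (rect (act μ f A a₀ b₀ l).1 (act μ f A a₀ b₀ l).2)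
      (rect (act μ f A a₀ b₀ l').1 (act μ f A a₀ b₀ l').2) := by
  intro l'
  induction l' with
  | nil => intro l; right; left; exact List.nil_suffix
  | cons i' t' ih =>
    intro l
    rcases ih l with h | h | h
    · -- l <:+ t'
      exact Or.inl (h.trans (List.suffix_cons i' t'))
    · -- t' <:+ l
      rcases eq_or_ne t' l with rfl | hne
      · exact Or.inl (List.suffix_cons i' t')
      · obtain ⟨u, hu⟩ := h
        have hune : u ≠ [] := by
          intro h0; rw [h0, List.nil_append] at hu; exact hne hu
        rcases List.eq_nil_or_concat u with rfl | ⟨u₁, i₂, rfl⟩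
        · exact absurd rfl hune
        · have hsuf : (i₂ :: t') <:+ l := ⟨u₁, by rw [← hu]; simp⟩
          rcases eq_or_ne i₂ i' with rfl | hii
          · right; left; exact hsuf
          · right; right
            obtain ⟨h0, h1, h2, h3⟩ := act_inv μ f A a₀ b₀ hμ hfi hab hroot t'
            have hs := split_main μ f A hμ hfi (act μ f A a₀ b₀ t') (kOf n t'.length) h1 h3
            have hdisj := hs.2.2.2.2.2.2.2.2.1 i₂ i' hii
            have hl : rect (act μ f A a₀ b₀ l).1 (act μ f A a₀ b₀ l).2
                ⊆ rect (act μ f A a₀ b₀ (i₂ :: t')).1 (act μ f A a₀ b₀ (i₂ :: t')).2 :=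
              act_suffix_subset μ f A a₀ b₀ hμ hfi hab hroot l _ hsuf
            exact hdisj.mono hl (le_refl _)
    · exact Or.inr (Or.inr (h.mono_right
        (act_cons_subset μ f A a₀ b₀ hμ hfi hab hroot i' t')))

lemma cho_disjoint : ∀ (j j' : Fin 2) (l l' : List (Fin 2)), (j, l) ≠ (j', l') →
    Disjoint (rect (cho μ f A a₀ b₀ j l).1 (cho μ f A a₀ b₀ j l).2)
      (rect (cho μ f A a₀ b₀ j' l').1 (cho μ f A a₀ b₀ j' l').2) := by
  have key : ∀ (j j' : Fin 2) (l l' : List (Fin 2)), l <:+ l' → l ≠ l' →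
      Disjoint (rect (cho μ f A a₀ b₀ j l).1 (cho μ f A a₀ b₀ j l).2)
        (rect (cho μ f A a₀ b₀ j' l').1 (cho μ f A a₀ b₀ j' l').2) := by
    intro j j' l l' hsuf hne
    obtain ⟨u, hu⟩ := hsuf
    have hune : u ≠ [] := by
      intro h0; rw [h0, List.nil_append] at hu; exact hne hu
    rcases List.eq_nil_or_concat u with rfl | ⟨u₁, i₂, rfl⟩
    · exact absurd rfl hune
    · have hsuf2 : (i₂ :: l) <:+ l' := ⟨u₁, by rw [← hu]; simp⟩
      obtain ⟨h0, h1, h2, h3⟩ := act_inv μ f A a₀ b₀ hμ hfi hab hroot l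
      have hs := split_main μ f A hμ hfi (act μ f A a₀ b₀ l) (kOf n l.length) h1 h3
      have hdisj := hs.2.2.2.2.2.2.2.2.2 j i₂
      refine hdisj.mono (fun y hy => hy) ?_
      exact ((cho_subset_act μ f A a₀ b₀ hμ hfi hab hroot j' l').trans
        (act_suffix_subset μ f A a₀ b₀ hμ hfi hab hroot l' _ hsuf2))
  intro j j' l l' hne
  rcases eq_or_ne l l' with rfl | hll
  · have hjj : j ≠ j' := fun h => hne (by rw [h])
    obtain ⟨h0, h1, h2, h3⟩ := act_inv μ f A a₀ b₀ hμ hfi hab hroot l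
    have hs := split_main μ f A hμ hfi (act μ f A a₀ b₀ l) (kOf n l.length) h1 h3
    exact hs.2.2.2.2.2.2.2.1 j j' hjj
  · rcases act_disj_or_suffix μ f A a₀ b₀ hμ hfi hab hroot l' l with h | h | h
    · exact key j j' l l' h hll
    · exact (key j' j l' l h (Ne.symm hll)).symm
    · exact h.mono (cho_subset_act μ f A a₀ b₀ hμ hfi hab hroot j l)
        (cho_subset_act μ f A a₀ b₀ hμ hfi hab hroot j' l')

lemma act_same_length_disjoint (l l' : List (Fin 2)) (hlen : l.length = l'.length)
    (hne : l ≠ l') :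
    Disjoint (rect (act μ f A a₀ b₀ l).1 (act μ f A a₀ b₀ l).2)
      (rect (act μ f A a₀ b₀ l').1 (act μ f A a₀ b₀ l').2) := by
  rcases act_disj_or_suffix μ f A a₀ b₀ hμ hfi hab hroot l' l with h | h | h
  · exact absurd (h.eq_of_length hlen) hne
  · exact absurd (h.eq_of_length hlen.symm) (Ne.symm hne)
  · exact h

lemma stage_cover : ∀ (g : ℕ) (y : Fin n → ℝ), y ∈ rect a₀ b₀ →
    (∃ j l, y ∈ rect (cho μ f A a₀ b₀ j l).1 (cho μ f A a₀ b₀ j l).2) ∨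
    (∃ l : List (Fin 2), l.length = g ∧ y ∈ rect (act μ f A a₀ b₀ l).1 (act μ f A a₀ b₀ l).2) := by
  intro g
  induction g with
  | zero => intro y hy; exact Or.inr ⟨[], rfl, hy⟩
  | succ g ih =>
    intro y hy
    rcases ih y hy with h | ⟨l, hlen, hyl⟩
    · exact Or.inl h
    · obtain ⟨h0, h1, h2, h3⟩ := act_inv μ f A a₀ b₀ hμ hfi hab hroot l
      have hs := split_main μ f A hμ hfi (act μ f A a₀ b₀ l) (kOf n l.length) h1 h3
      rcases hs.2.2.2.2.2.2.1 hyl with ((h | h) | h) | h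
      · exact Or.inl ⟨0, l, h⟩
      · exact Or.inl ⟨1, l, h⟩
      · exact Or.inr ⟨0 :: l, by simp [hlen], h⟩
      · exact Or.inr ⟨1 :: l, by simp [hlen], h⟩

lemma act_width : ∀ (l : List (Fin 2)) (i : Fin n),
    (act μ f A a₀ b₀ l).2 i - (act μ f A a₀ b₀ l).1 i ≤ W a₀ b₀ l.length i := by
  intro l
  induction l with
  | nil => intro i; exact le_refl _
  | cons j l ih =>
    intro i
    obtain ⟨h0, h1, h2, h3⟩ := act_inv μ f A a₀ b₀ hμ hfi hab hroot l
    have hs := split_main μ f A hμ hfi (act μ f A a₀ b₀ l) (kOf n l.length) h1 h3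
    have hlen : (j :: l).length = l.length + 1 := rfl
    rw [hlen]
    show _ ≤ W a₀ b₀ (l.length + 1) i
    have hW : W a₀ b₀ (l.length + 1) i
        = if kOf n l.length = i then W a₀ b₀ l.length i / 2 else W a₀ b₀ l.length i := rfl
    rw [hW]
    rcases eq_or_ne (kOf n l.length) i with rfl | hik
    · rw [if_pos rfl]
      calc (act μ f A a₀ b₀ (j :: l)).2 (kOf n l.length)
            - (act μ f A a₀ b₀ (j :: l)).1 (kOf n l.length)
          ≤ ((act μ f A a₀ b₀ l).2 (kOf n l.length)
            - (act μ f A a₀ b₀ l).1 (kOf n l.length)) / 2 := hs.2.2.2.2.1 j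
        _ ≤ W a₀ b₀ l.length (kOf n l.length) / 2 := by
            have := ih (kOf n l.length); linarith
    · rw [if_neg hik]
      have heq := hs.2.2.2.2.2.1 j i (Ne.symm hik)
      have : (act μ f A a₀ b₀ (j :: l)).2 i - (act μ f A a₀ b₀ (j :: l)).1 i
          = (act μ f A a₀ b₀ l).2 i - (act μ f A a₀ b₀ l).1 i := heq
      rw [this]
      exact ih i

end invariants

section Wfacts

variable (hab : ∀ i, a₀ i ≤ b₀ i)

include hab

lemma W_nonneg : ∀ g i, 0 ≤ W a₀ b₀ g i := by
  intro g
  induction g with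
  | zero => intro i; simpa [W] using sub_nonneg.2 (hab i)
  | succ g ih =>
    intro i
    show (0:ℝ) ≤ if kOf n g = i then W a₀ b₀ g i / 2 else W a₀ b₀ g i
    rcases eq_or_ne (kOf n g) i with h | h
    · rw [if_pos h]; linarith [ih i]
    · rw [if_neg h]; exact ih i

lemma W_succ_le (g : ℕ) (i : Fin n) : W a₀ b₀ (g + 1) i ≤ W a₀ b₀ g i := by
  show (if kOf n g = i then W a₀ b₀ g i / 2 else W a₀ b₀ g i) ≤ _
  rcases eq_or_ne (kOf n g) i with h | h
  · rw [if_pos h]; linarith [W_nonneg a₀ b₀ hab g i]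
  · rw [if_neg h]

lemma W_anti {g g' : ℕ} (h : g ≤ g') (i : Fin n) : W a₀ b₀ g' i ≤ W a₀ b₀ g i := by
  induction g' with
  | zero => rw [Nat.le_zero.1 h]
  | succ g' ih =>
    rcases Nat.lt_or_ge g (g' + 1) with h' | h'
    · exact (W_succ_le a₀ b₀ hab g' i).trans (ih (Nat.lt_succ_iff.1 h'))
    · rw [Nat.le_antisymm h h']

omit hab in
lemma W_hit (g : ℕ) (i : Fin n) (hg : g % n = i.val) :
    W a₀ b₀ (g + 1) i ≤ W a₀ b₀ g i / 2 := by
  have hk : kOf n g = i := by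
    apply Fin.ext
    exact hg
  show (if kOf n g = i then W a₀ b₀ g i / 2 else W a₀ b₀ g i) ≤ _
  rw [if_pos hk]

lemma W_cycle : ∀ (m : ℕ) (i : Fin n), W a₀ b₀ (n * m) i ≤ (b₀ i - a₀ i) / 2 ^ m := by
  intro m
  induction m with
  | zero => intro i; simp [W]
  | succ m ih =>
    intro i
    have hstage : (n * m + i.val) % n = i.val := by
      rw [Nat.add_comm, Nat.add_mul_mod_self_left, Nat.mod_eq_of_lt i.isLt]
    have h1 : W a₀ b₀ (n * m + i.val + 1) i ≤ W a₀ b₀ (n * m + i.val) i / 2 :=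
      W_hit a₀ b₀ (n * m + i.val) i hstage
    have h2 : W a₀ b₀ (n * m + i.val) i ≤ W a₀ b₀ (n * m) i :=
      W_anti a₀ b₀ hab (Nat.le_add_right _ _) i
    have h3 : W a₀ b₀ (n * (m + 1)) i ≤ W a₀ b₀ (n * m + i.val + 1) i := by
      apply W_anti a₀ b₀ hab
      have : i.val + 1 ≤ n := i.isLt
      calc n * m + i.val + 1 ≤ n * m + n := by omega
        _ = n * (m + 1) := by ring
    calc W a₀ b₀ (n * (m + 1)) i ≤ W a₀ b₀ (n * m + i.val) i / 2 := h3.trans h1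
      _ ≤ W a₀ b₀ (n * m) i / 2 := by linarith
      _ ≤ ((b₀ i - a₀ i) / 2 ^ m) / 2 := by linarith [ih i]
      _ = (b₀ i - a₀ i) / 2 ^ (m + 1) := by ring

lemma W_small : ∀ ε : ℝ, 0 < ε → ∃ g₀ : ℕ, ∀ g ≥ g₀, ∀ i, W a₀ b₀ g i < ε := by
  intro ε hε
  set M : ℝ := (∑ i : Fin n, (b₀ i - a₀ i)) + 1 with hM
  have hMpos : 0 < M := by
    have : (0:ℝ) ≤ ∑ i : Fin n, (b₀ i - a₀ i) :=
      Finset.sum_nonneg fun i _ => sub_nonneg.2 (hab i)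
    linarith
  have hle : ∀ i, b₀ i - a₀ i ≤ M := by
    intro i
    have : b₀ i - a₀ i ≤ ∑ i : Fin n, (b₀ i - a₀ i) :=
      Finset.single_le_sum (fun i _ => sub_nonneg.2 (hab i)) (Finset.mem_univ i)
    linarith
  obtain ⟨m, hm⟩ := pow_unbounded_of_one_lt (M / ε) (by norm_num : (1:ℝ) < 2)
  refine ⟨n * m, fun g hg i => ?_⟩
  have h1 : W a₀ b₀ g i ≤ W a₀ b₀ (n * m) i := W_anti a₀ b₀ hab hg i
  have h2 : W a₀ b₀ (n * m) i ≤ (b₀ i - a₀ i) / 2 ^ m := W_cycle a₀ b₀ hab m i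
  have h3 : (b₀ i - a₀ i) / 2 ^ m ≤ M / 2 ^ m := by
    have h2m : (0:ℝ) < 2 ^ m := by positivity
    gcongr
    exact hle i
  have h4 : M / 2 ^ m < ε := by
    rw [div_lt_iff₀ (by positivity : (0:ℝ) < 2 ^ m)]
    rw [div_lt_iff₀ hε] at hm
    linarith
  linarith

end Wfacts



section FinalEstimates

variable [IsFiniteMeasure μ]
variable (hμ : μ ≪ volume) (hfi : Integrable f μ)
  (hab : ∀ i, a₀ i ≤ b₀ i) (hroot : ∫ y in rect a₀ b₀, (f y - A) ∂μ ≤ 0)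

/-- The per-rectangle Calderón–Zygmund inequality. -/
lemma rect_bound {Z : Set (Fin n → ℝ)} (hZm : MeasurableSet Z) {ε : ℝ} (hε : 0 < ε)
    (hZf : ∀ y ∈ Z, A + ε ≤ f y) (hf0 : ∀ y, 0 ≤ f y)
    {R : Set (Fin n → ℝ)} (hRm : MeasurableSet R)
    (hRint : ∫ y in R, (f y - A) ∂μ ≤ 0) (hA0 : 0 ≤ A) (hfi' : Integrable f μ) :
    ENNReal.ofReal ε * μ (R ∩ Z) ≤ ENNReal.ofReal A * μ (R \ Z) := by
  have gint : Integrable (fun y => f y - A) μ := hfi'.sub (integrable_const A)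
  have hfin1 : μ (R ∩ Z) ≠ ⊤ := measure_ne_top μ _
  have hfin2 : μ (R \ Z) ≠ ⊤ := measure_ne_top μ _
  have hsplit : (∫ y in R ∩ Z, (f y - A) ∂μ) + ∫ y in R \ Z, (f y - A) ∂μ
      = ∫ y in R, (f y - A) ∂μ := integral_inter_add_diff hZm gint.integrableOn
  have h1 : ε * (μ (R ∩ Z)).toReal ≤ ∫ y in R ∩ Z, (f y - A) ∂μ := by
    rw [mul_comm, ← smul_eq_mul, ← measureReal_def]
    apply setIntegral_ge_of_const_le (hRm.inter hZm) hfin1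
    · intro x hx
      have := hZf x hx.2
      linarith
    · exact gint.integrableOn
  have h2 : (-A) * (μ (R \ Z)).toReal ≤ ∫ y in R \ Z, (f y - A) ∂μ := by
    rw [mul_comm, ← smul_eq_mul, ← measureReal_def]
    apply setIntegral_ge_of_const_le (hRm.diff hZm) hfin2
    · intro x _
      have := hf0 x
      linarith
    · exact gint.integrableOn
  have hreal : ε * (μ (R ∩ Z)).toReal ≤ A * (μ (R \ Z)).toReal := by linarith
  calc ENNReal.ofReal ε * μ (R ∩ Z)
      = ENNReal.ofReal (ε * (μ (R ∩ Z)).toReal) := by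
        rw [ENNReal.ofReal_mul hε.le, ENNReal.ofReal_toReal hfin1]
    _ ≤ ENNReal.ofReal (A * (μ (R \ Z)).toReal) := ENNReal.ofReal_le_ofReal hreal
    _ = ENNReal.ofReal A * μ (R \ Z) := by
        rw [ENNReal.ofReal_mul hA0, ENNReal.ofReal_toReal hfin2]

include hμ hfi hab hroot in
lemma Z_null (hfm : Measurable f) (hf0 : ∀ y, 0 ≤ f y) (hA0 : 0 ≤ A)
    {ε : ℝ} (hε : 0 < ε) :
    μ (({y ∈ rect a₀ b₀ | A + ε ≤ f y})
      \ ⋃ p : Fin 2 × List (Fin 2),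
          rect (cho μ f A a₀ b₀ p.1 p.2).1 (cho μ f A a₀ b₀ p.1 p.2).2) = 0 := by
  set U₀ : Set (Fin n → ℝ) := ⋃ p : Fin 2 × List (Fin 2),
      rect (cho μ f A a₀ b₀ p.1 p.2).1 (cho μ f A a₀ b₀ p.1 p.2).2 with hU₀
  have hU₀m : MeasurableSet U₀ :=
    MeasurableSet.iUnion fun p => measurableSet_rect _ _
  set Z : Set (Fin n → ℝ) := ({y ∈ rect a₀ b₀ | A + ε ≤ f y}) \ U₀ with hZ
  have hZm : MeasurableSet Z := by
    apply MeasurableSet.diff _ hU₀m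
    exact (measurableSet_rect a₀ b₀).inter (measurableSet_le measurable_const hfm)
  have hZfin : μ Z ≠ ⊤ := measure_ne_top μ _
  -- main estimate for every η ≠ 0
  have main : ∀ η : ℝ≥0∞, η ≠ 0 → ENNReal.ofReal ε * μ Z ≤ ENNReal.ofReal A * η := by
    intro η hη
    obtain ⟨U, hZU, hUopen, hUle⟩ := Set.exists_isOpen_le_add Z μ hη
    have hUZ : μ (U \ Z) ≤ η := by
      rw [measure_diff hZU hZm.nullMeasurableSet hZfin]
      exact tsub_le_iff_left.2 hUle
    -- the stage-g good active rectangles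
    set Sg : ℕ → Set (List (Fin 2)) := fun g =>
      {l | l.length = g ∧
        rect (act μ f A a₀ b₀ l).1 (act μ f A a₀ b₀ l).2 ⊆ U} with hSg
    set V : ℕ → Set (Fin n → ℝ) := fun g =>
      Z ∩ ⋃ l ∈ Sg g, rect (act μ f A a₀ b₀ l).1 (act μ f A a₀ b₀ l).2 with hV
    -- V is monotone
    have hVmono : Monotone V := by
      apply monotone_nat_of_le_succ
      intro g y hy
      obtain ⟨hyZ, hyU⟩ := hy
      simp only [Set.mem_iUnion] at hyU
      obtain ⟨l, ⟨hlen, hlU⟩, hyl⟩ := hyU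
      have hyI : y ∈ rect a₀ b₀ := hyZ.1.1
      have hynotcho : y ∉ U₀ := hyZ.2
      rcases stage_cover μ f A a₀ b₀ hμ hfi hab hroot (g+1) y hyI with h | ⟨l', hlen', hyl'⟩
      · exfalso
        obtain ⟨j, l'', hj⟩ := h
        exact hynotcho (Set.mem_iUnion.2 ⟨(j, l''), hj⟩)
      · refine ⟨hyZ, Set.mem_iUnion.2 ⟨l', Set.mem_iUnion.2 ⟨⟨hlen', ?_⟩, hyl'⟩⟩⟩
        -- act l' ⊆ act l  since they intersect and l' is longer
        rcases act_disj_or_suffix μ f A a₀ b₀ hμ hfi hab hroot l' l with h | h | h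
        · exact (act_suffix_subset μ f A a₀ b₀ hμ hfi hab hroot l' l h).trans hlU
        · exfalso
          have := h.length_le
          omega
        · exfalso
          exact Set.disjoint_left.1 h hyl hyl'
    -- V exhausts Z
    have hVunion : ⋃ g, V g = Z := by
      apply Set.Subset.antisymm
      · exact Set.iUnion_subset fun g => Set.inter_subset_left
      · intro y hy
        have hyI : y ∈ rect a₀ b₀ := hy.1.1
        have hynotcho : y ∉ U₀ := hy.2
        have hyU : y ∈ U := hZU hy
        obtain ⟨δ, hδ, hball⟩ := Metric.isOpen_iff.1 hUopen y hyU
        obtain ⟨g₀, hg₀⟩ := W_small a₀ b₀ hab δ hδ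
        rcases stage_cover μ f A a₀ b₀ hμ hfi hab hroot g₀ y hyI with h | ⟨l, hlen, hyl⟩
        · exfalso
          obtain ⟨j, l'', hj⟩ := h
          exact hynotcho (Set.mem_iUnion.2 ⟨(j, l''), hj⟩)
        · refine Set.mem_iUnion.2 ⟨g₀, hy, Set.mem_iUnion.2 ⟨l, Set.mem_iUnion.2 ⟨⟨hlen, ?_⟩, hyl⟩⟩⟩
          refine Set.Subset.trans ?_ hball
          intro z hz
          rw [Metric.mem_ball]
          rw [dist_pi_lt_iff hδ]
          intro i
          rw [Real.dist_eq, abs_lt]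
          rw [mem_rect] at hz hyl
          have h1 := hz i
          have h2 := hyl i
          have h3 : (act μ f A a₀ b₀ l).2 i - (act μ f A a₀ b₀ l).1 i ≤ W a₀ b₀ l.length i :=
            act_width μ f A a₀ b₀ hμ hfi hab hroot l i
          have h4 : W a₀ b₀ l.length i < δ := by
            rw [hlen]; exact hg₀ g₀ (le_refl _) i
          constructor <;> linarith
    -- per-stage estimate
    have hstage : ∀ g, ENNReal.ofReal ε * μ (V g) ≤ ENNReal.ofReal A * μ (U \ Z) := by
      intro g
      have hScount : (Sg g).Countable := Set.to_countable _
      have hSdisj : (Sg g).PairwiseDisjoint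
          (fun l => rect (act μ f A a₀ b₀ l).1 (act μ f A a₀ b₀ l).2) := by
        intro l hl l' hl' hne
        exact act_same_length_disjoint μ f A a₀ b₀ hμ hfi hab hroot l l'
          (hl.1.trans hl'.1.symm) hne
      have hVsub : V g ⊆ ⋃ l ∈ Sg g,
          (rect (act μ f A a₀ b₀ l).1 (act μ f A a₀ b₀ l).2 ∩ Z) := by
        intro y hy
        obtain ⟨hyZ, hyU⟩ := hy
        simp only [Set.mem_iUnion] at hyU ⊢
        obtain ⟨l, hl, hyl⟩ := hyU
        exact ⟨l, hl, hyl, hyZ⟩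
      have step1 : μ (V g) ≤ ∑' l : Sg g,
          μ (rect (act μ f A a₀ b₀ l).1 (act μ f A a₀ b₀ (l : List (Fin 2))).2 ∩ Z) :=
        (measure_mono hVsub).trans (measure_biUnion_le μ hScount _)
      have step2 : ∀ l : Sg g,
          ENNReal.ofReal ε * μ (rect (act μ f A a₀ b₀ l).1 (act μ f A a₀ b₀ (l : List (Fin 2))).2 ∩ Z)
          ≤ ENNReal.ofReal A * μ (rect (act μ f A a₀ b₀ l).1 (act μ f A a₀ b₀ (l : List (Fin 2))).2 \ Z) := by
        intro l
        apply rect_bound μ f A hZm hε ?_ hf0 (measurableSet_rect _ _) ?_ hA0 hfi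
        · intro y hy
          exact hy.1.2
        · exact (act_inv μ f A a₀ b₀ hμ hfi hab hroot l).2.2.2
      have step3 : (∑' l : Sg g,
          μ (rect (act μ f A a₀ b₀ l).1 (act μ f A a₀ b₀ (l : List (Fin 2))).2 \ Z))
          = μ (⋃ l ∈ Sg g, (rect (act μ f A a₀ b₀ l).1 (act μ f A a₀ b₀ (l : List (Fin 2))).2 \ Z)) := by
        rw [measure_biUnion hScount
          (hSdisj.mono_on fun l hl => Set.diff_subset)
          (fun l hl => (measurableSet_rect _ _).diff hZm)]
      have hsub : (⋃ l ∈ Sg g,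
          (rect (act μ f A a₀ b₀ l).1 (act μ f A a₀ b₀ l).2 \ Z)) ⊆ U \ Z :=
        Set.iUnion₂_subset fun l hl => Set.diff_subset_diff_left hl.2
      calc ENNReal.ofReal ε * μ (V g)
          ≤ ENNReal.ofReal ε * ∑' l : Sg g,
            μ (rect (act μ f A a₀ b₀ l).1 (act μ f A a₀ b₀ (l : List (Fin 2))).2 ∩ Z) :=
            mul_le_mul_right step1 _
        _ = ∑' l : Sg g, ENNReal.ofReal ε *
            μ (rect (act μ f A a₀ b₀ l).1 (act μ f A a₀ b₀ (l : List (Fin 2))).2 ∩ Z) :=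
            ENNReal.tsum_mul_left.symm
        _ ≤ ∑' l : Sg g, ENNReal.ofReal A *
            μ (rect (act μ f A a₀ b₀ l).1 (act μ f A a₀ b₀ (l : List (Fin 2))).2 \ Z) :=
            ENNReal.tsum_le_tsum step2
        _ = ENNReal.ofReal A * ∑' l : Sg g,
            μ (rect (act μ f A a₀ b₀ l).1 (act μ f A a₀ b₀ (l : List (Fin 2))).2 \ Z) :=
            ENNReal.tsum_mul_left
        _ = ENNReal.ofReal A * μ (⋃ l ∈ Sg g,
            (rect (act μ f A a₀ b₀ l).1 (act μ f A a₀ b₀ l).2 \ Z)) := by rw [step3]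
        _ ≤ ENNReal.ofReal A * μ (U \ Z) := mul_le_mul_right (measure_mono hsub) _
    -- pass to the limit
    have hlim : Filter.Tendsto (fun g => μ (V g)) Filter.atTop (nhds (μ Z)) := by
      have := MeasureTheory.tendsto_measure_iUnion_atTop (μ := μ) hVmono
      rwa [hVunion] at this
    have hlim2 : Filter.Tendsto (fun g => ENNReal.ofReal ε * μ (V g)) Filter.atTop
        (nhds (ENNReal.ofReal ε * μ Z)) :=
      ENNReal.Tendsto.const_mul hlim (Or.inr ENNReal.ofReal_ne_top)
    have hfinal : ENNReal.ofReal ε * μ Z ≤ ENNReal.ofReal A * μ (U \ Z) :=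
      le_of_tendsto hlim2 (Filter.Eventually.of_forall hstage)
    exact hfinal.trans (mul_le_mul_right hUZ _)
  -- conclude μ Z = 0
  by_contra hne
  have hεZ : ENNReal.ofReal ε * μ Z ≠ 0 := by
    apply mul_ne_zero _ hne
    simpa using hε
  have hεZfin : ENNReal.ofReal ε * μ Z ≠ ⊤ :=
    ENNReal.mul_ne_top ENNReal.ofReal_ne_top hZfin
  set x := ENNReal.ofReal ε * μ Z with hx
  have hA' : (ENNReal.ofReal A) ≠ ⊤ := ENNReal.ofReal_ne_top
  -- choose η small enough
  obtain ⟨η, hη0, hηlt⟩ : ∃ η : ℝ≥0∞, η ≠ 0 ∧ ENNReal.ofReal A * η < x := by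
    rcases eq_or_ne (ENNReal.ofReal A) 0 with hA0' | hA0'
    · exact ⟨1, one_ne_zero, by rw [hA0', zero_mul]; exact pos_iff_ne_zero.2 hεZ⟩
    · refine ⟨x / 2 / ENNReal.ofReal A, ?_, ?_⟩
      · intro h
        rcases ENNReal.div_eq_zero_iff.1 h with h1 | h1
        · rcases ENNReal.div_eq_zero_iff.1 h1 with h2 | h2
          · exact hεZ h2
          · exact (by norm_num : (2:ℝ≥0∞) ≠ ⊤) h2
        · exact hA' h1
      · rw [ENNReal.mul_div_cancel hA0' hA']
        exact ENNReal.half_lt_self hεZ hεZfin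
  exact absurd (main η hη0) (not_le.2 hηlt)

include hμ hfi hab hroot in
lemma cho_cover_null (hfm : Measurable f) (hf0 : ∀ y, 0 ≤ f y) (hA0 : 0 ≤ A) :
    μ (({y ∈ rect a₀ b₀ | A < f y})
      \ ⋃ p : Fin 2 × List (Fin 2),
          rect (cho μ f A a₀ b₀ p.1 p.2).1 (cho μ f A a₀ b₀ p.1 p.2).2) = 0 := by
  set U₀ : Set (Fin n → ℝ) := ⋃ p : Fin 2 × List (Fin 2),
      rect (cho μ f A a₀ b₀ p.1 p.2).1 (cho μ f A a₀ b₀ p.1 p.2).2 with hU₀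
  have hsub : ({y ∈ rect a₀ b₀ | A < f y}) \ U₀
      ⊆ ⋃ m : ℕ, (({y ∈ rect a₀ b₀ | A + 1 / ((m : ℝ) + 1) ≤ f y}) \ U₀) := by
    rintro y ⟨⟨hyI, hyf⟩, hyU⟩
    obtain ⟨m, hm⟩ := exists_nat_one_div_lt (sub_pos.2 hyf)
    refine Set.mem_iUnion.2 ⟨m, ⟨⟨hyI, ?_⟩, hyU⟩⟩
    linarith
  refine measure_mono_null hsub (measure_iUnion_null fun m => ?_)
  exact Z_null μ f A a₀ b₀ hμ hfi hab hroot hfm hf0 hA0 (by positivity)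


end FinalEstimates

end RSaux

open RSaux

/-- Weak-type `(1,1)` estimate from the multidimensional rising sun lemma: for
nonnegative `f ∈ L¹(μ)` with `μ`-mean over the rectangle `I₀` at most `A > 0`,
the set `{f > A}` is covered mod `μ`-null sets by countably many pairwise
disjoint subrectangles with `μ`-mean of `f` exactly `A`, whence
`μ({x ∈ I₀ : f x > A}) ≤ (1/A) ∫_{I₀} f dμ`. -/
theorem rising_sun_weak_type_estimate {n : ℕ}
    (μ : Measure (Fin n → ℝ)) [IsFiniteMeasure μ] (hμ : μ ≪ volume)
    (a₀ b₀ : Fin n → ℝ) (hI₀ : ∀ i, a₀ i < b₀ i) (hμI₀ : μ (rect a₀ b₀) ≠ 0)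
    (f : (Fin n → ℝ) → ℝ) (hf_nonneg : ∀ x, 0 ≤ f x) (hf : Integrable f μ)
    (A : ℝ) (hApos : 0 < A) (hA : ⨍ x in rect a₀ b₀, f x ∂μ ≤ A) :
    ∃ (c d : ℕ → Fin n → ℝ) (N : Set ℕ),
      (∀ j ∈ N, rect (c j) (d j) ⊆ rect a₀ b₀) ∧
      (N.PairwiseDisjoint fun j => rect (c j) (d j)) ∧
      (∀ j ∈ N, ⨍ x in rect (c j) (d j), f x ∂μ = A) ∧
      μ ({x ∈ rect a₀ b₀ | f x > A} \ ⋃ j ∈ N, rect (c j) (d j)) = 0 ∧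
      μ {x ∈ rect a₀ b₀ | f x > A} ≤
        ENNReal.ofReal ((1 / A) * ∫ x in rect a₀ b₀, f x ∂μ) := by
  classical
  have hμI₀top : μ (rect a₀ b₀) ≠ ⊤ := measure_ne_top μ _
  have htoR : ((μ (rect a₀ b₀)).toReal) ≠ 0 := ENNReal.toReal_ne_zero.2 ⟨hμI₀, hμI₀top⟩
  have htoRpos : 0 < (μ (rect a₀ b₀)).toReal :=
    lt_of_le_of_ne ENNReal.toReal_nonneg (Ne.symm htoR)
  rcases Nat.eq_zero_or_pos n with hn | hn
  · -- degenerate case n = 0 : the set {f > A} is empty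
    subst hn
    have hEempty : {x ∈ rect a₀ b₀ | f x > A} = ∅ := by
      ext x
      simp only [Set.mem_setOf_eq, Set.mem_empty_iff_false, iff_false, not_and]
      intro hxI
      have hxd : x = (default : Fin 0 → ℝ) := Subsingleton.elim _ _
      have havg : ⨍ y in rect a₀ b₀, f y ∂μ = f x := by
        rw [setAverage_eq]
        have hconst : ∫ y in rect a₀ b₀, f y ∂μ = (μ (rect a₀ b₀)).toReal • f x := by
          have : ∀ y, f y = f x := fun y => by
            rw [Subsingleton.elim y x]
          rw [show f = fun _ => f x from funext this]
          exact setIntegral_const (f x)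
        rw [hconst, smul_smul, measureReal_def, inv_mul_cancel₀ htoR, one_smul]
      rw [havg] at hA
      exact not_lt.2 hA
    refine ⟨fun _ => a₀, fun _ => b₀, ∅, by simp, by simp, by simp, ?_, ?_⟩
    · rw [hEempty]
      simp
    · rw [hEempty]
      simp
  · -- main case n ≥ 1
    haveI : NeZero n := ⟨hn.ne'⟩
    obtain ⟨f₀, hf₀m, hff₀⟩ := hf.aestronglyMeasurable
    set f' : (Fin n → ℝ) → ℝ := fun y => max (f₀ y) 0 with hf'def
    have hf'm : Measurable f' := hf₀m.measurable.max measurable_const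
    have hff' : f =ᵐ[μ] f' := by
      filter_upwards [hff₀] with x hx
      rw [hf'def]
      simp only
      rw [← hx]
      exact (max_eq_left (hf_nonneg x)).symm
    have hfi' : Integrable f' μ := hf.congr hff'
    have hf0' : ∀ y, 0 ≤ f' y := fun y => le_max_right _ _
    have hab : ∀ i, a₀ i ≤ b₀ i := fun i => (hI₀ i).le
    have hint_eq : ∫ y in rect a₀ b₀, f' y ∂μ = ∫ y in rect a₀ b₀, f y ∂μ :=
      setIntegral_congr_ae (measurableSet_rect a₀ b₀) (hff'.mono fun x hx _ => hx.symm)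
    have hIf : ∫ y in rect a₀ b₀, f y ∂μ ≤ A * (μ (rect a₀ b₀)).toReal := by
      rw [setAverage_eq, smul_eq_mul] at hA
      calc ∫ y in rect a₀ b₀, f y ∂μ
          = (μ (rect a₀ b₀)).toReal
            * ((μ (rect a₀ b₀)).toReal⁻¹ * ∫ y in rect a₀ b₀, f y ∂μ) := by
            field_simp
        _ ≤ (μ (rect a₀ b₀)).toReal * A := mul_le_mul_of_nonneg_left hA htoRpos.le
        _ = A * (μ (rect a₀ b₀)).toReal := mul_comm _ _
    have hroot : ∫ y in rect a₀ b₀, (f' y - A) ∂μ ≤ 0 := by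
      rw [integral_sub hfi'.integrableOn (integrable_const A).integrableOn,
        setIntegral_const, smul_eq_mul, hint_eq, measureReal_def]
      linarith
    -- enumeration of the chosen rectangles
    set pf : ℕ → Fin 2 × List (Fin 2) :=
      fun j => (Encodable.decode₂ (Fin 2 × List (Fin 2)) j).getD (0, []) with hpfdef
    set cc : ℕ → Fin n → ℝ := fun j => (cho μ f' A a₀ b₀ (pf j).1 (pf j).2).1 with hccdef
    set dd : ℕ → Fin n → ℝ := fun j => (cho μ f' A a₀ b₀ (pf j).1 (pf j).2).2 with hdddef
    set N : Set ℕ := {j | (Encodable.decode₂ (Fin 2 × List (Fin 2)) j).isSome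
      ∧ μ (rect (cc j) (dd j)) ≠ 0} with hNdef
    have hpf_enc : ∀ p : Fin 2 × List (Fin 2), pf (Encodable.encode p) = p := by
      intro p
      rw [hpfdef]
      simp [Encodable.decode₂_encode]
    have hNj : ∀ j ∈ N, Encodable.encode (pf j) = j := by
      intro j hj
      obtain ⟨p, hp⟩ := Option.isSome_iff_exists.1 hj.1
      have h1 : pf j = p := by rw [hpfdef]; simp [hp]
      rw [h1]
      exact Encodable.mem_decode₂.1 hp
    -- basic facts about chosen rectangles
    have hchosub : ∀ (j' : Fin 2) (l : List (Fin 2)),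
        rect (cho μ f' A a₀ b₀ j' l).1 (cho μ f' A a₀ b₀ j' l).2 ⊆ rect a₀ b₀ := by
      intro j' l
      have h1 := cho_inv μ f' A a₀ b₀ hμ hfi' hab hroot j' l
      have h2 := act_inv μ f' A a₀ b₀ hμ hfi' hab hroot l
      exact (rect_mono h1.1 h1.2.2.1).trans (rect_mono h2.1 h2.2.2.1)
    have hchoint : ∀ (j' : Fin 2) (l : List (Fin 2)),
        ∫ y in rect (cho μ f' A a₀ b₀ j' l).1 (cho μ f' A a₀ b₀ j' l).2, (f' y - A) ∂μ = 0 :=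
      fun j' l => (cho_inv μ f' A a₀ b₀ hμ hfi' hab hroot j' l).2.2.2
    have hNsub : ∀ j ∈ N, rect (cc j) (dd j) ⊆ rect a₀ b₀ := fun j _ => hchosub _ _
    have hNdisj : N.PairwiseDisjoint fun j => rect (cc j) (dd j) := by
      intro j hj j' hj' hne
      have hpne : ((pf j).1, (pf j).2) ≠ ((pf j').1, (pf j').2) := by
        intro h
        apply hne
        have : pf j = pf j' := by
          rw [Prod.ext_iff] at h ⊢
          exact h
        rw [← hNj j hj, ← hNj j' hj', this]
      exact cho_disjoint μ f' A a₀ b₀ hμ hfi' hab hroot _ _ _ _ hpne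
    -- the average over each kept rectangle is A
    have hNavg : ∀ j ∈ N, ⨍ x in rect (cc j) (dd j), f x ∂μ = A := by
      intro j hj
      have hR0 : μ (rect (cc j) (dd j)) ≠ 0 := hj.2
      have hRtop : μ (rect (cc j) (dd j)) ≠ ⊤ := measure_ne_top μ _
      have hRt : ((μ (rect (cc j) (dd j))).toReal) ≠ 0 := ENNReal.toReal_ne_zero.2 ⟨hR0, hRtop⟩
      have hint0 : ∫ y in rect (cc j) (dd j), (f' y - A) ∂μ = 0 := hchoint _ _
      rw [integral_sub hfi'.integrableOn (integrable_const A).integrableOn,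
        setIntegral_const, smul_eq_mul, sub_eq_zero] at hint0
      have hff'R : ∫ y in rect (cc j) (dd j), f y ∂μ = ∫ y in rect (cc j) (dd j), f' y ∂μ :=
        setIntegral_congr_ae (measurableSet_rect _ _) (hff'.mono fun x hx _ => hx)
      rw [setAverage_eq, smul_eq_mul, hff'R, hint0, measureReal_def]
      field_simp
    -- coverage
    have hU₀null : μ (({y ∈ rect a₀ b₀ | A < f' y})
        \ ⋃ p : Fin 2 × List (Fin 2),
            rect (cho μ f' A a₀ b₀ p.1 p.2).1 (cho μ f' A a₀ b₀ p.1 p.2).2) = 0 :=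
      cho_cover_null μ f' A a₀ b₀ hμ hfi' hab hroot hf'm hf0' hApos.le
    have hfne : μ {x | f x ≠ f' x} = 0 := by
      have := ae_iff.1 hff'
      simpa using this
    have hJnull : μ (⋃ p : {q : Fin 2 × List (Fin 2) //
        μ (rect (cho μ f' A a₀ b₀ q.1 q.2).1 (cho μ f' A a₀ b₀ q.1 q.2).2) = 0},
        rect (cho μ f' A a₀ b₀ p.val.1 p.val.2).1 (cho μ f' A a₀ b₀ p.val.1 p.val.2).2) = 0 :=
      measure_iUnion_null fun p => p.prop
    have hcov : μ ({x ∈ rect a₀ b₀ | f x > A} \ ⋃ j ∈ N, rect (cc j) (dd j)) = 0 := by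
      refine measure_mono_null ?_
        (measure_union_null (measure_union_null hfne hU₀null) hJnull)
      · rintro x ⟨⟨hxI, hxf⟩, hxN⟩
        rcases eq_or_ne (f x) (f' x) with hfx | hfx
        · rcases Classical.em (x ∈ ⋃ p : Fin 2 × List (Fin 2),
              rect (cho μ f' A a₀ b₀ p.1 p.2).1 (cho μ f' A a₀ b₀ p.1 p.2).2) with hxU | hxU
          · obtain ⟨p, hp⟩ := Set.mem_iUnion.1 hxU
            rcases eq_or_ne (μ (rect (cho μ f' A a₀ b₀ p.1 p.2).1
                (cho μ f' A a₀ b₀ p.1 p.2).2)) 0 with h0 | h0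
            · exact Or.inr (Set.mem_iUnion.2 ⟨⟨p, h0⟩, hp⟩)
            · exfalso
              apply hxN
              have hjN : Encodable.encode p ∈ N := by
                constructor
                · rw [Encodable.decode₂_encode]
                  rfl
                · show μ (rect (cc (Encodable.encode p)) (dd (Encodable.encode p))) ≠ 0
                  rw [hccdef, hdddef]
                  simp only [hpf_enc p]
                  exact h0
              refine Set.mem_biUnion hjN ?_
              show x ∈ rect (cc (Encodable.encode p)) (dd (Encodable.encode p))
              rw [hccdef, hdddef]
              simp only [hpf_enc p]
              exact hp
          · exact Or.inl (Or.inr ⟨⟨hxI, by rw [← hfx]; exact hxf⟩, hxU⟩)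
        · exact Or.inl (Or.inl hfx)
    -- the final inequality
    have hTsub : (⋃ j ∈ N, rect (cc j) (dd j)) ⊆ rect a₀ b₀ :=
      Set.iUnion₂_subset hNsub
    have hdisj' : Pairwise (Function.onFun Disjoint fun j : ↥N => rect (cc j) (dd j)) := by
      intro j j' hne
      exact hNdisj j.2 j'.2 (fun h => hne (Subtype.ext h))
    have gint' : Integrable (fun y => f' y - A) μ := hfi'.sub (integrable_const A)
    have hTint : ∫ y in (⋃ j ∈ N, rect (cc j) (dd j)), (f' y - A) ∂μ = 0 := by
      have hiu := integral_iUnion (f := fun y => f' y - A) (μ := μ)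
        (s := fun j : ↥N => rect (cc j) (dd j))
        (fun j : ↥N => measurableSet_rect (cc j) (dd j)) hdisj'
        gint'.integrableOn
      rw [Set.biUnion_eq_iUnion, hiu]
      have : ∀ j : ↥N, ∫ y in rect (cc (j : ℕ)) (dd (j : ℕ)), (f' y - A) ∂μ = 0 :=
        fun j => hchoint _ _
      rw [tsum_congr this]
      exact tsum_zero
    have hTtop : μ (⋃ j ∈ N, rect (cc j) (dd j)) ≠ ⊤ := measure_ne_top μ _
    have hTf' : ∫ y in (⋃ j ∈ N, rect (cc j) (dd j)), f' y ∂μ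
        = (μ (⋃ j ∈ N, rect (cc j) (dd j))).toReal * A := by
      rw [integral_sub hfi'.integrableOn (integrable_const A).integrableOn,
        setIntegral_const, smul_eq_mul, sub_eq_zero] at hTint
      exact hTint
    have hTmeas : μ (⋃ j ∈ N, rect (cc j) (dd j))
        = ENNReal.ofReal ((1 / A) * ∫ y in (⋃ j ∈ N, rect (cc j) (dd j)), f' y ∂μ) := by
      rw [hTf']
      rw [show (1 / A) * ((μ (⋃ j ∈ N, rect (cc j) (dd j))).toReal * A)
          = (μ (⋃ j ∈ N, rect (cc j) (dd j))).toReal by field_simp]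
      exact (ENNReal.ofReal_toReal hTtop).symm
    have hTle : ∫ y in (⋃ j ∈ N, rect (cc j) (dd j)), f' y ∂μ ≤ ∫ y in rect a₀ b₀, f y ∂μ := by
      rw [← hint_eq]
      apply setIntegral_mono_set hfi'.integrableOn
      · exact Filter.Eventually.of_forall fun y => hf0' y
      · exact Filter.Eventually.of_forall fun y hy => hTsub hy
    have hfinal : μ {x ∈ rect a₀ b₀ | f x > A}
        ≤ ENNReal.ofReal ((1 / A) * ∫ x in rect a₀ b₀, f x ∂μ) := by
      calc μ {x ∈ rect a₀ b₀ | f x > A}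
          ≤ μ ({x ∈ rect a₀ b₀ | f x > A} ∩ ⋃ j ∈ N, rect (cc j) (dd j))
            + μ ({x ∈ rect a₀ b₀ | f x > A} \ ⋃ j ∈ N, rect (cc j) (dd j)) :=
            measure_le_inter_add_diff μ _ _
        _ = μ ({x ∈ rect a₀ b₀ | f x > A} ∩ ⋃ j ∈ N, rect (cc j) (dd j)) := by
            rw [hcov, add_zero]
        _ ≤ μ (⋃ j ∈ N, rect (cc j) (dd j)) := measure_mono Set.inter_subset_right
        _ = ENNReal.ofReal ((1 / A) * ∫ y in (⋃ j ∈ N, rect (cc j) (dd j)), f' y ∂μ) := hTmeas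
        _ ≤ ENNReal.ofReal ((1 / A) * ∫ x in rect a₀ b₀, f x ∂μ) := by
            apply ENNReal.ofReal_le_ofReal
            apply mul_le_mul_of_nonneg_left hTle
            positivity
    exact ⟨cc, dd, N, hNsub, hNdisj, hNavg, hcov, hfinal⟩
end

section
/- Let $f \in L^1([a,b])$ and $A \in \mathbb{R}$ with $\frac{1}{b-a}\int_a^b f \le A$. Define $F(x) = \int_a^x (f(t) - A)\,dt$. Then the set $U = \{x \in (a,b) : \exists y \in (x, b], F(y) > F(x)\}$ is open, and it is a countable disjoint union of intervals $(a_j, b_j)$ with $F(a_j) = F(b_j)$ (equivalently $\frac{1}{b_j - a_j}\int_{a_j}^{b_j} f = A$) except possibly when $a_j = a$, and for almost every $x \notin U$ one has $f(x) \le A$. -/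
open MeasureTheory Set Topology

private lemma open_ordConnected_eq_Ioo {s : Set ℝ} (hs : IsOpen s) (hne : s.Nonempty)
    (hbd : BddBelow s) (hbu : BddAbove s) (hoc : s.OrdConnected) :
    s = Ioo (sInf s) (sSup s) := by
  apply Subset.antisymm
  · intro x hx
    refine ⟨(csInf_le hbd hx).lt_of_ne' ?_, (le_csSup hbu hx).lt_of_ne ?_⟩
    · intro h
      rcases Metric.isOpen_iff.1 hs x hx with ⟨ε, εpos, hball⟩
      have hmem : x - ε / 2 ∈ s := by
        apply hball
        simp only [Metric.mem_ball, Real.dist_eq]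
        rw [abs_of_nonpos (by linarith)]
        linarith
      have := csInf_le hbd hmem
      rw [h] at this
      linarith
    · intro h
      rcases Metric.isOpen_iff.1 hs x hx with ⟨ε, εpos, hball⟩
      have hmem : x + ε / 2 ∈ s := by
        apply hball
        simp only [Metric.mem_ball, Real.dist_eq]
        rw [abs_of_nonneg (by linarith)]
        linarith
      have := le_csSup hbu hmem
      rw [← h] at this
      linarith
  · intro y hy
    obtain ⟨p, hp, hpy⟩ := exists_lt_of_csInf_lt hne hy.1
    obtain ⟨q, hq, hyq⟩ := exists_lt_of_lt_csSup hne hy.2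
    exact hoc.out hp hq ⟨hpy.le, hyq.le⟩

/-- The classical "rising sun" formulation of Riesz's lemma: with
`F x = ∫_a^x (f - A)`, the shadow set
`U = {x ∈ (a,b) : ∃ y ∈ (x, b], F y > F x}` is open, it decomposes into
countably many pairwise disjoint open intervals `(aⱼ, bⱼ)` with `F aⱼ = F bⱼ`
except possibly when `aⱼ = a`, and `f ≤ A` almost everywhere off `U`. -/
theorem riesz_rising_sun_shadow (a b : ℝ) (hab : a < b)
    (f : ℝ → ℝ) (hf : IntegrableOn f (Icc a b)) (A : ℝ)
    (hA : ⨍ x in Icc a b, f x ≤ A)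
    (F : ℝ → ℝ) (hF : F = fun x => ∫ t in a..x, (f t - A))
    (U : Set ℝ) (hU : U = {x ∈ Ioo a b | ∃ y ∈ Ioc x b, F y > F x}) :
    IsOpen U ∧
    ∃ (c d : ℕ → ℝ) (N : Set ℕ),
      (∀ j ∈ N, a ≤ c j ∧ c j < d j ∧ d j ≤ b) ∧
      (N.PairwiseDisjoint fun j => Ioo (c j) (d j)) ∧
      U = ⋃ j ∈ N, Ioo (c j) (d j) ∧
      (∀ j ∈ N, c j ≠ a → F (c j) = F (d j)) ∧
      (∀ᵐ x, x ∈ Icc a b \ U → f x ≤ A) := by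
  classical
  set g : ℝ → ℝ := fun t => f t - A with hg_def
  have hg : IntegrableOn g (Icc a b) := hf.sub (integrableOn_const measure_Icc_lt_top.ne)
  have hFc : ContinuousOn F (Icc a b) := by
    rw [hF, ← uIcc_of_le hab.le]
    exact intervalIntegral.continuousOn_primitive_interval (by rwa [uIcc_of_le hab.le])
  have hgi : ∀ x ∈ Icc a b, ∀ y ∈ Icc a b, IntervalIntegrable g volume x y := by
    intro x hx y hy
    rw [intervalIntegrable_iff]
    exact hg.mono_set ((uIoc_subset_uIcc).trans (uIcc_subset_Icc hx hy))
  have habIcc : a ∈ Icc a b := ⟨le_refl a, hab.le⟩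
  have hFdiff : ∀ x ∈ Icc a b, ∀ y ∈ Icc a b, F y - F x = ∫ t in x..y, g t := by
    intro x hx y hy
    rw [hF]
    simp only
    exact intervalIntegral.integral_interval_sub_left (hgi a habIcc y hy) (hgi a habIcc x hx)
  have hmemU : ∀ x, x ∈ U ↔ x ∈ Ioo a b ∧ ∃ y ∈ Ioc x b, F y > F x := by
    intro x; rw [hU]; exact Iff.rfl
  have hnotU : ∀ x, x ∈ Ioo a b → x ∉ U → ∀ y ∈ Ioc x b, F y ≤ F x := by
    intro x hx hxU y hy
    by_contra h
    push_neg at h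
    exact hxU ((hmemU x).2 ⟨hx, y, hy, h⟩)
  have hUsub : U ⊆ Ioo a b := by rw [hU]; exact sep_subset _ _
  -- openness
  have hUopen : IsOpen U := by
    rw [isOpen_iff_mem_nhds]
    intro x hx
    obtain ⟨hxab, y, hy, hFy⟩ := (hmemU x).1 hx
    have hcx : ContinuousAt F x := hFc.continuousAt (Icc_mem_nhds hxab.1 hxab.2)
    have h1 : {z | F z < F y} ∈ 𝓝 x := hcx.preimage_mem_nhds (Iio_mem_nhds hFy)
    have h2 : Ioo a b ∈ 𝓝 x := Ioo_mem_nhds hxab.1 hxab.2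
    have h3 : Iio y ∈ 𝓝 x := Iio_mem_nhds hy.1
    filter_upwards [h1, h2, h3] with z hz1 hz2 hz3
    exact (hmemU z).2 ⟨hz2, y, ⟨hz3, hy.2⟩, hz1⟩
  -- the rising sun core estimate
  have core : ∀ c d : ℝ, a ≤ c → c < d → d ≤ b → Ioo c d ⊆ U → d ∉ U →
      ∀ x ∈ Ioo c d, F x ≤ F d := by
    intro c d hac hcd hdb hsub hdU x hx
    by_contra hlt
    push_neg at hlt
    have hxab : x ∈ Icc a b := ⟨hac.trans hx.1.le, hx.2.le.trans hdb⟩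
    set S : Set ℝ := Icc x d ∩ {z | F x ≤ F z} with hS
    have hSne : S.Nonempty := ⟨x, ⟨le_refl x, hx.2.le⟩, le_refl (F x)⟩
    have hSb : BddAbove S := (bddAbove_Icc).mono inter_subset_left
    have hScl : IsClosed S := by
      have hcont : ContinuousOn F (Icc x d) := hFc.mono (Icc_subset_Icc hxab.1 hdb)
      exact hcont.preimage_isClosed_of_isClosed isClosed_Icc isClosed_Ici
    have hsmem := hScl.csSup_mem hSne hSb
    set s := sSup S with hs
    obtain ⟨⟨hxs, hsd⟩, hFs⟩ := hsmem
    have hsd' : s < d := hsd.lt_of_ne (by intro h; rw [h] at hFs; exact absurd hFs (not_le.2 hlt))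
    have hsU : s ∈ U := hsub ⟨hx.1.trans_le hxs, hsd'⟩
    obtain ⟨hsab, y, hy, hFy⟩ := (hmemU s).1 hsU
    rcases le_or_gt y d with hyd | hdy
    · have : y ∈ S := ⟨⟨hxs.trans hy.1.le, hyd⟩, hFs.trans hFy.le⟩
      exact absurd (le_csSup hSb this) (not_le.2 hy.1)
    · have hdb' : d < b := hdy.trans_le hy.2
      apply hdU
      exact (hmemU d).2 ⟨⟨lt_of_le_of_lt hac hcd, hdb'⟩, y, ⟨hdy, hy.2⟩,
        lt_trans hlt (hFs.trans_lt hFy)⟩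
  have coreC : ∀ c d : ℝ, a ≤ c → c < d → d ≤ b → Ioo c d ⊆ U → d ∉ U → F c ≤ F d := by
    intro c d hac hcd hdb hsub hdU
    have hcab : c ∈ Icc a b := ⟨hac, hcd.le.trans hdb⟩
    have hcont : ContinuousWithinAt F (Icc a b) c := hFc c hcab
    have hmono : 𝓝[Ioo c d] c ≤ 𝓝[Icc a b] c :=
      nhdsWithin_mono c (fun z hz => ⟨hac.trans hz.1.le, hz.2.le.trans hdb⟩)
    have htend : Filter.Tendsto F (𝓝[Ioo c d] c) (𝓝 (F c)) := hcont.mono_left hmono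
    have hne : (𝓝[Ioo c d] c).NeBot := by
      rw [← mem_closure_iff_nhdsWithin_neBot, closure_Ioo hcd.ne]
      exact ⟨le_refl c, hcd.le⟩
    exact le_of_tendsto htend (Filter.eventually_of_mem self_mem_nhdsWithin
      (fun z hz => core c d hac hcd hdb hsub hdU z hz))
  refine ⟨hUopen, ?_⟩
  -- the decomposition into components
  obtain ⟨e, he⟩ : ∃ e : ℕ → ℚ, Function.Surjective e :=
    ⟨_, (Denumerable.eqv ℚ).symm.surjective⟩
  set q : ℕ → ℝ := fun n => ((e n : ℚ) : ℝ) with hq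
  set comp : ℝ → Set ℝ := fun x => connectedComponentIn U x with hcompdef
  have hcomp_sub : ∀ x, comp x ⊆ U := fun x => connectedComponentIn_subset U x
  have hcomp_open : ∀ x, IsOpen (comp x) := fun x => hUopen.connectedComponentIn
  have hcomp_eq : ∀ x, x ∈ U → comp x = Ioo (sInf (comp x)) (sSup (comp x)) := by
    intro x hx
    exact open_ordConnected_eq_Ioo (hcomp_open x) ⟨x, mem_connectedComponentIn hx⟩
      (bddBelow_Ioo.mono ((hcomp_sub x).trans hUsub))
      (bddAbove_Ioo.mono ((hcomp_sub x).trans hUsub))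
      (isPreconnected_connectedComponentIn.ordConnected)
  set N : Set ℕ := {n | q n ∈ U ∧ ∀ m, m < n → q m ∈ U → comp (q m) ≠ comp (q n)} with hN
  set c : ℕ → ℝ := fun n => sInf (comp (q n)) with hc
  set d : ℕ → ℝ := fun n => sSup (comp (q n)) with hd
  have hIoo : ∀ n, q n ∈ U → comp (q n) = Ioo (c n) (d n) := fun n hn => hcomp_eq (q n) hn
  have hbounds : ∀ n, q n ∈ U → a ≤ c n ∧ c n < d n ∧ d n ≤ b := by
    intro n hn
    have h1 : q n ∈ Ioo (c n) (d n) := (hIoo n hn) ▸ mem_connectedComponentIn hn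
    refine ⟨?_, h1.1.trans h1.2, ?_⟩
    · exact le_csInf ⟨q n, mem_connectedComponentIn hn⟩
        (fun z hz => (hUsub (hcomp_sub _ hz)).1.le)
    · exact csSup_le ⟨q n, mem_connectedComponentIn hn⟩
        (fun z hz => (hUsub (hcomp_sub _ hz)).2.le)
  have hcnot : ∀ n, q n ∈ U → c n ∉ U ∧ d n ∉ U := by
    intro n hn
    obtain ⟨han, hcdn, hbn⟩ := hbounds n hn
    constructor
    · intro hmem
      obtain ⟨ε, εpos, hball⟩ := Metric.isOpen_iff.1 (hcomp_open (c n)) (c n)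
        (mem_connectedComponentIn hmem)
      set z0 : ℝ := min (d n) (c n + ε) with hz0
      have hz0' : c n < z0 := lt_min hcdn (by linarith)
      set z : ℝ := (c n + z0) / 2 with hz
      have hz1 : c n < z := by rw [hz]; linarith
      have hz2 : z < z0 := by rw [hz]; linarith
      have hzcomp : z ∈ comp (q n) := by
        rw [hIoo n hn]
        exact ⟨hz1, hz2.trans_le (min_le_left _ _)⟩
      have hzball : z ∈ comp (c n) := by
        apply hball
        simp only [Metric.mem_ball, Real.dist_eq]
        rw [abs_of_nonneg (by linarith)]
        have : z0 ≤ c n + ε := min_le_right _ _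
        linarith
      have : comp (c n) = comp (q n) :=
        (connectedComponentIn_eq hzball).trans (connectedComponentIn_eq hzcomp).symm
      have : c n ∈ comp (q n) := this ▸ mem_connectedComponentIn hmem
      rw [hIoo n hn] at this
      exact absurd this.1 (lt_irrefl _)
    · intro hmem
      obtain ⟨ε, εpos, hball⟩ := Metric.isOpen_iff.1 (hcomp_open (d n)) (d n)
        (mem_connectedComponentIn hmem)
      set z0 : ℝ := max (c n) (d n - ε) with hz0
      have hz0' : z0 < d n := max_lt hcdn (by linarith)
      set z : ℝ := (z0 + d n) / 2 with hz
      have hz1 : z0 < z := by rw [hz]; linarith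
      have hz2 : z < d n := by rw [hz]; linarith
      have hzcomp : z ∈ comp (q n) := by
        rw [hIoo n hn]
        exact ⟨(le_max_left _ _).trans_lt hz1, hz2⟩
      have hzball : z ∈ comp (d n) := by
        apply hball
        simp only [Metric.mem_ball, Real.dist_eq]
        rw [abs_of_nonpos (by linarith)]
        have : d n - ε ≤ z0 := le_max_right _ _
        linarith
      have : comp (d n) = comp (q n) :=
        (connectedComponentIn_eq hzball).trans (connectedComponentIn_eq hzcomp).symm
      have : d n ∈ comp (q n) := this ▸ mem_connectedComponentIn hmem
      rw [hIoo n hn] at this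
      exact absurd this.2 (lt_irrefl _)
  refine ⟨c, d, N, fun j hj => hbounds j hj.1, ?_, ?_, ?_, ?_⟩
  · -- disjointness
    intro m hm n hn hmn
    rw [Function.onFun, Set.disjoint_left]
    intro z hzm hzn
    have h1 : comp z = comp (q m) := by
      rw [← hIoo m hm.1] at hzm
      exact (connectedComponentIn_eq hzm).symm
    have h2 : comp z = comp (q n) := by
      rw [← hIoo n hn.1] at hzn
      exact (connectedComponentIn_eq hzn).symm
    rcases hmn.lt_or_gt with h | h
    · exact hn.2 m h hm.1 (h1.symm.trans h2)
    · exact hm.2 n h hn.1 (h2.symm.trans h1)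
  · -- union
    apply Subset.antisymm
    · intro x hx
      obtain ⟨r, hr⟩ := ((Rat.denseRange_cast (𝕜 := ℝ)).exists_mem_open (hcomp_open x)
        ⟨x, mem_connectedComponentIn hx⟩)
      obtain ⟨n, hn⟩ := he r
      have hex : ∃ n, q n ∈ comp x := ⟨n, by
        show ((e n : ℚ) : ℝ) ∈ comp x
        rw [hn]
        exact hr⟩
      set n₀ := Nat.find hex with hn₀def
      have hn₀ : q n₀ ∈ comp x := Nat.find_spec hex
      have hcompeq : comp (q n₀) = comp x := (connectedComponentIn_eq hn₀).symm
      have hn₀U : q n₀ ∈ U := hcomp_sub x hn₀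
      have hn₀N : n₀ ∈ N := by
        refine ⟨hn₀U, fun m hm hmU hcontra => ?_⟩
        have : q m ∈ comp x := by
          rw [← hcompeq, ← hcontra]
          exact mem_connectedComponentIn hmU
        exact Nat.find_min hex hm this
      apply mem_biUnion hn₀N
      rw [← hIoo n₀ hn₀U, hcompeq]
      exact mem_connectedComponentIn hx
    · intro x hx
      simp only [mem_iUnion] at hx
      obtain ⟨j, hj, hxj⟩ := hx
      rw [← hIoo j hj.1] at hxj
      exact hcomp_sub _ hxj
  · -- F equality at endpoints
    intro j hj hne
    obtain ⟨hac, hcd, hdb⟩ := hbounds j hj.1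
    have hsub' : Ioo (c j) (d j) ⊆ U := by rw [← hIoo j hj.1]; exact hcomp_sub _
    have h1 : F (c j) ≤ F (d j) := coreC (c j) (d j) hac hcd hdb hsub' (hcnot j hj.1).2
    have hcIoo : c j ∈ Ioo a b := ⟨hac.lt_of_ne' hne, hcd.trans_le hdb⟩
    have h2 : F (d j) ≤ F (c j) := hnotU (c j) hcIoo (hcnot j hj.1).1 (d j) ⟨hcd, hdb⟩
    linarith
  · -- a.e. f ≤ A off U
    set g0 : ℝ → ℝ := fun t => (Icc a b).indicator g t with hg0def
    have hg0 : Integrable g0 := (integrable_indicator_iff measurableSet_Icc).2 hg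
    have hloc : LocallyIntegrable g0 volume := hg0.locallyIntegrable
    have hae := (IsUnifLocDoublingMeasure.vitaliFamily (volume : Measure ℝ) 1).ae_tendsto_average hloc
    have hab_ae : ∀ᵐ x : ℝ, x ∉ ({a, b} : Set ℝ) :=
      measure_eq_zero_iff_ae_notMem.1 (((finite_singleton b).insert a).measure_zero volume)
    filter_upwards [hae, hab_ae] with x hx hxab hmem
    obtain ⟨hxIcc, hxU⟩ := hmem
    have hxIoo : x ∈ Ioo a b := by
      rcases hxIcc.1.lt_or_eq with h | h
      · rcases hxIcc.2.lt_or_eq with h' | h'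
        · exact ⟨h, h'⟩
        · exact absurd (by simp [h']) hxab
      · exact absurd (by simp [← h]) hxab
    have hFle := hnotU x hxIoo hxU
    have h2 : Filter.Tendsto (fun y => ⨍ t in Icc x y, g0 t) (𝓝[>] x) (𝓝 (g0 x)) :=
      hx.comp (Real.tendsto_Icc_vitaliFamily_right x)
    have h3 : ∀ᶠ y in 𝓝[>] x, (⨍ t in Icc x y, g0 t) ≤ 0 := by
      filter_upwards [Ioc_mem_nhdsGT_of_mem ⟨le_refl x, hxIoo.2⟩] with y hy
      have hyab : y ∈ Icc a b := ⟨hxIoo.1.le.trans hy.1.le, hy.2⟩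
      have hxab' : x ∈ Icc a b := ⟨hxIoo.1.le, hxIoo.2.le⟩
      have heq : EqOn g0 g (Icc x y) := by
        intro t ht
        have htab : t ∈ Icc a b := ⟨hxab'.1.trans ht.1, ht.2.trans hyab.2⟩
        simp only [hg0def]
        exact indicator_of_mem htab g
      have hint : ∫ t in Icc x y, g0 t = F y - F x := by
        rw [setIntegral_congr_fun measurableSet_Icc heq,
          integral_Icc_eq_integral_Ioc, ← intervalIntegral.integral_of_le hy.1.le,
          hFdiff x hxab' y hyab]
      have hle : ∫ t in Icc x y, g0 t ≤ 0 := by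
        rw [hint]
        have := hFle y hy
        linarith
      rw [setAverage_eq, smul_eq_mul]
      exact mul_nonpos_of_nonneg_of_nonpos (by positivity) hle
    have h4 : g0 x ≤ 0 := le_of_tendsto h2 h3
    have h5 : g0 x = f x - A := by
      rw [hg0def]
      simp only [indicator_of_mem hxIcc, hg_def]
    linarith [h5 ▸ h4]
end
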